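/- arXiv:2105.07439 — 14 statements merged into one kernel-verified Lean document; each statement's English description precedes it below -/
import Mathlib

section
/- Let ψ : V → V be a bijective τ-semilinear map over F, for some field automorphism τ of F, such that ψ maps each subspace in the set S = {J(∞)} ∪ {J(k) : k ∈ K} onto a subspace in S. Then there exist a, b, c, d ∈ K with a·d − b·c ≠ 0 and a field automorphism ρ of K such that ψ(x, y) = (a·ρ(x) + c·ρ(y), b·ρ(x) + d·ρ(y)) for all x, y ∈ K. -/
def Jinf (K : Type) [Field K] : Set (K × K) := {p | p.2 = 0}

def J (K : Type) [Field K] (k : K) : Set (K × K) := {p | p.1 = k * p.2}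

def spanS (K : Type) [Field K] (p : K × K) : Set (K × K) :=
  {w | ∃ t : K, w = (t * p.1, t * p.2)}

section Aux

variable {K : Type} [Field K]

lemma eq_spanS {W : Set (K × K)}
    (hW : W ∈ (insert (Jinf K) {W | ∃ k : K, W = J K k} : Set (Set (K × K))))
    {p : K × K} (hp : p ∈ W) (hp0 : p ≠ 0) : W = spanS K p := by
  rcases Set.mem_insert_iff.mp hW with h | ⟨k, h⟩
  · subst h
    have h2 : p.2 = 0 := hp
    have h1 : p.1 ≠ 0 := by
      intro h1
      apply hp0
      rw [Prod.ext_iff]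
      exact ⟨by simp [h1], by simp [h2]⟩
    ext w
    simp only [Jinf, spanS, Set.mem_setOf_eq]
    constructor
    · intro hw
      refine ⟨w.1 * p.1⁻¹, ?_⟩
      rw [Prod.ext_iff]
      constructor
      · field_simp
      · simp [h2, hw]
    · rintro ⟨t, rfl⟩
      simp [h2]
  · subst h
    have h1 : p.1 = k * p.2 := hp
    have h2 : p.2 ≠ 0 := by
      intro h2
      apply hp0
      rw [Prod.ext_iff]
      exact ⟨by simp [h1, h2], by simp [h2]⟩
    ext w
    simp only [J, spanS, Set.mem_setOf_eq]
    constructor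
    · intro hw
      refine ⟨w.2 * p.2⁻¹, ?_⟩
      rw [Prod.ext_iff]
      constructor
      · rw [hw, h1]; field_simp
      · field_simp
    · rintro ⟨t, rfl⟩
      simp only [h1]; ring

lemma spanS_mem {p : K × K} (hp0 : p ≠ 0) :
    spanS K p ∈ (insert (Jinf K) {W | ∃ k : K, W = J K k} : Set (Set (K × K))) := by
  by_cases h2 : p.2 = 0
  · have h := eq_spanS (Set.mem_insert _ _) (h2 : p ∈ Jinf K) hp0
    rw [← h]
    exact Set.mem_insert _ _
  · have hm : p ∈ J K (p.1 * p.2⁻¹) := by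
      show p.1 = p.1 * p.2⁻¹ * p.2
      field_simp
    have hs : J K (p.1 * p.2⁻¹) ∈ (insert (Jinf K) {W | ∃ k : K, W = J K k} : Set (Set (K × K))) :=
      Set.mem_insert_of_mem _ ⟨_, rfl⟩
    rw [← eq_spanS hs hm hp0]
    exact hs

lemma S_span {W : Set (K × K)}
    (hW : W ∈ (insert (Jinf K) {W | ∃ k : K, W = J K k} : Set (Set (K × K)))) :
    ∃ p : K × K, p ≠ 0 ∧ W = spanS K p := by
  rcases Set.mem_insert_iff.mp hW with h | ⟨k, h⟩
  · refine ⟨(1, 0), by simp [Prod.ext_iff], ?_⟩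
    subst h
    exact eq_spanS (Set.mem_insert _ _) (rfl : ((1 : K), (0 : K)).2 = 0) (by simp [Prod.ext_iff])
  · refine ⟨(k, 1), by simp [Prod.ext_iff], ?_⟩
    subst h
    exact eq_spanS (Set.mem_insert_of_mem _ ⟨k, rfl⟩) (by show k = k * 1; ring)
      (by simp [Prod.ext_iff])

end Aux

theorem stmt_0
    (q n : ℕ) (hq : 2 < q) (hqp : IsPrimePow q) (hn : 1 ≤ n)
    (F K : Type) [Field F] [Field K] [Algebra F K] [Fintype F] [Fintype K]
    (hcF : Fintype.card F = q) (hcK : Fintype.card K = q ^ (n + 1))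
    (τ : F ≃+* F) (ψ : K × K → K × K)
    (hbij : Function.Bijective ψ)
    (hadd : ∀ u v : K × K, ψ (u + v) = ψ u + ψ v)
    (hsem : ∀ (f : F) (v : K × K), ψ (f • v) = τ f • ψ v)
    (hS : ∀ W ∈ (insert (Jinf K) {W | ∃ k : K, W = J K k} : Set (Set (K × K))),
      ψ '' W ∈ (insert (Jinf K) {W | ∃ k : K, W = J K k} : Set (Set (K × K)))) :
    ∃ (a b c d : K) (ρ : K ≃+* K), a * d - b * c ≠ 0 ∧
      ∀ x y : K, ψ (x, y) = (a * ρ x + c * ρ y, b * ρ x + d * ρ y) := by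
  classical
  have hinj := hbij.1
  have hψ0 : ψ 0 = 0 := by
    have h := hadd 0 0
    rw [add_zero] at h
    exact (left_eq_add.mp h)
  set u := ψ (1, 0) with hu
  set v := ψ (0, 1) with hv
  have hu0 : u ≠ 0 := by
    intro h
    have h2 : ((1 : K), (0 : K)) = 0 := hinj (by rw [← hu, h, hψ0])
    rw [Prod.ext_iff] at h2
    simp at h2
  have hv0 : v ≠ 0 := by
    intro h
    have h2 : ((0 : K), (1 : K)) = 0 := hinj (by rw [← hv, h, hψ0])
    rw [Prod.ext_iff] at h2
    simp at h2
  have hSinf : Jinf K ∈ (insert (Jinf K) {W | ∃ k : K, W = J K k} : Set (Set (K × K))) :=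
    Set.mem_insert _ _
  have hSJ : ∀ k : K, J K k ∈ (insert (Jinf K) {W | ∃ k : K, W = J K k} : Set (Set (K × K))) :=
    fun k => Set.mem_insert_of_mem _ ⟨k, rfl⟩
  have himJinf : ψ '' Jinf K = spanS K u :=
    eq_spanS (hS _ hSinf) ⟨(1, 0), (rfl : ((1 : K), (0 : K)).2 = 0), hu.symm⟩ hu0
  have himJ0 : ψ '' J K 0 = spanS K v :=
    eq_spanS (hS _ (hSJ 0)) ⟨(0, 1), (by show (0 : K) = 0 * 1; ring), hv.symm⟩ hv0
  -- the determinant is nonzero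
  have hdet : u.1 * v.2 - u.2 * v.1 ≠ 0 := by
    intro hdet
    have hvspan : v ∈ spanS K u := by
      by_cases h1 : u.1 = 0
      · have hb : u.2 ≠ 0 := by
          intro h2
          apply hu0
          rw [Prod.ext_iff]
          exact ⟨by simp [h1], by simp [h2]⟩
        have h3 : u.2 * v.1 = 0 := by linear_combination -hdet + v.2 * h1
        have hc : v.1 = 0 := (mul_eq_zero.mp h3).resolve_left hb
        refine ⟨v.2 * u.2⁻¹, ?_⟩
        rw [Prod.ext_iff]
        constructor
        · simp [h1, hc]
        · field_simp
      · refine ⟨v.1 * u.1⁻¹, ?_⟩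
        rw [Prod.ext_iff]
        constructor
        · field_simp
        · field_simp
          linear_combination hdet
    have hspan_eq : spanS K u = spanS K v := eq_spanS (spanS_mem hu0) hvspan hv0
    have himeq : ψ '' Jinf K = ψ '' J K 0 := by rw [himJinf, himJ0, hspan_eq]
    have hmem : ψ (1, 0) ∈ ψ '' J K 0 := by
      rw [← himeq]
      exact ⟨(1, 0), (rfl : ((1 : K), (0 : K)).2 = 0), rfl⟩
    obtain ⟨w, hw, hweq⟩ := hmem
    have hw1 : w = (1, 0) := hinj hweq
    rw [hw1] at hw
    have : (1 : K) = 0 * 0 := hw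
    simpa using this
  -- the normalizing linear map M and its inverse N
  set M : K × K → K × K := fun p =>
    ((u.1 * v.2 - u.2 * v.1)⁻¹ * (v.2 * p.1 - v.1 * p.2),
      (u.1 * v.2 - u.2 * v.1)⁻¹ * (-u.2 * p.1 + u.1 * p.2)) with hM
  set N : K × K → K × K := fun p =>
    (u.1 * p.1 + v.1 * p.2, u.2 * p.1 + v.2 * p.2) with hN
  have hNM : ∀ p : K × K, N (M p) = p := by
    intro p
    simp only [hM, hN]
    rw [Prod.ext_iff]
    constructor
    · dsimp only
      field_simp
      ring
    · dsimp only
      field_simp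
      ring
  have hN0 : ∀ p : K × K, M p = 0 → p = 0 := by
    intro p h0
    have h := hNM p
    rw [h0] at h
    rw [← h]
    simp [hN, Prod.ext_iff]
  have hMadd : ∀ p q : K × K, M (p + q) = M p + M q := by
    intro p q
    simp only [hM, Prod.ext_iff, Prod.fst_add, Prod.snd_add]
    constructor <;> ring
  have hMkey : ∀ (t : K) (p : K × K), M (t * p.1, t * p.2) = (t * (M p).1, t * (M p).2) := by
    intro t p
    simp only [hM]
    rw [Prod.ext_iff]
    constructor <;> (dsimp only; ring)
  have hMspan : ∀ p : K × K, M '' spanS K p = spanS K (M p) := by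
    intro p
    ext w
    constructor
    · rintro ⟨z, ⟨t, rfl⟩, rfl⟩
      exact ⟨t, (hMkey t p)⟩
    · rintro ⟨t, rfl⟩
      exact ⟨(t * p.1, t * p.2), ⟨t, rfl⟩, hMkey t p⟩
  -- the normalized map φ
  set φ : K × K → K × K := fun p => M (ψ p) with hφ
  have hφinj : Function.Injective φ := by
    intro p w h
    apply hinj
    simp only [hφ] at h
    have h2 := congrArg N h
    rw [hNM, hNM] at h2
    exact h2
  have hφadd : ∀ p w : K × K, φ (p + w) = φ p + φ w := by
    intro p w
    simp only [hφ]
    rw [hadd, hMadd]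
  have hφS : ∀ W ∈ (insert (Jinf K) {W | ∃ k : K, W = J K k} : Set (Set (K × K))),
      φ '' W ∈ (insert (Jinf K) {W | ∃ k : K, W = J K k} : Set (Set (K × K))) := by
    intro W hW
    have h1 : φ '' W = M '' (ψ '' W) := by
      rw [hφ]
      exact (Set.image_image M ψ W).symm
    obtain ⟨p, hp0, hp⟩ := S_span (hS W hW)
    rw [h1, hp, hMspan]
    apply spanS_mem
    intro h0
    exact hp0 (hN0 p h0)
  have hφ0 : φ 0 = 0 := by
    simp only [hφ, hψ0, hM]
    simp [Prod.ext_iff]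
  have hφ10 : φ (1, 0) = ((1 : K), (0 : K)) := by
    simp only [hφ, ← hu, hM]
    rw [Prod.ext_iff]
    constructor
    · dsimp only
      field_simp
    · dsimp only
      field_simp
      ring
  have hφ01 : φ (0, 1) = ((0 : K), (1 : K)) := by
    simp only [hφ, ← hv, hM]
    rw [Prod.ext_iff]
    constructor
    · dsimp only
      field_simp
      ring
    · dsimp only
      field_simp
      ring
  have hφJinf : φ '' Jinf K = Jinf K := by
    have h1 : φ '' Jinf K = spanS K ((1 : K), (0 : K)) :=
      eq_spanS (hφS _ hSinf) ⟨(1, 0), (rfl : ((1 : K), (0 : K)).2 = 0), hφ10⟩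
        (by simp [Prod.ext_iff])
    have h2 : Jinf K = spanS K ((1 : K), (0 : K)) :=
      eq_spanS hSinf (rfl : ((1 : K), (0 : K)).2 = 0) (by simp [Prod.ext_iff])
    rw [h1, ← h2]
  have hφJ0 : φ '' J K 0 = J K 0 := by
    have h1 : φ '' J K 0 = spanS K ((0 : K), (1 : K)) :=
      eq_spanS (hφS _ (hSJ 0)) ⟨(0, 1), (by show (0 : K) = 0 * 1; ring), hφ01⟩
        (by simp [Prod.ext_iff])
    have h2 : J K 0 = spanS K ((0 : K), (1 : K)) :=
      eq_spanS (hSJ 0) (by show (0 : K) = 0 * 1; ring) (by simp [Prod.ext_iff])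
    rw [h1, ← h2]
  -- the coordinate maps
  set σ : K → K := fun x => (φ (x, 0)).1 with hσ
  set μ : K → K := fun y => (φ (0, y)).2 with hμ
  have hσ2 : ∀ x : K, φ (x, 0) = (σ x, 0) := by
    intro x
    have hmem : φ (x, 0) ∈ Jinf K := by
      rw [← hφJinf]
      exact ⟨(x, 0), rfl, rfl⟩
    have h2 : (φ (x, 0)).2 = 0 := hmem
    simp only [hσ]
    rw [Prod.ext_iff]
    exact ⟨rfl, h2⟩
  have hμ2 : ∀ y : K, φ (0, y) = (0, μ y) := by
    intro y
    have hmem : φ (0, y) ∈ J K 0 := by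
      rw [← hφJ0]
      exact ⟨(0, y), (by show (0 : K) = 0 * y; ring), rfl⟩
    have h1 : (φ (0, y)).1 = 0 := by
      have h : (φ (0, y)).1 = 0 * (φ (0, y)).2 := hmem
      rw [zero_mul] at h
      exact h
    simp only [hμ]
    rw [Prod.ext_iff]
    exact ⟨h1, rfl⟩
  have hφxy : ∀ x y : K, φ (x, y) = (σ x, μ y) := by
    intro x y
    have h : ((x, 0) : K × K) + (0, y) = (x, y) := by simp
    rw [← h, hφadd, hσ2, hμ2]
    simp [Prod.ext_iff]
  have hσ1 : σ 1 = 1 := by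
    have := hσ2 1
    rw [hφ10] at this
    have h := congrArg Prod.fst this
    simpa using h.symm
  have hμ1 : μ 1 = 1 := by
    have := hμ2 1
    rw [hφ01] at this
    have h := congrArg Prod.snd this
    simpa using h.symm
  have hσ0 : σ 0 = 0 := by
    have h := hσ2 0
    have h2 : φ ((0 : K), (0 : K)) = 0 := hφ0
    rw [h2] at h
    have := congrArg Prod.fst h
    simpa using this.symm
  have hJk : ∀ k : K, φ '' J K k = J K (σ k) := by
    intro k
    have hmemk : ((k, 1) : K × K) ∈ J K k := by show k = k * 1; ring
    have hφk1 : φ (k, 1) = (σ k, 1) := by rw [hφxy, hμ1]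
    have h1 : φ '' J K k = spanS K (σ k, 1) :=
      eq_spanS (hφS _ (hSJ k)) ⟨(k, 1), hmemk, hφk1⟩ (by simp [Prod.ext_iff])
    have h2 : J K (σ k) = spanS K (σ k, 1) :=
      eq_spanS (hSJ (σ k)) (by show σ k = σ k * 1; ring) (by simp [Prod.ext_iff])
    rw [h1, ← h2]
  have hmul' : ∀ k y : K, σ (k * y) = σ k * μ y := by
    intro k y
    have hm : ((k * y, y) : K × K) ∈ J K k := rfl
    have hmem : φ (k * y, y) ∈ J K (σ k) := by
      rw [← hJk k]
      exact ⟨(k * y, y), hm, rfl⟩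
    rw [hφxy] at hmem
    exact hmem
  have hμσ : ∀ y : K, μ y = σ y := by
    intro y
    have h := hmul' 1 y
    rw [one_mul, hσ1, one_mul] at h
    exact h.symm
  have hmul : ∀ k y : K, σ (k * y) = σ k * σ y := by
    intro k y
    rw [hmul', hμσ]
  have haddσ : ∀ x y : K, σ (x + y) = σ x + σ y := by
    intro x y
    have h : ((x, 0) : K × K) + (y, 0) = (x + y, 0) := by simp
    have h2 := hφadd (x, 0) (y, 0)
    rw [h, hσ2, hσ2, hσ2] at h2
    have := congrArg Prod.fst h2
    simpa using this
  have hσinj : Function.Injective σ := by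
    intro x y h
    have h2 : φ (x, 0) = φ (y, 0) := by rw [hσ2, hσ2, h]
    have h3 := hφinj h2
    rw [Prod.ext_iff] at h3
    exact h3.1
  have hσbij : Function.Bijective σ := Finite.injective_iff_bijective.mp hσinj
  let ρ₀ : K →+* K :=
    { toFun := σ, map_one' := hσ1, map_mul' := hmul, map_zero' := hσ0, map_add' := haddσ }
  let ρ : K ≃+* K := RingEquiv.ofBijective ρ₀ hσbij
  have hρ : ∀ x : K, ρ x = σ x := fun x => rfl
  refine ⟨u.1, u.2, v.1, v.2, ρ, hdet, ?_⟩
  intro x y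
  have h1 : φ (x, y) = (σ x, σ y) := by rw [hφxy, hμσ]
  have h2 := hNM (ψ (x, y))
  have h3 : M (ψ (x, y)) = φ (x, y) := by simp only [hφ]
  rw [h3, h1] at h2
  rw [← h2]
  simp only [hN, hρ]
end

section
/- Assume (n, q) ≠ (1, 3). Let ψ : V → V be a bijective τ-semilinear map over F, for some field automorphism τ of F, such that for every f ∈ F∖{0} there exists f′ ∈ F∖{0} with {ψ(J(k)) : k ∈ K, N(k) = f} = {J(k′) : k′ ∈ K, N(k′) = f′} (that is, ψ permutes the norm surfaces of the linear set L = {J_f : f ∈ F∖{0}}, where J_f = {J(k) : N(k) = f}). Then there exists a field automorphism ρ of K such that either there exist a, d ∈ K∖{0} with ψ(x, y) = (a·ρ(x), d·ρ(y)) for all x, y ∈ K, or there exist b, c ∈ K∖{0} with ψ(x, y) = (c·ρ(y), b·ρ(x)) for all x, y ∈ K. -/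
theorem stmt_1
    (q n : ℕ) (hq : 2 < q) (hqp : IsPrimePow q) (hn : 1 ≤ n)
    (hne : (n, q) ≠ (1, 3))
    (F K : Type) [Field F] [Field K] [Algebra F K] [Fintype F] [Fintype K]
    (hcF : Fintype.card F = q) (hcK : Fintype.card K = q ^ (n + 1))
    (τ : F ≃+* F) (ψ : K × K → K × K)
    (hbij : Function.Bijective ψ)
    (hadd : ∀ u v : K × K, ψ (u + v) = ψ u + ψ v)
    (hsem : ∀ (f : F) (v : K × K), ψ (f • v) = τ f • ψ v)
    (hL : ∀ f : F, f ≠ 0 → ∃ f' : F, f' ≠ 0 ∧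
      (fun W => ψ '' W) '' {W | ∃ k : K, Algebra.norm F k = f ∧ W = J K k}
        = {W | ∃ k' : K, Algebra.norm F k' = f' ∧ W = J K k'}) :
    ∃ ρ : K ≃+* K,
      (∃ a d : K, a ≠ 0 ∧ d ≠ 0 ∧ ∀ x y : K, ψ (x, y) = (a * ρ x, d * ρ y)) ∨
      (∃ b c : K, b ≠ 0 ∧ c ≠ 0 ∧ ∀ x y : K, ψ (x, y) = (c * ρ y, b * ρ x)) := by
  classical
  haveI : Module.Finite F K := Module.Finite.of_finite
  have hinj : Function.Injective ψ := hbij.1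
  have hψ0 : ψ 0 = 0 := by
    have h := hadd 0 0
    simp only [add_zero] at h
    have := left_eq_add.mp h
    exact this
  -- For each nonzero k, ψ maps J(k) onto some J(k') with k' ≠ 0.
  have hσ : ∀ k : K, k ≠ 0 → ∃ k' : K, k' ≠ 0 ∧ ψ '' (J K k) = J K k' := by
    intro k hk
    have hNk : (Algebra.norm F) k ≠ 0 := by
      have h1 : Algebra.norm F k * Algebra.norm F k⁻¹ = 1 := by
        rw [← map_mul, mul_inv_cancel₀ hk, map_one]
      exact left_ne_zero_of_mul_eq_one h1
    obtain ⟨f', hf', hset⟩ := hL _ hNk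
    have hmem : ψ '' (J K k) ∈ {W | ∃ k' : K, Algebra.norm F k' = f' ∧ W = J K k'} := by
      rw [← hset]
      exact ⟨J K k, ⟨k, rfl, rfl⟩, rfl⟩
    obtain ⟨k', hk'n, hk'⟩ := hmem
    refine ⟨k', ?_, hk'⟩
    rintro rfl
    exact hf' (by rw [← hk'n]; exact Algebra.norm_zero)
  -- the union of the nonzero J(k)'s is preserved
  set U : Set (K × K) := {v | ∃ k : K, k ≠ 0 ∧ v.1 = k * v.2} with hU
  have hUsub : ψ '' U ⊆ U := by
    rintro _ ⟨v, ⟨k, hk, hv⟩, rfl⟩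
    obtain ⟨k', hk', hJ⟩ := hσ k hk
    refine ⟨k', hk', ?_⟩
    have : ψ v ∈ J K k' := by
      rw [← hJ]; exact ⟨v, hv, rfl⟩
    exact this
  have hUeq : ψ '' U = U :=
    Set.eq_of_subset_of_ncard_le hUsub
      (le_of_eq (Set.ncard_image_of_injective U hinj).symm) (Set.toFinite U)
  -- ψ preserves the cross {v | v.1 = 0 ∨ v.2 = 0}
  have hcross : ∀ v : K × K, (v.1 = 0 ∨ v.2 = 0) → ((ψ v).1 = 0 ∨ (ψ v).2 = 0) := by
    intro v hv
    by_cases hv0 : v = 0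
    · subst hv0; rw [hψ0]; left; rfl
    have hvU : v ∉ U := by
      rintro ⟨k, hk, hvk⟩
      rcases hv with h1 | h2
      · rw [h1] at hvk
        have h2 : v.2 = 0 := by
          rcases mul_eq_zero.mp hvk.symm with h | h
          · exact absurd h hk
          · exact h
        exact hv0 (Prod.ext h1 h2)
      · rw [h2, mul_zero] at hvk
        exact hv0 (Prod.ext hvk h2)
    have hψvU : ψ v ∉ U := by
      intro hmem
      rw [← hUeq] at hmem
      obtain ⟨u, hu, he⟩ := hmem
      exact hvU (hinj he ▸ hu)
    by_contra hcon
    push_neg at hcon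
    exact hψvU ⟨(ψ v).1 * ((ψ v).2)⁻¹, mul_ne_zero hcon.1 (inv_ne_zero hcon.2), by
      rw [mul_assoc, inv_mul_cancel₀ hcon.2, mul_one]⟩
  -- behavior on the two axes
  have hJinf : (∀ x : K, (ψ (x, 0)).2 = 0) ∨ (∀ x : K, (ψ (x, 0)).1 = 0) := by
    by_contra h
    push_neg at h
    obtain ⟨⟨x, hx⟩, ⟨y, hy⟩⟩ := h
    have h1 : (ψ (x, 0)).1 = 0 := (hcross (x, 0) (Or.inr rfl)).resolve_right hx
    have h2 : (ψ (y, 0)).2 = 0 := (hcross (y, 0) (Or.inr rfl)).resolve_left hy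
    have hsum : ψ (x + y, 0) = ψ (x, 0) + ψ (y, 0) := by
      rw [← hadd]; norm_num
    have := hcross (x + y, 0) (Or.inr rfl)
    rw [hsum] at this
    rcases this with h | h
    · rw [Prod.fst_add, h1, zero_add] at h; exact hy h
    · rw [Prod.snd_add, h2, add_zero] at h; exact hx h
  have hJ0 : (∀ y : K, (ψ (0, y)).1 = 0) ∨ (∀ y : K, (ψ (0, y)).2 = 0) := by
    by_contra h
    push_neg at h
    obtain ⟨⟨x, hx⟩, ⟨y, hy⟩⟩ := h
    have h1 : (ψ (0, x)).2 = 0 := (hcross (0, x) (Or.inl rfl)).resolve_left hx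
    have h2 : (ψ (0, y)).1 = 0 := (hcross (0, y) (Or.inl rfl)).resolve_right hy
    have hsum : ψ (0, x + y) = ψ (0, x) + ψ (0, y) := by
      rw [← hadd]; norm_num
    have := hcross (0, x + y) (Or.inl rfl)
    rw [hsum] at this
    rcases this with h | h
    · rw [Prod.fst_add, h2, add_zero] at h; exact hx h
    · rw [Prod.snd_add, h1, zero_add] at h; exact hy h
  have hdecomp : ∀ x y : K, ψ (x, y) = ψ (x, 0) + ψ (0, y) := by
    intro x y
    rw [← hadd]; norm_num
  rcases hJinf with hA | hB <;> rcases hJ0 with hC | hD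
  · -- diagonal case
    set α : K → K := fun x => (ψ (x, 0)).1 with hαdef
    set δ : K → K := fun y => (ψ (0, y)).2 with hδdef
    have hψxy : ∀ x y : K, ψ (x, y) = (α x, δ y) := by
      intro x y
      rw [hdecomp x y]
      ext
      · simp [hαdef, hδdef, hC y]
      · simp [hαdef, hδdef, hA x]
    have hα0 : α 0 = 0 := by
      have : ((0 : K), (0 : K)) = (0 : K × K) := rfl
      simp [hαdef, this, hψ0]
    have hδ0 : δ 0 = 0 := by
      have : ((0 : K), (0 : K)) = (0 : K × K) := rfl
      simp [hδdef, this, hψ0]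
    have hαinj : Function.Injective α := by
      intro x y h
      have he : ψ (x, 0) = ψ (y, 0) := Prod.ext h (by rw [hA x, hA y])
      exact (Prod.mk.injEq _ _ _ _).mp (hinj he) |>.1
    have hδinj : Function.Injective δ := by
      intro x y h
      have he : ψ (0, x) = ψ (0, y) := Prod.ext (by rw [hC x, hC y]) h
      exact (Prod.mk.injEq _ _ _ _).mp (hinj he) |>.2
    have hαadd : ∀ x y : K, α (x + y) = α x + α y := by
      intro x y
      have h := hadd (x, 0) (y, 0)
      have h2 : ((x, 0) : K × K) + (y, 0) = (x + y, 0) := by norm_num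
      rw [h2] at h
      have := congrArg Prod.fst h
      simpa [hαdef] using this
    set a : K := α 1 with hadef
    set d : K := δ 1 with hddef
    have ha : a ≠ 0 := fun h => one_ne_zero (hαinj (h.trans hα0.symm))
    have hd : d ≠ 0 := fun h => one_ne_zero (hδinj (h.trans hδ0.symm))
    have hkey : ∀ k : K, k ≠ 0 → ∀ x : K, α (k * x) = α k * d⁻¹ * δ x := by
      intro k hk x
      obtain ⟨k', hk', hJk⟩ := hσ k hk
      have hmem : ∀ z : K, α (k * z) = k' * δ z := by
        intro z
        have h1 : ((k * z, z) : K × K) ∈ J K k := rfl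
        have h2 : ψ (k * z, z) ∈ J K k' := by
          rw [← hJk]; exact ⟨(k * z, z), h1, rfl⟩
        have h3 : (ψ (k * z, z)).1 = k' * (ψ (k * z, z)).2 := h2
        rwa [hψxy] at h3
      have h1 := hmem 1
      rw [mul_one] at h1
      have hk'eq : k' = α k * d⁻¹ := by
        rw [h1, mul_assoc, mul_inv_cancel₀ hd, mul_one]
      rw [hmem x, hk'eq]
    have hδα : ∀ x : K, δ x = d * a⁻¹ * α x := by
      intro x
      have h := hkey 1 one_ne_zero x
      rw [one_mul] at h
      rw [← hadef] at h
      rw [h]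
      field_simp
    have hmul : ∀ k x : K, α (k * x) = a⁻¹ * α k * α x := by
      intro k x
      by_cases hk : k = 0
      · rw [hk, zero_mul, hα0, mul_zero, zero_mul]
      · rw [hkey k hk x, hδα x]
        field_simp
    have hρbij : Function.Bijective (fun x => a⁻¹ * α x) := by
      apply Finite.injective_iff_bijective.mp
      intro x y h
      exact hαinj (mul_left_cancel₀ (inv_ne_zero ha) h)
    refine ⟨{ Equiv.ofBijective _ hρbij with
      map_mul' := by
        intro x y
        show a⁻¹ * α (x * y) = (a⁻¹ * α x) * (a⁻¹ * α y)
        rw [hmul]; ring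
      map_add' := by
        intro x y
        show a⁻¹ * α (x + y) = a⁻¹ * α x + a⁻¹ * α y
        rw [hαadd]; ring }, Or.inl ⟨a, d, ha, hd, ?_⟩⟩
    intro x y
    rw [hψxy]
    have h1 : a * (a⁻¹ * α x) = α x := by field_simp
    have h2 : d * (a⁻¹ * α y) = δ y := by rw [hδα y]; ring
    exact Prod.ext h1.symm h2.symm
  ·
    exfalso
    obtain ⟨v, hv⟩ := hbij.2 (0, 1)
    have : (ψ v).2 = 0 := by
      have h : v = (v.1, v.2) := rfl
      rw [h, hdecomp, Prod.snd_add, hA v.1, hD v.2, add_zero]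
    rw [hv] at this
    exact one_ne_zero this
  · -- impossible: first coord always 0
    exfalso
    obtain ⟨v, hv⟩ := hbij.2 (1, 0)
    have : (ψ v).1 = 0 := by
      have h : v = (v.1, v.2) := rfl
      rw [h, hdecomp, Prod.fst_add, hB v.1, hC v.2, add_zero]
    rw [hv] at this
    exact one_ne_zero this
  · -- swap case
    set β : K → K := fun x => (ψ (x, 0)).2 with hβdef
    set γ : K → K := fun y => (ψ (0, y)).1 with hγdef
    have hψxy : ∀ x y : K, ψ (x, y) = (γ y, β x) := by
      intro x y
      rw [hdecomp x y]
      ext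
      · simp [hβdef, hγdef, hB x]
      · simp [hβdef, hγdef, hD y]
    have hβ0 : β 0 = 0 := by
      have : ((0 : K), (0 : K)) = (0 : K × K) := rfl
      simp [hβdef, this, hψ0]
    have hγ0 : γ 0 = 0 := by
      have : ((0 : K), (0 : K)) = (0 : K × K) := rfl
      simp [hγdef, this, hψ0]
    have hβinj : Function.Injective β := by
      intro x y h
      have he : ψ (x, 0) = ψ (y, 0) := Prod.ext (by rw [hB x, hB y]) h
      exact (Prod.mk.injEq _ _ _ _).mp (hinj he) |>.1
    have hγinj : Function.Injective γ := by
      intro x y h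
      have he : ψ (0, x) = ψ (0, y) := Prod.ext h (by rw [hD x, hD y])
      exact (Prod.mk.injEq _ _ _ _).mp (hinj he) |>.2
    have hβadd : ∀ x y : K, β (x + y) = β x + β y := by
      intro x y
      have h := hadd (x, 0) (y, 0)
      have h2 : ((x, 0) : K × K) + (y, 0) = (x + y, 0) := by norm_num
      rw [h2] at h
      have := congrArg Prod.snd h
      simpa [hβdef] using this
    set b : K := β 1 with hbdef
    set c : K := γ 1 with hcdef
    have hb : b ≠ 0 := fun h => one_ne_zero (hβinj (h.trans hβ0.symm))
    have hc : c ≠ 0 := fun h => one_ne_zero (hγinj (h.trans hγ0.symm))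
    have hkey : ∀ k : K, k ≠ 0 → ∀ x : K, γ x = c * (β k)⁻¹ * β (k * x) := by
      intro k hk x
      obtain ⟨k', hk', hJk⟩ := hσ k hk
      have hmem : ∀ z : K, γ z = k' * β (k * z) := by
        intro z
        have h1 : ((k * z, z) : K × K) ∈ J K k := rfl
        have h2 : ψ (k * z, z) ∈ J K k' := by
          rw [← hJk]; exact ⟨(k * z, z), h1, rfl⟩
        have h3 : (ψ (k * z, z)).1 = k' * (ψ (k * z, z)).2 := h2
        rwa [hψxy] at h3
      have hβk : β k ≠ 0 := fun h => hk (hβinj (h.trans hβ0.symm))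
      have h1 := hmem 1
      rw [mul_one] at h1
      have hk'eq : k' = c * (β k)⁻¹ := by
        rw [← hcdef] at h1
        rw [h1, mul_assoc, mul_inv_cancel₀ hβk, mul_one]
      rw [hmem x, hk'eq]
    have hγβ : ∀ x : K, γ x = c * b⁻¹ * β x := by
      intro x
      have h := hkey 1 one_ne_zero x
      rw [one_mul, ← hbdef] at h
      exact h
    have hmul : ∀ k x : K, β (k * x) = b⁻¹ * β k * β x := by
      intro k x
      by_cases hk : k = 0
      · rw [hk, zero_mul, hβ0, mul_zero, zero_mul]
      · have hβk : β k ≠ 0 := fun h => hk (hβinj (h.trans hβ0.symm))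
        have h1 := hkey k hk x
        rw [hγβ x] at h1
        field_simp at h1
        have h3 : β x * β k = β (k * x) * b := by
          apply mul_left_cancel₀ hc
          linear_combination c * h1
        field_simp
        linear_combination -h3
    have hρbij : Function.Bijective (fun x => b⁻¹ * β x) := by
      apply Finite.injective_iff_bijective.mp
      intro x y h
      exact hβinj (mul_left_cancel₀ (inv_ne_zero hb) h)
    refine ⟨{ Equiv.ofBijective _ hρbij with
      map_mul' := by
        intro x y
        show b⁻¹ * β (x * y) = (b⁻¹ * β x) * (b⁻¹ * β y)
        rw [hmul]; ring
      map_add' := by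
        intro x y
        show b⁻¹ * β (x + y) = b⁻¹ * β x + b⁻¹ * β y
        rw [hβadd]; ring }, Or.inr ⟨b, c, hb, hc, ?_⟩⟩
    intro x y
    rw [hψxy]
    have h1 : c * (b⁻¹ * β y) = γ y := by rw [hγβ y]; ring
    have h2 : b * (b⁻¹ * β x) = β x := by field_simp
    exact Prod.ext h1.symm h2.symm
end

section
/- Assume (n, q) ≠ (1, 3). Let ψ : V → V be a bijective τ-semilinear map over F, for some field automorphism τ of F, such that for every σ ∈ Gal(K/F) and every f ∈ F∖{0} there exist σ′ ∈ Gal(K/F) and f′ ∈ F∖{0} with {ψ(J^σ(k)) : k ∈ K, N(k) = f} = {J^{σ′}(k′) : k′ ∈ K, N(k′) = f′} (that is, ψ permutes the collection of norm surfaces 𝒥 = {𝒥^σ_f : σ ∈ Gal(K/F), f ∈ F∖{0}}, where 𝒥^σ_f = {J^σ(k) : N(k) = f}). Then there exist a field automorphism μ of K and σ ∈ Gal(K/F) such that either there exist a, d ∈ K∖{0} with ψ(x, y) = (a·μ(x), σ(d·μ(y))) for all x, y ∈ K, or there exist b, c ∈ K∖{0} with ψ(x, y) = (c·μ(y), σ(b·μ(x)))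 for all x, y ∈ K. -/
/-- J^σ(k) = {(k·σ(x), x) : x ∈ K} -/
def JJ {K : Type} [Field K] (σ : K → K) (k : K) : Set (K × K) := {p | p.1 = k * σ p.2}

section Aux

variable {F K : Type} [Field F] [Field K] [Algebra F K]

/-- If a `c₃·σ₃` equals `c₁·σ₁ + c₂·σ₂` pointwise with `c₁, c₂ ≠ 0`, then `σ₁ = σ₂`. -/
lemma same_aut (σ₁ σ₂ σ₃ : K ≃ₐ[F] K) (c₁ c₂ c₃ : K) (hc₁ : c₁ ≠ 0) (hc₂ : c₂ ≠ 0)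
    (E : ∀ w, c₃ * σ₃ w = c₁ * σ₁ w + c₂ * σ₂ w) : σ₁ = σ₂ := by
  by_contra hne
  have hw : ∃ w, σ₁ w ≠ σ₂ w := by
    by_contra hcon; push_neg at hcon; exact hne (AlgEquiv.ext hcon)
  obtain ⟨w₀, hw₀⟩ := hw
  have key : ∀ z, c₁ * σ₁ z * (σ₁ w₀ - σ₃ w₀) + c₂ * σ₂ z * (σ₂ w₀ - σ₃ w₀) = 0 := by
    intro z
    have h1 := E (z * w₀)
    have h2 := E z
    rw [map_mul, map_mul, map_mul] at h1
    linear_combination σ₃ w₀ * h2 - h1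
  have key1 : c₁ * (σ₁ w₀ - σ₃ w₀) + c₂ * (σ₂ w₀ - σ₃ w₀) = 0 := by
    have := key 1
    simpa using this
  by_cases hA : σ₁ w₀ = σ₃ w₀
  · have h2 : c₂ * (σ₂ w₀ - σ₃ w₀) = 0 := by
      rw [hA, sub_self, mul_zero, zero_add] at key1; exact key1
    have : σ₂ w₀ = σ₃ w₀ := by
      rcases mul_eq_zero.mp h2 with h | h
      · exact absurd h hc₂
      · exact sub_eq_zero.mp h
    exact hw₀ (hA.trans this.symm)
  · have hAne : c₁ * (σ₁ w₀ - σ₃ w₀) ≠ 0 := mul_ne_zero hc₁ (sub_ne_zero.mpr hA)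
    have hzz : c₁ * (σ₁ w₀ - σ₃ w₀) * (σ₁ w₀ - σ₂ w₀) = 0 := by
      linear_combination (key w₀) - σ₂ w₀ * key1
    rcases mul_eq_zero.mp hzz with h | h
    · exact hAne h
    · exact hw₀ (sub_eq_zero.mp h)

/-- Core functional-equation lemma. -/
lemma core_lemma [Fintype K] (hK : 3 < Fintype.card K)
    (g h : K → K)
    (hga : ∀ x y, g (x + y) = g x + g y) (hgi : Function.Injective g)
    (hha : ∀ x y, h (x + y) = h x + h y) (hhi : Function.Injective h)
    (hl : ∀ m : K, m ≠ 0 → ∃ (σ : K ≃ₐ[F] K) (c : K), ∀ z, g (m * z) = c * σ (h z)) :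
    ∃ (μ : K ≃+* K) (σ : K ≃ₐ[F] K) (a d : K), a ≠ 0 ∧ d ≠ 0 ∧
      (∀ x, g x = a * μ x) ∧ (∀ y, h y = σ (d * μ y)) := by
  classical
  have hg0 : g 0 = 0 := by
    have hx := hga 0 0; rw [add_zero] at hx; exact (left_eq_add.mp hx)
  have hh0 : h 0 = 0 := by
    have hx := hha 0 0; rw [add_zero] at hx; exact (left_eq_add.mp hx)
  have hhs : Function.Surjective h := by
    have : Function.Bijective h := Finite.injective_iff_bijective.mp hhi
    exact this.2
  -- choose the data
  have hl' : ∀ m : K, ∃ p : (K ≃ₐ[F] K) × K, m ≠ 0 → ∀ z, g (m * z) = p.2 * p.1 (h z) := by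
    intro m
    by_cases hm : m = 0
    · exact ⟨⟨AlgEquiv.refl, 0⟩, fun hc => absurd hm hc⟩
    · obtain ⟨σ, c, hc⟩ := hl m hm
      exact ⟨⟨σ, c⟩, fun _ => hc⟩
  choose P hP using hl'
  set σf : K → (K ≃ₐ[F] K) := fun m => (P m).1 with hσf
  set cf : K → K := fun m => (P m).2 with hcf
  have hEq : ∀ m : K, m ≠ 0 → ∀ z, g (m * z) = cf m * σf m (h z) := fun m hm => hP m hm
  have hc0 : ∀ m : K, m ≠ 0 → cf m ≠ 0 := by
    intro m hm hc
    have := hEq m hm 1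
    rw [hc, zero_mul, mul_one] at this
    exact hm (hgi (this.trans hg0.symm))
  -- constancy of σf on pairs with nonzero sum
  have hconst : ∀ m₁ m₂ : K, m₁ ≠ 0 → m₂ ≠ 0 → m₁ + m₂ ≠ 0 → σf m₁ = σf m₂ := by
    intro m₁ m₂ hm₁ hm₂ hm₁₂
    apply same_aut (σf m₁) (σf m₂) (σf (m₁ + m₂)) (cf m₁) (cf m₂) (cf (m₁ + m₂))
      (hc0 m₁ hm₁) (hc0 m₂ hm₂)
    intro w
    obtain ⟨z, hz⟩ := hhs w
    have e1 := hEq m₁ hm₁ z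
    have e2 := hEq m₂ hm₂ z
    have e3 := hEq (m₁ + m₂) hm₁₂ z
    rw [add_mul] at e3
    rw [hga (m₁ * z) (m₂ * z), e1, e2] at e3
    rw [← hz]
    exact e3.symm
  -- a spare element
  have ht : ∀ m : K, ∃ t : K, t ≠ 0 ∧ t ≠ 1 ∧ t ≠ m := by
    intro m
    by_contra hcon
    push_neg at hcon
    have hsub : (Finset.univ : Finset K) ⊆ {0, 1, m} := by
      intro t _
      by_cases h0 : t = 0
      · simp [h0]
      · by_cases h1 : t = 1
        · simp [h1]
        · simp [hcon t h0 h1]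
    have hcard : Fintype.card K ≤ 3 := by
      calc Fintype.card K = (Finset.univ : Finset K).card := rfl
        _ ≤ ({0, 1, m} : Finset K).card := Finset.card_le_card hsub
        _ ≤ 3 := by
            apply le_trans (Finset.card_insert_le _ _)
            have := Finset.card_insert_le (1 : K) ({m} : Finset K)
            simp only [Finset.card_singleton] at this
            omega
    omega
  have hconst1 : ∀ m : K, m ≠ 0 → σf m = σf 1 := by
    intro m hm
    by_cases hm1 : m + 1 = 0
    · obtain ⟨t, ht0, ht1, htm⟩ := ht m
      have h1 : σf m = σf t := hconst m t hm ht0 (by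
        intro hc
        exact ht1 (by linear_combination hc - hm1))
      have h2 : σf t = σf 1 := hconst t 1 ht0 one_ne_zero (by
        intro hc
        exact htm (by linear_combination hc - hm1))
      exact h1.trans h2
    · exact hconst m 1 hm one_ne_zero hm1
  set α : K ≃ₐ[F] K := σf 1 with hα
  set u : K := h 1 with hu
  have hu0 : u ≠ 0 := by
    intro hc
    exact one_ne_zero (hhi (hc.trans hh0.symm))
  have hαu : α u ≠ 0 := by
    intro hc
    apply hu0
    apply α.injective
    rw [hc, map_zero]
  set a : K := g 1 with ha
  have ha0 : a ≠ 0 := by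
    intro hc
    exact one_ne_zero (hgi (hc.trans hg0.symm))
  -- the key multiplicative relation
  set ν : K → K := fun z => (α u)⁻¹ * α (h z) with hν
  have hkey : ∀ m z : K, g (m * z) = g m * ν z := by
    intro m z
    by_cases hm : m = 0
    · rw [hm, zero_mul, hg0, zero_mul]
    · have e1 := hEq m hm z
      rw [hconst1 m hm] at e1
      have e2 := hEq m hm 1
      rw [hconst1 m hm] at e2
      rw [mul_one] at e2
      have hcfm : cf m = g m * (α u)⁻¹ := by
        rw [e2]
        field_simp [hν]
        rw [hu]
      rw [e1, hcfm, hν]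
      ring
  have hν_eq : ∀ z, ν z = a⁻¹ * g z := by
    intro z
    have := hkey 1 z
    rw [one_mul] at this
    rw [this, ← ha]
    field_simp
  set μ : K → K := fun z => a⁻¹ * g z with hμ
  have hμ1 : μ 1 = 1 := by
    simp only [hμ]
    field_simp
    exact ha.symm
  have hμ0 : μ 0 = 0 := by simp [hμ, hg0]
  have hμadd : ∀ x y, μ (x + y) = μ x + μ y := by
    intro x y
    simp only [hμ, hga x y]
    ring
  have hμmul : ∀ x y, μ (x * y) = μ x * μ y := by
    intro x y
    have := hkey x y
    rw [hν_eq y] at this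
    simp only [hμ, this]
    ring
  have hμinj : Function.Injective μ := by
    intro x y hxy
    simp only [hμ] at hxy
    have : g x = g y := by
      field_simp at hxy
      exact hxy
    exact hgi this
  have hμbij : Function.Bijective μ := Finite.injective_iff_bijective.mp hμinj
  let μR : K →+* K :=
    { toFun := μ
      map_one' := hμ1
      map_mul' := hμmul
      map_zero' := hμ0
      map_add' := hμadd }
  let μE : K ≃+* K := RingEquiv.ofBijective μR hμbij
  refine ⟨μE, α.symm, a, α u, ha0, hαu, ?_, ?_⟩
  · intro x
    show g x = a * μ x
    simp only [hμ]
    field_simp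
  · intro y
    show h y = α.symm (α u * μ y)
    have h1 : α (h y) = α u * μ y := by
      have := hν_eq y
      simp only [hν, hμ] at this ⊢
      field_simp at this ⊢
      linear_combination this
    rw [← h1, AlgEquiv.symm_apply_apply]

/-- Dichotomy for additive maps into a product whose values always have a zero coordinate. -/
lemma dicho {K : Type} [Field K] (φ : K → K × K)
    (ha : ∀ x y, φ (x + y) = φ x + φ y)
    (hax : ∀ x, (φ x).1 = 0 ∨ (φ x).2 = 0) :
    (∀ x, (φ x).2 = 0) ∨ (∀ x, (φ x).1 = 0) := by
  by_cases hP : ∀ x, (φ x).2 = 0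
  · exact Or.inl hP
  · push_neg at hP
    obtain ⟨x₀, hx₀⟩ := hP
    have hx₀1 : (φ x₀).1 = 0 := (hax x₀).resolve_right hx₀
    right
    intro x
    by_contra hx1
    have hx2 : (φ x).2 = 0 := (hax x).resolve_left hx1
    have hsum := ha x x₀
    have h1 : (φ (x + x₀)).1 = (φ x).1 := by rw [hsum, Prod.fst_add, hx₀1, add_zero]
    have h2 : (φ (x + x₀)).2 = (φ x₀).2 := by rw [hsum, Prod.snd_add, hx2, zero_add]
    rcases hax (x + x₀) with hcase | hcase
    · exact hx1 (h1 ▸ hcase)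
    · exact hx₀ (h2 ▸ hcase)

end Aux

theorem stmt_2
    (q n : ℕ) (hq : 2 < q) (hqp : IsPrimePow q) (hn : 1 ≤ n)
    (hne : (n, q) ≠ (1, 3))
    (F K : Type) [Field F] [Field K] [Algebra F K] [Fintype F] [Fintype K]
    (hcF : Fintype.card F = q) (hcK : Fintype.card K = q ^ (n + 1))
    (τ : F ≃+* F) (ψ : K × K → K × K)
    (hbij : Function.Bijective ψ)
    (hadd : ∀ u v : K × K, ψ (u + v) = ψ u + ψ v)
    (hsem : ∀ (f : F) (v : K × K), ψ (f • v) = τ f • ψ v)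
    (hJ : ∀ (σ : K ≃ₐ[F] K) (f : F), f ≠ 0 →
      ∃ (σ' : K ≃ₐ[F] K) (f' : F), f' ≠ 0 ∧
        (fun W => ψ '' W) '' {W | ∃ k : K, Algebra.norm F k = f ∧ W = JJ (⇑σ) k}
          = {W | ∃ k' : K, Algebra.norm F k' = f' ∧ W = JJ (⇑σ') k'}) :
    ∃ (μ : K ≃+* K) (σ : K ≃ₐ[F] K),
      (∃ a d : K, a ≠ 0 ∧ d ≠ 0 ∧ ∀ x y : K, ψ (x, y) = (a * μ x, σ (d * μ y))) ∨
      (∃ b c : K, b ≠ 0 ∧ c ≠ 0 ∧ ∀ x y : K, ψ (x, y) = (c * μ y, σ (b * μ x))) := by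
  classical
  have hK3 : 3 < Fintype.card K := by
    rw [hcK]
    calc 3 < 3 ^ 2 := by norm_num
      _ ≤ q ^ 2 := Nat.pow_le_pow_left (by omega) 2
      _ ≤ q ^ (n + 1) := Nat.pow_le_pow_right (by omega) (by omega)
  -- norm facts
  have hnorm0 : Algebra.norm F (0 : K) = 0 := Algebra.norm_zero
  have hnormne : ∀ k : K, k ≠ 0 → Algebra.norm F k ≠ 0 := by
    intro k hk h0
    have h1 : Algebra.norm F k * Algebra.norm F k⁻¹ = 1 := by
      rw [← map_mul, mul_inv_cancel₀ hk, map_one]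
    rw [h0, zero_mul] at h1
    exact zero_ne_one h1
  -- each line maps to a line
  have lineA : ∀ (σ : K ≃ₐ[F] K) (k : K), k ≠ 0 →
      ∃ (σ' : K ≃ₐ[F] K) (k' : K), k' ≠ 0 ∧ ψ '' JJ (⇑σ) k = JJ (⇑σ') k' := by
    intro σ k hk
    obtain ⟨σ', f', hf', hset⟩ := hJ σ (Algebra.norm F k) (hnormne k hk)
    have hmem : ψ '' JJ (⇑σ) k ∈
        {W | ∃ k' : K, Algebra.norm F k' = f' ∧ W = JJ (⇑σ') k'} := by
      rw [← hset]
      exact Set.mem_image_of_mem _ ⟨k, rfl, rfl⟩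
    obtain ⟨k', hk'f, hk'eq⟩ := hmem
    refine ⟨σ', k', ?_, hk'eq⟩
    rintro rfl
    rw [hnorm0] at hk'f
    exact hf' hk'f.symm
  have hψ0 : ψ 0 = 0 := by
    have h := hadd 0 0
    rw [add_zero] at h
    exact (left_eq_add.mp h)
  -- invariance of U
  set U : Set (K × K) := {p | p.1 ≠ 0 ∧ p.2 ≠ 0} ∪ {0} with hUdef
  have himg : ψ '' U ⊆ U := by
    rintro _ ⟨p, hp, rfl⟩
    rcases hp with hp | hp
    · obtain ⟨h1, h2⟩ := hp
      obtain ⟨σ', k', hk', heq⟩ := lineA (AlgEquiv.refl) (p.1 * p.2⁻¹) (by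
        exact mul_ne_zero h1 (inv_ne_zero h2))
      have hpJ : p ∈ JJ (⇑(AlgEquiv.refl : K ≃ₐ[F] K)) (p.1 * p.2⁻¹) := by
        show p.1 = p.1 * p.2⁻¹ * (AlgEquiv.refl : K ≃ₐ[F] K) p.2
        rw [AlgEquiv.coe_refl, id_eq]
        field_simp
      have hmem : ψ p ∈ JJ (⇑σ') k' := by
        rw [← heq]
        exact Set.mem_image_of_mem ψ hpJ
      have hmem' : (ψ p).1 = k' * σ' (ψ p).2 := hmem
      have hp2 : (ψ p).2 ≠ 0 := by
        intro hz
        have hψp1 : (ψ p).1 = 0 := by rw [hmem', hz, map_zero, mul_zero]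
        have : ψ p = ψ 0 := by
          rw [hψ0]
          exact Prod.ext hψp1 hz
        have hp0 : p = 0 := hbij.1 this
        rw [hp0] at h1
        exact h1 rfl
      have hp1 : (ψ p).1 ≠ 0 := by
        rw [hmem']
        apply mul_ne_zero hk'
        intro hc
        exact hp2 (σ'.injective (by rw [hc, map_zero]))
      exact Or.inl ⟨hp1, hp2⟩
    · simp only [Set.mem_singleton_iff] at hp
      rw [hp, hψ0]
      exact Or.inr rfl
  have hUinv : ψ '' U = U := by
    apply Set.eq_of_subset_of_ncard_le himg
    rw [Set.ncard_image_of_injective U hbij.1]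
  have haxis : ∀ p : K × K, p ∉ U → ψ p ∉ U := by
    intro p hp hc
    rw [← hUinv] at hc
    obtain ⟨r, hr, hre⟩ := hc
    rw [hbij.1 hre] at hr
    exact hp hr
  have hax1 : ∀ x : K, (ψ (x, 0)).1 = 0 ∨ (ψ (x, 0)).2 = 0 := by
    intro x
    by_cases hx : x = 0
    · left
      rw [hx]
      rw [show ((0 : K), (0 : K)) = (0 : K × K) from rfl, hψ0]
      rfl
    · have hnotU : ((x, (0 : K)) : K × K) ∉ U := by
        intro hc
        rcases hc with hc | hc
        · exact hc.2 rfl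
        · simp only [Set.mem_singleton_iff, Prod.ext_iff] at hc
          exact hx hc.1
      have := haxis _ hnotU
      by_contra hcon
      push_neg at hcon
      exact this (Or.inl hcon)
  have hax2 : ∀ y : K, (ψ (0, y)).1 = 0 ∨ (ψ (0, y)).2 = 0 := by
    intro y
    by_cases hy : y = 0
    · left
      rw [hy]
      rw [show ((0 : K), (0 : K)) = (0 : K × K) from rfl, hψ0]
      rfl
    · have hnotU : (((0 : K), y) : K × K) ∉ U := by
        intro hc
        rcases hc with hc | hc
        · exact hc.1 rfl
        · simp only [Set.mem_singleton_iff, Prod.ext_iff] at hc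
          exact hy hc.2
      have := haxis _ hnotU
      by_contra hcon
      push_neg at hcon
      exact this (Or.inl hcon)
  have hφ1add : ∀ x y : K, ψ (x + y, 0) = ψ (x, 0) + ψ (y, 0) := by
    intro x y
    have : ((x + y, (0 : K)) : K × K) = (x, 0) + (y, 0) := by
      rw [Prod.mk_add_mk, add_zero]
    rw [this, hadd]
  have hφ2add : ∀ x y : K, ψ (0, x + y) = ψ (0, x) + ψ (0, y) := by
    intro x y
    have : (((0 : K), x + y) : K × K) = (0, x) + (0, y) := by
      rw [Prod.mk_add_mk, add_zero]
    rw [this, hadd]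
  have hsplit : ∀ x y : K, ψ (x, y) = ψ (x, 0) + ψ (0, y) := by
    intro x y
    have : ((x, y) : K × K) = (x, 0) + (0, y) := by
      rw [Prod.mk_add_mk, add_zero, zero_add]
    rw [this, hadd]
  rcases dicho (fun x => ψ (x, 0)) hφ1add hax1 with hA | hB
  · -- Case A : ψ (x,0) = (g x, 0)
    have hB2 : ∀ y : K, (ψ (0, y)).1 = 0 := by
      rcases dicho (fun y => ψ (0, y)) hφ2add hax2 with hcase | hcase
      · exfalso
        obtain ⟨p, hp⟩ := hbij.2 (0, 1)
        have h2 : (ψ p).2 = 0 := by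
          have hdec : ψ p = ψ (p.1, 0) + ψ (0, p.2) := by
            rw [← hsplit]
          rw [hdec, Prod.snd_add, hA p.1, hcase p.2, add_zero]
        rw [hp] at h2
        exact one_ne_zero h2
      · exact hcase
    set g : K → K := fun x => (ψ (x, 0)).1 with hgdef
    set h : K → K := fun y => (ψ (0, y)).2 with hhdef
    have hpsi : ∀ x y : K, ψ (x, y) = (g x, h y) := by
      intro x y
      rw [hsplit x y]
      apply Prod.ext
      · rw [Prod.fst_add, hB2 y, add_zero]
      · rw [Prod.snd_add, hA x, zero_add]
    have hga : ∀ x y, g (x + y) = g x + g y := by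
      intro x y
      simp only [hgdef]
      rw [hφ1add, Prod.fst_add]
    have hha : ∀ x y, h (x + y) = h x + h y := by
      intro x y
      simp only [hhdef]
      rw [hφ2add, Prod.snd_add]
    have hgi : Function.Injective g := by
      intro x y hxy
      have : ψ (x, 0) = ψ (y, 0) := by
        apply Prod.ext
        · exact hxy
        · rw [hA x, hA y]
      have := hbij.1 this
      exact (Prod.ext_iff.mp this).1
    have hhi : Function.Injective h := by
      intro x y hxy
      have : ψ (0, x) = ψ (0, y) := by
        apply Prod.ext
        · rw [hB2 x, hB2 y]
        · exact hxy
      have := hbij.1 this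
      exact (Prod.ext_iff.mp this).2
    have hl : ∀ m : K, m ≠ 0 → ∃ (σ : K ≃ₐ[F] K) (c : K), ∀ z, g (m * z) = c * σ (h z) := by
      intro m hm
      obtain ⟨σ', k', hk', heq⟩ := lineA (AlgEquiv.refl) m hm
      refine ⟨σ', k', fun z => ?_⟩
      have hmemJ : ((m * z, z) : K × K) ∈ JJ (⇑(AlgEquiv.refl : K ≃ₐ[F] K)) m := by
        show m * z = m * (AlgEquiv.refl : K ≃ₐ[F] K) z
        rw [AlgEquiv.coe_refl, id_eq]
      have hmem : ψ (m * z, z) ∈ JJ (⇑σ') k' := by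
        rw [← heq]
        exact Set.mem_image_of_mem ψ hmemJ
      have hmem' : (ψ (m * z, z)).1 = k' * σ' (ψ (m * z, z)).2 := hmem
      rw [hpsi (m * z) z] at hmem'
      exact hmem'
    obtain ⟨μ, σ, a, d, ha0, hd0, hgf, hhf⟩ :=
      core_lemma (F := F) hK3 g h hga hgi hha hhi hl
    exact ⟨μ, σ, Or.inl ⟨a, d, ha0, hd0, fun x y => by
      rw [hpsi x y, hgf x, hhf y]⟩⟩
  · -- Case B : ψ (x,0) = (0, h x)
    have hB2 : ∀ y : K, (ψ (0, y)).2 = 0 := by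
      rcases dicho (fun y => ψ (0, y)) hφ2add hax2 with hcase | hcase
      · exact hcase
      · exfalso
        obtain ⟨p, hp⟩ := hbij.2 (1, 0)
        have h2 : (ψ p).1 = 0 := by
          have hdec : ψ p = ψ (p.1, 0) + ψ (0, p.2) := by
            rw [← hsplit]
          rw [hdec, Prod.fst_add, hB p.1, hcase p.2, add_zero]
        rw [hp] at h2
        exact one_ne_zero h2
    set g : K → K := fun y => (ψ (0, y)).1 with hgdef
    set h : K → K := fun x => (ψ (x, 0)).2 with hhdef
    have hpsi : ∀ x y : K, ψ (x, y) = (g y, h x) := by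
      intro x y
      rw [hsplit x y]
      apply Prod.ext
      · rw [Prod.fst_add, hB x, zero_add]
      · rw [Prod.snd_add, hB2 y, add_zero]
    have hga : ∀ x y, g (x + y) = g x + g y := by
      intro x y
      simp only [hgdef]
      rw [hφ2add, Prod.fst_add]
    have hha : ∀ x y, h (x + y) = h x + h y := by
      intro x y
      simp only [hhdef]
      rw [hφ1add, Prod.snd_add]
    have hgi : Function.Injective g := by
      intro x y hxy
      have : ψ (0, x) = ψ (0, y) := by
        apply Prod.ext
        · exact hxy
        · rw [hB2 x, hB2 y]
      have := hbij.1 this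
      exact (Prod.ext_iff.mp this).2
    have hhi : Function.Injective h := by
      intro x y hxy
      have : ψ (x, 0) = ψ (y, 0) := by
        apply Prod.ext
        · rw [hB x, hB y]
        · exact hxy
      have := hbij.1 this
      exact (Prod.ext_iff.mp this).1
    have hl : ∀ m : K, m ≠ 0 → ∃ (σ : K ≃ₐ[F] K) (c : K), ∀ z, g (m * z) = c * σ (h z) := by
      intro m hm
      obtain ⟨σ', k', hk', heq⟩ := lineA (AlgEquiv.refl) m⁻¹ (inv_ne_zero hm)
      refine ⟨σ', k', fun z => ?_⟩
      have hmemJ : ((m⁻¹ * (m * z), m * z) : K × K) ∈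
          JJ (⇑(AlgEquiv.refl : K ≃ₐ[F] K)) m⁻¹ := by
        show m⁻¹ * (m * z) = m⁻¹ * (AlgEquiv.refl : K ≃ₐ[F] K) (m * z)
        rw [AlgEquiv.coe_refl, id_eq]
      have hmem : ψ (m⁻¹ * (m * z), m * z) ∈ JJ (⇑σ') k' := by
        rw [← heq]
        exact Set.mem_image_of_mem ψ hmemJ
      have hmem' : (ψ (m⁻¹ * (m * z), m * z)).1
          = k' * σ' (ψ (m⁻¹ * (m * z), m * z)).2 := hmem
      rw [hpsi (m⁻¹ * (m * z)) (m * z)] at hmem'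
      simp only at hmem'
      rw [inv_mul_cancel_left₀ hm] at hmem'
      exact hmem'
    obtain ⟨μ, σ, a, d, ha0, hd0, hgf, hhf⟩ :=
      core_lemma (F := F) hK3 g h hga hgi hha hhi hl
    exact ⟨μ, σ, Or.inr ⟨d, a, hd0, ha0, fun x y => by
      rw [hpsi x y, hgf y, hhf x]⟩⟩
end

section
/- Let a, b ∈ K with a ≠ b and let f ∈ F∖{0}. Define C₁ = {x ∈ K : N(x) = 1} and C₂ = {x ∈ K : N(x − a) = f·N(x − b)}. If C₁ is not a subset of C₂, then the cardinality of C₁ ∩ C₂ is at most 2·(q^n − 1)/(q − 1). -/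
open Finset Polynomial

lemma aux_charP (q p k : ℕ) (F : Type) [Field F] [Fintype F]
    (hp : p.Prime) (hk : 0 < k) (hpk : p ^ k = q) (hcF : Fintype.card F = q) :
    CharP F p := by
  obtain ⟨c, hc⟩ := CharP.exists F
  haveI := hc
  have hcprime : c.Prime := CharP.char_is_prime F c
  have hdvd : c ∣ q := by
    have := FiniteField.cast_card_eq_zero F
    rw [hcF] at *
    exact (CharP.cast_eq_zero_iff F c q).mp this
  have : c = p := by
    rw [← hpk] at hdvd
    exact (Nat.prime_dvd_prime_iff_eq hcprime hp).mp (hcprime.dvd_of_dvd_pow hdvd)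
  rwa [this] at hc

lemma aux_norm (q n p k : ℕ) (F K : Type) [Field F] [Field K] [Algebra F K]
    [Fintype F] [Fintype K]
    (hq : 2 < q) (hp : p.Prime) (hk : 0 < k) (hpk : p ^ k = q)
    (hcF : Fintype.card F = q) (hcK : Fintype.card K = q ^ (n + 1)) (y : K) :
    algebraMap F K (Algebra.norm F y) = y ^ (∑ i ∈ Finset.range (n + 1), q ^ i) := by
  haveI : Fact p.Prime := ⟨hp⟩
  haveI : CharP F p := aux_charP q p k F hp hk hpk hcF
  haveI : CharP K p := charP_of_injective_algebraMap (algebraMap F K).injective p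
  haveI : FiniteDimensional F K := by infer_instance
  have hrank : Module.finrank F K = n + 1 := by
    have h1 : Fintype.card K = Fintype.card F ^ Module.finrank F K := Module.card_eq_pow_finrank
    rw [hcF, hcK] at h1
    exact (Nat.pow_right_injective (by omega) h1.symm)
  have hcardGal : Fintype.card (K ≃ₐ[F] K) = n + 1 := by
    rw [← Nat.card_eq_fintype_card, IsGalois.card_aut_eq_finrank, hrank]
  have key : ∀ i : ℕ, ∃ σ : K ≃ₐ[F] K, ∀ x : K, σ x = x ^ q ^ i := by
    intro i
    have hqi : q ^ i = p ^ (k * i) := by rw [pow_mul, hpk]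
    let σ₀ : K →ₐ[F] K :=
      { toFun := fun x => x ^ q ^ i
        map_one' := one_pow _
        map_mul' := fun x y => mul_pow x y _
        map_zero' := zero_pow (by positivity)
        map_add' := fun x y => by rw [hqi]; exact add_pow_char_pow x y p (k * i)
        commutes' := fun c => by
          show ((algebraMap F K) c) ^ q ^ i = algebraMap F K c
          rw [← map_pow]
          congr 1
          have := FiniteField.pow_card_pow i c
          rwa [hcF] at this }
    have hinj : Function.Injective σ₀ := σ₀.toRingHom.injective
    exact ⟨AlgEquiv.ofBijective σ₀ ((Finite.injective_iff_bijective).mp hinj),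
      fun x => rfl⟩
  choose φ hφ using key
  have hinj : Function.Injective (fun i : Fin (n + 1) => φ i) := by
    intro i j hij
    obtain ⟨g, hg⟩ := IsCyclic.exists_generator (α := Kˣ)
    have horder : orderOf g = q ^ (n + 1) - 1 := by
      rw [orderOf_eq_card_of_forall_mem_zpowers hg, Nat.card_units,
        Nat.card_eq_fintype_card, hcK]
    have hij' : φ (i : ℕ) = φ (j : ℕ) := hij
    have hgx : (g : K) ^ q ^ (i : ℕ) = (g : K) ^ q ^ (j : ℕ) := by
      rw [← hφ i (g : K), ← hφ j (g : K), hij']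
    have hgu : g ^ q ^ (i : ℕ) = g ^ q ^ (j : ℕ) := by
      ext
      simpa using hgx
    rw [pow_eq_pow_iff_modEq, horder] at hgu
    have hql : ∀ l : ℕ, l ≤ n → q ^ l < q ^ (n + 1) - 1 := by
      intro l hl
      have h1 : q ^ l ≤ q ^ n := Nat.pow_le_pow_right (by omega) hl
      have h2 : 3 * q ^ n ≤ q * q ^ n := Nat.mul_le_mul_right _ (by omega)
      have h3 : 1 ≤ q ^ n := Nat.one_le_pow _ _ (by omega)
      have h4 : q ^ (n + 1) = q * q ^ n := by ring
      omega
    have := (Nat.ModEq.eq_of_lt_of_lt hgu (hql _ (Nat.lt_succ_iff.mp i.isLt))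
      (hql _ (Nat.lt_succ_iff.mp j.isLt)))
    exact Fin.ext (Nat.pow_right_injective (by omega) this)
  have hbij : Function.Bijective (fun i : Fin (n + 1) => φ i) :=
    (Fintype.bijective_iff_injective_and_card _).mpr ⟨hinj, by simp [hcardGal]⟩
  rw [Algebra.norm_eq_prod_automorphisms]
  rw [← Fintype.prod_bijective _ hbij (fun i => φ i y) (fun σ => σ y) (fun i => rfl)]
  simp only [hφ]
  rw [Finset.prod_pow_eq_pow_sum]
  rw [Fin.sum_univ_eq_sum_range (fun i => q ^ i)]

theorem stmt_3
    (q n : ℕ) (hq : 2 < q) (hqp : IsPrimePow q) (hn : 1 ≤ n)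
    (F K : Type) [Field F] [Field K] [Algebra F K] [Fintype F] [Fintype K]
    (hcF : Fintype.card F = q) (hcK : Fintype.card K = q ^ (n + 1))
    (a b : K) (hab : a ≠ b) (f : F) (hf : f ≠ 0)
    (C₁ C₂ : Set K)
    (hC₁ : C₁ = {x : K | Algebra.norm F x = 1})
    (hC₂ : C₂ = {x : K | Algebra.norm F (x - a) = f * Algebra.norm F (x - b)})
    (hns : ¬ C₁ ⊆ C₂) :
    (C₁ ∩ C₂).ncard ≤ 2 * ((q ^ n - 1) / (q - 1)) := by
  classical
  obtain ⟨p, k, hpp, hk, hpk⟩ := hqp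
  have hp : p.Prime := Nat.prime_iff.mpr hpp
  haveI : Fact p.Prime := ⟨hp⟩
  haveI : CharP F p := aux_charP q p k F hp hk hpk hcF
  haveI : CharP K p := charP_of_injective_algebraMap (algebraMap F K).injective p
  set m : ℕ := ∑ i ∈ Finset.range (n + 1), q ^ i with hm
  set d : ℕ := ∑ i ∈ Finset.range n, q ^ i with hd
  have hmd : m = d + q ^ n := by rw [hm, hd, Finset.sum_range_succ]
  have hnorm : ∀ y : K, algebraMap F K (Algebra.norm F y) = y ^ m :=
    aux_norm q n p k F K hq hp hk hpk hcF hcK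
  have hdgoal : (q ^ n - 1) / (q - 1) = d := (Nat.geomSum_eq (by omega) n).symm
  set f' : K := algebraMap F K f with hf'def
  have hf' : f' ≠ 0 := by
    simpa [hf'def] using (map_ne_zero (algebraMap F K)).mpr hf
  have hinj := (algebraMap F K).injective
  -- Frobenius on differences
  have hfrob : ∀ x c : K, (x - c) ^ q ^ n = x ^ q ^ n - c ^ q ^ n := by
    intro x c
    have : q ^ n = p ^ (k * n) := by rw [pow_mul, hpk]
    rw [this]
    exact sub_pow_char_pow x c (k * n)
  rw [hdgoal]
  set Pa : K[X] := (X - C a) ^ d with hPadef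
  set Pb : K[X] := (X - C b) ^ d with hPbdef
  set W : K[X] :=
    X ^ d * (C (a ^ q ^ n) * Pa - C (f' * b ^ q ^ n) * Pb) - (Pa - C f' * Pb) with hWdef
  have hPadeg : Pa.natDegree ≤ d := by
    rw [hPadef, natDegree_pow, natDegree_X_sub_C, mul_one]
  have hPbdeg : Pb.natDegree ≤ d := by
    rw [hPbdef, natDegree_pow, natDegree_X_sub_C, mul_one]
  have hWdeg : W.natDegree ≤ 2 * d := by
    rw [hWdef]
    refine le_trans (natDegree_sub_le _ _) (max_le ?_ ?_)
    · refine le_trans (natDegree_mul_le) ?_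
      have h1 : (C (a ^ q ^ n) * Pa).natDegree ≤ d :=
        le_trans natDegree_mul_le (by rw [natDegree_C, zero_add]; exact hPadeg)
      have h2 : (C (f' * b ^ q ^ n) * Pb).natDegree ≤ d :=
        le_trans natDegree_mul_le (by rw [natDegree_C, zero_add]; exact hPbdeg)
      have h3 : (C (a ^ q ^ n) * Pa - C (f' * b ^ q ^ n) * Pb).natDegree ≤ d :=
        le_trans (natDegree_sub_le _ _) (max_le h1 h2)
      have h4 : (X ^ d : K[X]).natDegree ≤ d := le_of_eq (natDegree_X_pow d)
      omega
    · have h1 : (C f' * Pb).natDegree ≤ d :=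
        le_trans natDegree_mul_le (by rw [natDegree_C, zero_add]; exact hPbdeg)
      refine le_trans (natDegree_sub_le _ _) (le_trans (max_le hPadeg h1) ?_)
      omega
  have hWeval : ∀ x : K, x ^ m = 1 →
      W.eval x = -(x ^ d * ((x - a) ^ m - f' * (x - b) ^ m)) := by
    intro x hx
    have hxq : x ^ d * x ^ q ^ n = 1 := by
      rw [← pow_add, ← hmd]; exact hx
    have ea : (x - a) ^ m = (x - a) ^ d * (x ^ q ^ n - a ^ q ^ n) := by
      rw [hmd, pow_add, hfrob]
    have eb : (x - b) ^ m = (x - b) ^ d * (x ^ q ^ n - b ^ q ^ n) := by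
      rw [hmd, pow_add, hfrob]
    rw [hWdef, hPadef, hPbdef]
    simp only [eval_sub, eval_mul, eval_pow, eval_X, eval_C]
    rw [ea, eb]
    linear_combination ((x - a) ^ d - f' * (x - b) ^ d) * hxq
  have hm0 : m ≠ 0 := by
    have : 1 ≤ q ^ n := Nat.one_le_pow _ _ (by omega)
    omega
  have hC1pow : ∀ x ∈ C₁, x ^ m = 1 := by
    intro x hx
    rw [hC₁] at hx
    have h2 := hnorm x
    rw [hx, map_one] at h2
    exact h2.symm
  have hroot : ∀ x ∈ C₁ ∩ C₂, W.eval x = 0 := by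
    rintro x ⟨h1, h2⟩
    have hxm := hC1pow x h1
    rw [hC₂] at h2
    have heq : (x - a) ^ m = f' * (x - b) ^ m := by
      rw [← hnorm, ← hnorm, h2, map_mul]
    rw [hWeval x hxm, heq]
    ring
  obtain ⟨x₀, hx₀1, hx₀2⟩ := Set.not_subset.mp hns
  have hx₀m := hC1pow x₀ hx₀1
  have hx₀0 : x₀ ≠ 0 := by
    rintro rfl
    rw [zero_pow hm0] at hx₀m
    exact zero_ne_one hx₀m
  have hWne : W ≠ 0 := by
    intro hW0
    apply hx₀2
    rw [hC₂]
    have hev := hWeval x₀ hx₀m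
    rw [hW0, eval_zero] at hev
    have hxd : x₀ ^ d ≠ 0 := pow_ne_zero _ hx₀0
    have heq : (x₀ - a) ^ m = f' * (x₀ - b) ^ m := by
      have h := hev.symm
      rw [neg_eq_zero, mul_eq_zero] at h
      rcases h with h | h
      · exact absurd h hxd
      · exact sub_eq_zero.mp h
    show Algebra.norm F (x₀ - a) = f * Algebra.norm F (x₀ - b)
    apply hinj
    rw [map_mul, hnorm, hnorm]
    exact heq
  have hsub : C₁ ∩ C₂ ⊆ (W.roots.toFinset : Set K) := by
    intro x hx
    simp only [Finset.coe_sort_coe, Multiset.mem_toFinset, Finset.mem_coe,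
      mem_roots hWne, IsRoot.def]
    exact hroot x hx
  calc (C₁ ∩ C₂).ncard ≤ (W.roots.toFinset : Set K).ncard :=
        Set.ncard_le_ncard hsub (Set.toFinite _)
    _ = W.roots.toFinset.card := Set.ncard_coe_finset _
    _ ≤ Multiset.card W.roots := Multiset.toFinset_card_le _
    _ ≤ W.natDegree := card_roots' W
    _ ≤ 2 * d := hWdeg
end

section
/- Let c ∈ K and let f ∈ F∖{0}. Define C₁ = {x ∈ K : N(x) = 1} and C₂ = {x ∈ K : N(x − c) = f}. If C₁ is not a subset of C₂, then the cardinality of C₁ ∩ C₂ is at most 2·(q^n − 1)/(q − 1). -/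
open Finset Polynomial

/-- Extract the characteristic data from the hypotheses. -/
lemma aux_char_4 (q n : ℕ) (hqp : IsPrimePow q)
    (F K : Type) [Field F] [Field K] [Algebra F K] [Fintype F] [Fintype K]
    (hcF : Fintype.card F = q) :
    ∃ p k : ℕ, Nat.Prime p ∧ 0 < k ∧ p ^ k = q ∧ CharP F p ∧ CharP K p := by
  obtain ⟨p, k, hp, hk, hpk⟩ := hqp
  rw [← Nat.prime_iff] at hp
  obtain ⟨r, hr⟩ := CharP.exists F
  haveI := hr
  have hrp : r.Prime := CharP.char_is_prime F r
  obtain ⟨j, _, hj⟩ := FiniteField.card F r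
  have hq' : p ^ k = r ^ (j : ℕ) := by rw [hpk, ← hcF, hj]
  have hpr : p = r := by
    have h1 : p ∣ r ^ (j : ℕ) := hq' ▸ dvd_pow_self p hk.ne'
    exact (Nat.prime_dvd_prime_iff_eq hp hrp).mp (hp.dvd_of_dvd_pow h1)
  subst hpr
  exact ⟨p, k, hp, hk, hpk, hr,
    charP_of_injective_algebraMap (algebraMap F K).injective p⟩

/-- The norm on a finite field extension is the power map. -/
lemma aux_norm_4 (q n : ℕ) (hq : 2 < q) (hqp : IsPrimePow q)
    (F K : Type) [Field F] [Field K] [Algebra F K] [Fintype F] [Fintype K]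
    (hcF : Fintype.card F = q) (hcK : Fintype.card K = q ^ (n + 1))
    (x : K) :
    algebraMap F K (Algebra.norm F x) = x ^ (∑ i ∈ Finset.range (n + 1), q ^ i) := by
  obtain ⟨p, k, hp, hk, hpk, hF, hK⟩ := aux_char_4 q n hqp F K hcF
  haveI := hF; haveI := hK; haveI : Fact p.Prime := ⟨hp⟩
  -- the Frobenius x ↦ x^q as an F-algebra automorphism of K
  have hcomm : ∀ a : F, (iterateFrobeniusEquiv K p k) (algebraMap F K a) = algebraMap F K a := by
    intro a
    rw [iterateFrobeniusEquiv_def, hpk, ← map_pow, ← hcF, FiniteField.pow_card]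
  let σ : K ≃ₐ[F] K := AlgEquiv.ofRingEquiv hcomm
  have hσ : ∀ y : K, σ y = y ^ q := by
    intro y
    show (iterateFrobeniusEquiv K p k) y = y ^ q
    rw [iterateFrobeniusEquiv_def, hpk]
  classical
  have hσpow : ∀ (i : ℕ) (y : K), (σ ^ i) y = y ^ q ^ i := by
    intro i
    induction i with
    | zero => intro y; simp
    | succ i ih =>
      intro y
      rw [pow_succ, AlgEquiv.mul_apply, hσ, ih, ← pow_mul]
      congr 1
      rw [pow_succ, Nat.mul_comm]
  -- injectivity of i ↦ σ^i on Fin (n+1)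
  have hinj : Function.Injective (fun i : Fin (n + 1) => σ ^ (i : ℕ)) := by
    intro i j hij
    obtain ⟨g, hg⟩ := IsCyclic.exists_generator (α := Kˣ)
    have horder : orderOf g = q ^ (n + 1) - 1 := by
      rw [orderOf_eq_card_of_forall_mem_zpowers hg, Nat.card_eq_fintype_card,
        Fintype.card_units, hcK]
    have hgp : (g : K) ^ q ^ (i : ℕ) = (g : K) ^ q ^ (j : ℕ) := by
      have := congrArg (fun τ : K ≃ₐ[F] K => τ (g : K)) hij
      simpa [hσpow] using this
    have hu : g ^ q ^ (i : ℕ) = g ^ q ^ (j : ℕ) := Units.ext (by push_cast; exact hgp)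
    rw [pow_eq_pow_iff_modEq, horder] at hu
    have hlt : ∀ a : Fin (n + 1), q ^ (a : ℕ) < q ^ (n + 1) - 1 := by
      intro a
      have h1 : q ^ (a : ℕ) ≤ q ^ n := Nat.pow_le_pow_right (by omega) (by omega)
      have h2 : q ^ (n + 1) = q * q ^ n := by ring
      have h3 : 1 ≤ q ^ n := Nat.one_le_pow _ _ (by omega)
      have h4 : 3 * q ^ n ≤ q * q ^ n := Nat.mul_le_mul_right _ (by omega)
      omega
    have : q ^ (i : ℕ) = q ^ (j : ℕ) := by
      have h1 := Nat.mod_eq_of_lt (hlt i)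
      have h2 := Nat.mod_eq_of_lt (hlt j)
      unfold Nat.ModEq at hu
      omega
    exact Fin.ext (Nat.pow_right_injective (by omega) this)
  have hcard : Fintype.card (K ≃ₐ[F] K) = n + 1 := by
    rw [← Nat.card_eq_fintype_card, IsGalois.card_aut_eq_finrank]
    have hcc : Fintype.card K = Fintype.card F ^ Module.finrank F K := by
      simpa using Module.card_fintype (Module.finBasis F K)
    rw [hcK, hcF] at hcc
    exact (Nat.pow_right_injective (by omega) hcc).symm
  have hbij : Function.Bijective (fun i : Fin (n + 1) => σ ^ (i : ℕ)) :=
    (Fintype.bijective_iff_injective_and_card _).mpr ⟨hinj, by simp [hcard]⟩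
  rw [Algebra.norm_eq_prod_automorphisms]
  rw [← Fintype.prod_bijective _ hbij _ (fun τ => τ x) (fun i => rfl)]
  simp only [hσpow]
  rw [Fin.prod_univ_eq_prod_range (fun i => x ^ q ^ i), prod_pow_eq_pow_sum]

theorem stmt_4
    (q n : ℕ) (hq : 2 < q) (hqp : IsPrimePow q) (hn : 1 ≤ n)
    (F K : Type) [Field F] [Field K] [Algebra F K] [Fintype F] [Fintype K]
    (hcF : Fintype.card F = q) (hcK : Fintype.card K = q ^ (n + 1))
    (c : K) (f : F) (hf : f ≠ 0)
    (C₁ C₂ : Set K)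
    (hC₁ : C₁ = {x : K | Algebra.norm F x = 1})
    (hC₂ : C₂ = {x : K | Algebra.norm F (x - c) = f})
    (hns : ¬ C₁ ⊆ C₂) :
    (C₁ ∩ C₂).ncard ≤ 2 * ((q ^ n - 1) / (q - 1)) := by
  classical
  obtain ⟨p, k, hp, hk, hpk, hF, hK⟩ := aux_char_4 q n hqp F K hcF
  haveI := hF; haveI := hK; haveI : Fact p.Prime := ⟨hp⟩
  have hnorm := aux_norm_4 q n hq hqp F K hcF hcK
  set m := ∑ i ∈ Finset.range (n + 1), q ^ i with hm
  set s := ∑ i ∈ Finset.range n, q ^ i with hs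
  have hms : m = s + q ^ n := by rw [hm, hs, Finset.sum_range_succ]
  have hs1 : 1 ≤ s := by
    rw [hs]
    calc 1 = q ^ 0 := (pow_zero q).symm
    _ ≤ ∑ i ∈ Finset.range n, q ^ i :=
        Finset.single_le_sum (f := fun i => q ^ i) (fun i _ => Nat.zero_le _)
          (Finset.mem_range.mpr (by omega))
  -- (q^n - 1)/(q - 1) = s
  have hdiv : (q ^ n - 1) / (q - 1) = s := by
    obtain ⟨t, rfl⟩ : ∃ t, q = t + 1 := ⟨q - 1, by omega⟩
    have hgs : ∀ N : ℕ, t * (∑ i ∈ Finset.range N, (t + 1) ^ i) + 1 = (t + 1) ^ N := by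
      intro N
      induction N with
      | zero => simp
      | succ N ih => rw [Finset.sum_range_succ, pow_succ]; nlinarith [ih]
    have h1 := hgs n
    have ht : 0 < t := by omega
    have : (t + 1) ^ n - 1 = t * s := by rw [hs]; omega
    rw [this]
    simp only [Nat.add_sub_cancel]
    rw [Nat.mul_div_cancel_left _ ht]
  -- frobenius identity
  have hfrob : ∀ (y z : K) (i : ℕ), (y - z) ^ q ^ i = y ^ q ^ i - z ^ q ^ i := by
    intro y z i
    have hqi : q ^ i = p ^ (k * i) := by rw [← hpk, ← pow_mul]
    rw [hqi, sub_pow_char_pow]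
  -- the polynomial
  set A : K[X] := ∏ i ∈ Finset.range n, (X ^ q ^ i - C (c ^ q ^ i)) with hA
  set P : K[X] := A * (1 - C (c ^ q ^ n) * X ^ s) - C (algebraMap F K f) * X ^ s with hP
  -- every point of the intersection is a root of P
  have hroot : ∀ x ∈ C₁ ∩ C₂, P.IsRoot x := by
    rintro x ⟨hx1, hx2⟩
    rw [hC₁, Set.mem_setOf_eq] at hx1
    rw [hC₂, Set.mem_setOf_eq] at hx2
    have hxm : x ^ m = 1 := by rw [← hnorm x, hx1, map_one]
    have hxc : (x - c) ^ m = algebraMap F K f := by rw [← hnorm (x - c), hx2]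
    have hexp : (x - c) ^ m = (∏ i ∈ Finset.range n, (x ^ q ^ i - c ^ q ^ i)) *
        (x ^ q ^ n - c ^ q ^ n) := by
      rw [hm, ← prod_pow_eq_pow_sum, Finset.prod_range_succ]
      simp_rw [hfrob]
    have hxs : x ^ s * x ^ q ^ n = 1 := by rw [← pow_add, ← hms, hxm]
    have hBval : 1 - c ^ q ^ n * x ^ s = x ^ s * (x ^ q ^ n - c ^ q ^ n) := by
      rw [mul_sub, hxs]; ring
    show P.eval x = 0
    rw [hP]
    simp only [eval_sub, eval_mul, eval_one, eval_pow, eval_X, eval_C, eval_prod,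
      eval_sub, eval_pow, eval_X, eval_C, hA]
    rw [hBval, show (∏ i ∈ Finset.range n, (x ^ q ^ i - c ^ q ^ i)) *
        (x ^ s * (x ^ q ^ n - c ^ q ^ n)) =
        ((∏ i ∈ Finset.range n, (x ^ q ^ i - c ^ q ^ i)) * (x ^ q ^ n - c ^ q ^ n)) * x ^ s
        by ring, ← hexp, hxc, sub_self]
  -- P is nonzero
  have hPne : P ≠ 0 := by
    by_cases hc : c = 0
    · -- then f ≠ 1, else C₁ ⊆ C₂
      have hf1 : f ≠ 1 := by
        intro hf1
        apply hns
        rw [hC₁, hC₂, hc, hf1]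
        intro x hx
        simpa using hx
      have hPform : P = (1 - C (algebraMap F K f)) * X ^ s := by
        rw [hP, hA, hc]
        simp only [ne_eq, zero_pow (pow_ne_zero _ (by omega : q ≠ 0)), map_zero, sub_zero,
          zero_mul, one_mul]
        rw [prod_pow_eq_pow_sum, ← hs]
        ring
      rw [hPform]
      apply mul_ne_zero
      · rw [sub_ne_zero]
        intro h1
        apply hf1
        have : algebraMap F K f = algebraMap F K 1 := by
          rw [map_one]; exact_mod_cast ((Polynomial.C_inj).mp (by rw [← h1, map_one])).symm
        exact (algebraMap F K).injective this
      · exact pow_ne_zero _ X_ne_zero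
    · -- eval at 0 is nonzero
      intro h0
      have : P.eval 0 = 0 := by rw [h0]; simp
      rw [hP] at this
      simp only [eval_sub, eval_mul, eval_one, eval_pow, eval_X, eval_C, hA, eval_prod,
        eval_sub, eval_pow] at this
      rw [zero_pow (by omega : s ≠ 0)] at this
      simp only [mul_zero, sub_zero, mul_one] at this
      have hma : (∏ i ∈ Finset.range n, ((0:K) ^ q ^ i - c ^ q ^ i)) ≠ 0 := by
        apply Finset.prod_ne_zero_iff.mpr
        intro i _
        rw [zero_pow (pow_ne_zero _ (by omega : q ≠ 0)), zero_sub, neg_ne_zero]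
        exact pow_ne_zero _ hc
      exact hma this
  -- degree bound
  have hdeg : P.natDegree ≤ 2 * s := by
    rw [hP]
    apply le_trans (natDegree_sub_le _ _)
    apply max_le
    · apply le_trans (natDegree_mul_le)
      have hAdeg : A.natDegree ≤ s := by
        rw [hA, hs]
        apply le_trans (natDegree_prod_le _ _)
        apply Finset.sum_le_sum
        intro i _
        apply le_trans (natDegree_sub_le _ _)
        simp [natDegree_X_pow]
      have hBdeg : (1 - C (c ^ q ^ n) * X ^ s).natDegree ≤ s := by
        apply le_trans (natDegree_sub_le _ _)
        simp only [natDegree_one, max_le_iff]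
        constructor
        · omega
        · apply le_trans (natDegree_mul_le)
          simp [natDegree_X_pow]
      omega
    · apply le_trans (natDegree_mul_le)
      simp only [natDegree_C, natDegree_X_pow]
      omega
  -- conclusion
  have hsub : C₁ ∩ C₂ ⊆ ↑P.roots.toFinset := by
    intro x hx
    simp only [Finset.coe_sort_coe, Multiset.mem_toFinset, Finset.mem_coe]
    rw [mem_roots hPne]
    exact hroot x hx
  calc (C₁ ∩ C₂).ncard ≤ (P.roots.toFinset : Set K).ncard :=
        Set.ncard_le_ncard hsub (Set.toFinite _)
    _ = P.roots.toFinset.card := Set.ncard_coe_finset _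
    _ ≤ Multiset.card P.roots := Multiset.toFinset_card_le _
    _ ≤ P.natDegree := card_roots' P
    _ ≤ 2 * s := hdeg
    _ = 2 * ((q ^ n - 1) / (q - 1)) := by rw [hdiv]
end

section
/- Let ξ be either ξ⁺_{α,τ} or ξ⁻_{α,τ} for some α ∈ F∖{0} and field automorphism τ of F, and suppose that every orbit of ξ, acting as a permutation of F∖{0}, has even cardinality. Then the number of subsets B ⊆ F∖{0} satisfying ξ(B) = (F∖{0})∖B is exactly 2^t, where t is the number of orbits of ξ on F∖{0} (and each such B has cardinality (q−1)/2). -/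
set_option linter.unusedSectionVars false

open Function Set

section Aux

variable {A : Type} [Fintype A] {g : A → A}

/-- orbit of a point -/
def gorb (g : A → A) (x : A) : Set A := {y : A | ∃ m : ℕ, g^[m] x = y}

lemma mem_gorb_self (x : A) : x ∈ gorb g x := ⟨0, rfl⟩

lemma gorb_periodic (hg : Function.Injective g) (x : A) : x ∈ periodicPts g := by
  obtain ⟨m, n, hmn, h⟩ := Finite.exists_ne_map_eq_of_infinite (fun n : ℕ => g^[n] x)
  wlog hlt : m < n generalizing m n
  · exact this n m hmn.symm h.symm (by omega)
  refine ⟨n - m, by omega, ?_⟩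
  have : g^[m] (g^[n-m] x) = g^[m] x := by
    rw [← Function.iterate_add_apply]
    rw [show m + (n - m) = n by omega]
    exact h.symm
  exact (hg.iterate m) this

lemma gorb_minpos (hg : Function.Injective g) (x : A) : 0 < minimalPeriod g x :=
  minimalPeriod_pos_of_mem_periodicPts (gorb_periodic hg x)

lemma gorb_symm (hg : Function.Injective g) {x y : A} (h : y ∈ gorb g x) : x ∈ gorb g y := by
  obtain ⟨m, rfl⟩ := h
  set p := minimalPeriod g x with hp
  have hppos := gorb_minpos hg x
  refine ⟨m * p - m, ?_⟩
  rw [← Function.iterate_add_apply]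
  rw [show m * p - m + m = p * m by
    have : m ≤ m * p := Nat.le_mul_of_pos_right m hppos
    ring_nf; omega]
  rw [Function.iterate_mul]
  exact Function.IsFixedPt.iterate (isPeriodicPt_minimalPeriod g x) m

lemma gorb_eq (hg : Function.Injective g) {x y : A} (h : y ∈ gorb g x) :
    gorb g x = gorb g y := by
  ext z
  constructor
  · rintro ⟨k, rfl⟩
    obtain ⟨j, hj⟩ := gorb_symm hg h
    exact ⟨k + j, by rw [Function.iterate_add_apply, hj]⟩
  · rintro ⟨k, rfl⟩
    obtain ⟨m, rfl⟩ := h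
    exact ⟨k + m, by rw [Function.iterate_add_apply]⟩

lemma gorb_ncard (hg : Function.Injective g) (x : A) :
    (gorb g x).ncard = minimalPeriod g x := by
  classical
  set p := minimalPeriod g x with hp
  have hppos := gorb_minpos hg x
  have hset : gorb g x = ↑((Finset.range p).image (fun n => g^[n] x)) := by
    ext y
    simp only [Finset.coe_image, Finset.coe_range, Set.mem_image, Set.mem_Iio]
    constructor
    · rintro ⟨m, rfl⟩
      exact ⟨m % p, Nat.mod_lt _ hppos, iterate_mod_minimalPeriod_eq⟩
    · rintro ⟨m, _, rfl⟩
      exact ⟨m, rfl⟩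
  rw [hset, Set.ncard_coe_finset, Finset.card_image_of_injOn, Finset.card_range]
  intro a ha b hb hab
  exact iterate_injOn_Iio_minimalPeriod (by simpa using ha) (by simpa using hb) hab

lemma gorb_parity (hg : Function.Injective g) {x : A} (hev : Even (minimalPeriod g x))
    {m n : ℕ} (h : g^[m] x = g^[n] x) : (Even m ↔ Even n) := by
  set p := minimalPeriod g x with hp
  have hppos := gorb_minpos hg x
  have h2 : m % p = n % p := by
    refine iterate_injOn_Iio_minimalPeriod (Nat.mod_lt _ hppos : m % p < p)
      (Nat.mod_lt _ hppos : n % p < p) ?_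
    simp only
    rw [iterate_mod_minimalPeriod_eq, iterate_mod_minimalPeriod_eq, h]
  obtain ⟨c, hc⟩ := hev
  have hm : m % 2 = m % p % 2 := (Nat.mod_mod_of_dvd m ⟨c, by omega⟩).symm
  have hn : n % 2 = n % p % 2 := (Nat.mod_mod_of_dvd n ⟨c, by omega⟩).symm
  rw [Nat.even_iff, Nat.even_iff, hm, hn, h2]

lemma flip_iff (hg : Function.Injective g) (S : Set A) (hS : ∀ x, g x ∈ S ↔ x ∈ S)
    {B : Set A} (hB : B ⊆ S) :
    g '' B = S \ B ↔ ∀ y ∈ S, (g y ∈ B ↔ y ∉ B) := by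
  constructor
  · intro him y hy
    have h1 : g y ∈ g '' B ↔ y ∈ B := by
      constructor
      · rintro ⟨b, hb, hbe⟩; rwa [← hg hbe]
      · intro h; exact ⟨y, h, rfl⟩
    rw [him] at h1
    have h2 : g y ∈ S := (hS y).mpr hy
    constructor
    · intro h; intro hy2
      exact (h1.mpr hy2).2 h
    · intro h
      by_contra hgy
      exact h (h1.mp ⟨h2, hgy⟩)
  · intro hflip
    ext z
    constructor
    · rintro ⟨b, hb, rfl⟩
      exact ⟨(hS b).mpr (hB hb), fun h => (hflip b (hB hb)).mp h hb⟩
    · rintro ⟨hzS, hzB⟩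
      obtain ⟨y, rfl⟩ := (Finite.injective_iff_surjective.mp hg) z
      have hyS : y ∈ S := (hS y).mp hzS
      exact ⟨y, not_not.mp (fun h => hzB ((hflip y hyS).mpr h)), rfl⟩

lemma alt_lemma (S : Set A) (hS : ∀ x, g x ∈ S ↔ x ∈ S) {B : Set A}
    (hflip : ∀ y ∈ S, (g y ∈ B ↔ y ∉ B)) {x : A} (hx : x ∈ S) :
    ∀ m : ℕ, (g^[m] x ∈ B ↔ (Even m ↔ x ∈ B)) := by
  have hiter : ∀ m : ℕ, g^[m] x ∈ S := by
    intro m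
    induction m with
    | zero => exact hx
    | succ n ih => rw [Function.iterate_succ_apply']; exact (hS _).mpr ih
  intro m
  induction m with
  | zero => simp
  | succ n ih =>
    rw [Function.iterate_succ_apply']
    rw [hflip _ (hiter n)]
    rw [Nat.even_add_one]
    tauto

end Aux

theorem aux_half {A : Type} [Fintype A] {g : A → A} (hg : Function.Injective g)
    (S : Set A) (B : Set A) (hB : B ⊆ S) (him : g '' B = S \ B) :
    2 * B.ncard = S.ncard := by
  have h1 : (g '' B).ncard = B.ncard := Set.ncard_image_of_injective B hg
  have hdisj : Disjoint B (S \ B) := Set.disjoint_sdiff_right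
  have hunion : B ∪ (S \ B) = S := Set.union_diff_cancel hB
  have := Set.ncard_union_eq hdisj (Set.toFinite B) (Set.toFinite _)
  rw [hunion] at this
  rw [this, ← him, h1]
  ring

set_option maxHeartbeats 1000000 in
theorem aux_main {A : Type} [Fintype A] {g : A → A} (hg : Function.Injective g)
    (S : Set A) (hS : ∀ x, g x ∈ S ↔ x ∈ S)
    (heven : ∀ x ∈ S, Even (Set.ncard {y : A | ∃ m : ℕ, g^[m] x = y})) :
    {B : Set A | B ⊆ S ∧ g '' B = S \ B}.ncard
      = 2 ^ Set.ncard {s : Set A | ∃ x, x ∈ S ∧ s = {y : A | ∃ m : ℕ, g^[m] x = y}} := by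
  classical
  set T : Set (Set A) := {s : Set A | ∃ x, x ∈ S ∧ s = gorb g x} with hT
  set V : Set (Set A) := {B : Set A | B ⊆ S ∧ g '' B = S \ B} with hV
  -- basic facts
  have hiterS : ∀ x ∈ S, ∀ m : ℕ, g^[m] x ∈ S := by
    intro x hx m
    induction m with
    | zero => exact hx
    | succ n ih => rw [Function.iterate_succ_apply']; exact (hS _).mpr ih
  have heven' : ∀ x ∈ S, Even (minimalPeriod g x) := by
    intro x hx
    have := heven x hx
    rwa [show {y : A | ∃ m : ℕ, g^[m] x = y} = gorb g x from rfl, gorb_ncard hg] at this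
  -- representative of each orbit
  have hrep : ∀ s : ↥T, ∃ x, x ∈ S ∧ (s : Set A) = gorb g x := fun s => s.2
  set rep : ↥T → A := fun s => (hrep s).choose with hrepdef
  have hrepS : ∀ s : ↥T, rep s ∈ S := fun s => (hrep s).choose_spec.1
  have hrepO : ∀ s : ↥T, (s : Set A) = gorb g (rep s) := fun s => (hrep s).choose_spec.2
  have horbS : ∀ (s : ↥T), ∀ z ∈ (s : Set A), z ∈ S := by
    intro s z hz
    rw [hrepO s] at hz
    obtain ⟨m, rfl⟩ := hz
    exact hiterS _ (hrepS s) m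
  have horbuniq : ∀ (s t : ↥T) (y : A), y ∈ (s : Set A) → y ∈ (t : Set A) → s = t := by
    intro s t y hys hyt
    apply Subtype.ext
    rw [hrepO s] at hys ⊢
    rw [hrepO t] at hyt ⊢
    rw [gorb_eq hg hys, gorb_eq hg hyt]
  -- the candidate inverse map
  set Ψ : (↥T → Prop) → Set A := fun f =>
    {y : A | ∃ s : ↥T, y ∈ (s : Set A) ∧ ∀ m : ℕ, g^[m] (rep s) = y → (Even m ↔ f s)}
    with hΨ
  have mem_Psi_iff : ∀ (f : ↥T → Prop) (s : ↥T) (z : A), z ∈ (s : Set A) →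
      ∀ m : ℕ, g^[m] (rep s) = z → (z ∈ Ψ f ↔ (Even m ↔ f s)) := by
    intro f s z hz m hm
    constructor
    · rintro ⟨t, hzt, hprop⟩
      rw [horbuniq s t z hz hzt]
      exact hprop m (by rw [← horbuniq s t z hz hzt]; exact hm)
    · intro h
      refine ⟨s, hz, fun n hn => ?_⟩
      have hpar : Even n ↔ Even m :=
        gorb_parity hg (heven' _ (hrepS s)) (by rw [hn, hm])
      rw [hpar]; exact h
  have hPsiS : ∀ f, Ψ f ⊆ S := by
    rintro f y ⟨s, hys, -⟩
    exact horbS s y hys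
  have hPsiV : ∀ f, Ψ f ∈ V := by
    intro f
    refine ⟨hPsiS f, (flip_iff hg S hS (hPsiS f)).mpr ?_⟩
    intro y hy
    set s₀ : ↥T := ⟨gorb g y, ⟨y, hy, rfl⟩⟩ with hs₀
    have hys₀ : y ∈ (s₀ : Set A) := mem_gorb_self y
    have hgys₀ : g y ∈ (s₀ : Set A) := ⟨1, rfl⟩
    obtain ⟨m₀, hm₀⟩ : y ∈ gorb g (rep s₀) := by rw [← hrepO s₀]; exact hys₀
    have hm₁ : g^[m₀ + 1] (rep s₀) = g y := by
      rw [Function.iterate_succ_apply', hm₀]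
    rw [mem_Psi_iff f s₀ y hys₀ m₀ hm₀, mem_Psi_iff f s₀ (g y) hgys₀ (m₀+1) hm₁,
      Nat.even_add_one]
    tauto
  -- the equivalence
  have left_inv : ∀ B : ↥V, Ψ (fun s => rep s ∈ (B : Set A)) = (B : Set A) := by
    rintro ⟨B, hB, him⟩
    have hflip := (flip_iff hg S hS hB).mp him
    ext y
    by_cases hy : y ∈ S
    · set s₀ : ↥T := ⟨gorb g y, ⟨y, hy, rfl⟩⟩ with hs₀
      have hys₀ : y ∈ (s₀ : Set A) := mem_gorb_self y
      obtain ⟨m₀, hm₀⟩ : y ∈ gorb g (rep s₀) := by rw [← hrepO s₀]; exact hys₀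
      rw [mem_Psi_iff _ s₀ y hys₀ m₀ hm₀]
      have halt := alt_lemma S hS hflip (hrepS s₀) m₀
      rw [hm₀] at halt
      rw [← halt]
    · constructor
      · intro h; exact absurd (hPsiS _ h) hy
      · intro h; exact absurd (hB h) hy
  have right_inv : ∀ f : ↥T → Prop, (fun s => rep s ∈ Ψ f) = f := by
    intro f
    funext s
    have hzs : rep s ∈ (s : Set A) := by rw [hrepO s]; exact mem_gorb_self _
    have := mem_Psi_iff f s (rep s) hzs 0 rfl
    simp only [Even.zero, true_iff] at this
    exact propext this
  set E : ↥V ≃ (↥T → Prop) :=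
    { toFun := fun B s => rep s ∈ (B : Set A)
      invFun := fun f => ⟨Ψ f, hPsiV f⟩
      left_inv := fun f => Subtype.ext (left_inv _)
      right_inv := fun f => right_inv f } with hE
  have hcard : V.ncard = 2 ^ T.ncard := by
    rw [← Nat.card_coe_set_eq V, ← Nat.card_coe_set_eq T]
    rw [Nat.card_congr E, Nat.card_fun]
    congr 1
    simp [Nat.card_eq_fintype_card]
  exact hcard

theorem stmt_7
    (q : ℕ) (hq : Odd q) (hqp : IsPrimePow q)
    (F : Type) [Field F] [Fintype F] (hcF : Fintype.card F = q)
    (α : F) (hα : α ≠ 0) (τ : F ≃+* F) (ξ : F → F)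
    (hξ : (∀ x : F, ξ x = α * τ x) ∨ (∀ x : F, ξ x = α * (τ x)⁻¹))
    (heven : ∀ x : F, x ≠ 0 → Even (Set.ncard {y : F | ∃ m : ℕ, ξ^[m] x = y})) :
    {B : Set F | B ⊆ {f : F | f ≠ 0} ∧ ξ '' B = {f : F | f ≠ 0} \ B}.ncard
        = 2 ^ Set.ncard {s : Set F | ∃ x : F, x ≠ 0 ∧ s = {y : F | ∃ m : ℕ, ξ^[m] x = y}} ∧
      ∀ B : Set F, B ⊆ {f : F | f ≠ 0} → ξ '' B = {f : F | f ≠ 0} \ B →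
        B.ncard = (q - 1) / 2 := by
  have hg : Function.Injective ξ := by
    rcases hξ with h | h
    · intro x y hxy
      rw [h, h] at hxy
      exact τ.injective (mul_left_cancel₀ hα hxy)
    · intro x y hxy
      rw [h, h] at hxy
      exact τ.injective (inv_injective (mul_left_cancel₀ hα hxy))
  set S : Set F := {f : F | f ≠ 0} with hSdef
  have hS : ∀ x, ξ x ∈ S ↔ x ∈ S := by
    intro x
    rcases hξ with h | h
    · simp [hSdef, h, mul_eq_zero, hα, map_eq_zero]
    · simp [hSdef, h, mul_eq_zero, hα, inv_eq_zero, map_eq_zero]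
  have hScard : S.ncard = q - 1 := by
    have h0 : S = (({0} : Set F)ᶜ) := by ext x; simp [hSdef]
    have h1 := Set.ncard_add_ncard_compl ({0} : Set F)
    have h2 : Nat.card F = q := by rw [Nat.card_eq_fintype_card, hcF]
    rw [Set.ncard_singleton, h2] at h1
    rw [h0]
    omega
  constructor
  · exact aux_main hg S hS (fun x hx => heven x hx)
  · intro B hB him
    have := aux_half hg S B hB him
    rw [hScard] at this
    omega
end

section
/- Let I ⊆ F∖{0} with 2 ≤ |I| ≤ (q−1)/2. Let S = {J(∞)} ∪ {J(k) : k ∈ K} and S^q = {J(∞)} ∪ {J^q(k) : k ∈ K}. Then the number of subspaces belonging to both S and A_I equals 2 + (q − 1 − |I|)(q + 1), and the number of subspaces belonging to both S^q and A_I equals 2 + |I|(q + 1); in particular, both of these numbers exceed 2q + 2. -/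
/-- J^q(k) = {(k·x^q, x) : x ∈ K} -/
def Jq (K : Type) [Field K] (q : ℕ) (k : K) : Set (K × K) := {p | p.1 = k * p.2 ^ q}

/-- The two-dimensional André spread A_I. -/
def AndreSpread (F K : Type) [Field F] [Field K] [Algebra F K] (q : ℕ) (I : Set F) :
    Set (Set (K × K)) :=
  {Jinf K, J K 0}
    ∪ {W | ∃ k : K, k ≠ 0 ∧ Algebra.norm F k ∈ I ∧ W = Jq K q k}
    ∪ {W | ∃ k : K, k ≠ 0 ∧ Algebra.norm F k ∉ I ∧ W = J K k}

lemma aux_exists_pow_ne (q : ℕ) (hq : 5 ≤ q) (K : Type) [Field K] [Fintype K]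
    (hcK : Fintype.card K = q ^ 2) : ∃ x : K, x ^ q ≠ x := by
  by_contra h
  push_neg at h
  classical
  obtain ⟨g, hg⟩ := IsCyclic.exists_generator (α := Kˣ)
  have hord : orderOf g = q ^ 2 - 1 := by
    rw [orderOf_eq_card_of_forall_mem_zpowers hg, Nat.card_eq_fintype_card, Fintype.card_units, hcK]
  have hgq : g ^ q = g := by
    ext
    push_cast
    exact h g
  have h1 : g ^ (q - 1) = 1 := by
    have : g ^ (q - 1) * g = 1 * g := by
      rw [one_mul, ← pow_succ, Nat.sub_add_cancel (by omega), hgq]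
    exact mul_right_cancel this
  have hdvd : orderOf g ∣ q - 1 := orderOf_dvd_of_pow_eq_one h1
  have hle : q ^ 2 - 1 ≤ q - 1 := hord ▸ Nat.le_of_dvd (by omega) hdvd
  have h2 : q ^ 2 = q * q := sq q
  have h3 : 5 * q ≤ q * q := Nat.mul_le_mul_right q hq
  omega

lemma Jinf_ne_J (K : Type) [Field K] (k : K) : Jinf K ≠ J K k := by
  intro h
  have h1 : ((1 : K), (0 : K)) ∈ Jinf K := rfl
  rw [h] at h1
  simp [J] at h1

lemma Jinf_ne_Jq (q : ℕ) (hq : 5 ≤ q) (K : Type) [Field K] (k : K) : Jinf K ≠ Jq K q k := by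
  intro h
  have h1 : ((1 : K), (0 : K)) ∈ Jinf K := rfl
  rw [h] at h1
  simp [Jq, zero_pow (show q ≠ 0 by omega)] at h1

lemma J_inj (K : Type) [Field K] : Function.Injective (J K) := by
  intro k k' h
  have h1 : ((k : K), (1 : K)) ∈ J K k := by simp [J]
  rw [h] at h1
  simpa [J] using h1

lemma Jq_inj (K : Type) [Field K] (q : ℕ) : Function.Injective (Jq K q) := by
  intro k k' h
  have h1 : ((k : K), (1 : K)) ∈ Jq K q k := by simp [Jq]
  rw [h] at h1
  simpa [Jq] using h1

lemma J0_eq_Jq0 (K : Type) [Field K] (q : ℕ) : J K 0 = Jq K q 0 := by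
  ext p; simp [J, Jq]

lemma Jq_ne_J (q : ℕ) (hq : 5 ≤ q) (K : Type) [Field K] [Fintype K]
    (hcK : Fintype.card K = q ^ 2) {k k' : K} (hk : k ≠ 0) : Jq K q k ≠ J K k' := by
  intro h
  have h1 : ((k : K), (1 : K)) ∈ Jq K q k := by simp [Jq]
  rw [h] at h1
  have hkk' : k = k' := by simpa [J] using h1
  subst hkk'
  obtain ⟨x, hx⟩ := aux_exists_pow_ne q hq K hcK
  have h2 : (k * x, x) ∈ J K k := by simp [J]
  rw [← h] at h2
  have h3 : k * x = k * x ^ q := h2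
  exact hx (mul_left_cancel₀ hk h3).symm


lemma aux_finrank (q : ℕ) (hq : 5 ≤ q)
    (F K : Type) [Field F] [Field K] [Algebra F K] [Fintype F] [Fintype K]
    (hcF : Fintype.card F = q) (hcK : Fintype.card K = q ^ 2) :
    Module.finrank F K = 2 := by
  have h := Module.card_eq_pow_finrank (K := F) (V := K)
  rw [hcF, hcK] at h
  exact (Nat.pow_right_injective (by omega) h.symm)

lemma aux_norm_pow (q : ℕ) (hq : 5 ≤ q)
    (F K : Type) [Field F] [Field K] [Algebra F K] [Fintype F] [Fintype K]
    (hcF : Fintype.card F = q) (hcK : Fintype.card K = q ^ 2) (x : K) :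
    algebraMap F K (Algebra.norm F x) = x ^ (q + 1) := by
  classical
  obtain ⟨p, hp⟩ := CharP.exists F
  obtain ⟨n, hpp, hcard⟩ := FiniteField.card F p
  haveI : Fact p.Prime := ⟨hpp⟩
  haveI : CharP K p := charP_of_injective_algebraMap (algebraMap F K).injective p
  rw [hcF] at hcard
  -- the Frobenius F-algebra hom x ↦ x ^ q
  have hcomm : ∀ a : F, iterateFrobenius K p n (algebraMap F K a) = algebraMap F K a := by
    intro a
    rw [iterateFrobenius_def, ← map_pow, ← hcard]
    rw [show a ^ q = a from by rw [← hcF]; exact FiniteField.pow_card a]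
  let φ : K →ₐ[F] K := ⟨iterateFrobenius K p n, hcomm⟩
  have hφ : Function.Bijective φ :=
    (Finite.injective_iff_bijective).mp (iterateFrobenius K p n).injective
  let τ : K ≃ₐ[F] K := AlgEquiv.ofBijective φ hφ
  have hτ : ∀ y : K, τ y = y ^ q := by
    intro y
    show iterateFrobenius K p n y = y ^ q
    rw [iterateFrobenius_def, hcard]
  obtain ⟨z, hz⟩ := aux_exists_pow_ne q hq K hcK
  have hne : (AlgEquiv.refl : K ≃ₐ[F] K) ≠ τ := by
    intro h
    exact hz (by rw [← hτ z, ← h]; rfl)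
  have hcard2 : Fintype.card (K ≃ₐ[F] K) = 2 := by
    rw [← Nat.card_eq_fintype_card, IsGalois.card_aut_eq_finrank, aux_finrank q hq F K hcF hcK]
  have huniv : (Finset.univ : Finset (K ≃ₐ[F] K)) = {AlgEquiv.refl, τ} := by
    symm
    apply Finset.eq_univ_of_card
    rw [Finset.card_pair hne, hcard2]
  rw [Algebra.norm_eq_prod_automorphisms, huniv, Finset.prod_pair hne, hτ x]
  show x * x ^ q = _
  rw [pow_succ, mul_comm]


lemma aux_key_arith (q : ℕ) (hq : 5 ≤ q) : q ^ 2 - 1 = (q - 1) * (q + 1) := by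
  obtain ⟨m, rfl⟩ : ∃ m, q = m + 1 := ⟨q - 1, by omega⟩
  have h1 : (m + 1) ^ 2 = m * (m + 2) + 1 := by ring
  rw [h1, Nat.add_sub_cancel, show m + 1 - 1 = m from rfl]

lemma aux_fiber (q : ℕ) (hq : 5 ≤ q)
    (F K : Type) [Field F] [Field K] [Algebra F K] [Fintype F] [Fintype K]
    (hcF : Fintype.card F = q) (hcK : Fintype.card K = q ^ 2) [DecidableEq F] [DecidableEq K] :
    ∀ f : F, f ≠ 0 → (Finset.univ.filter (fun k : K => Algebra.norm F k = f)).card = q + 1 := by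
  have hub : ∀ f : F, (Finset.univ.filter (fun k : K => Algebra.norm F k = f)).card ≤ q + 1 := by
    intro f
    have hsub : (Finset.univ.filter (fun k : K => Algebra.norm F k = f))
        ⊆ (Polynomial.nthRoots (q + 1) (algebraMap F K f)).toFinset := by
      intro k hk
      rw [Finset.mem_filter] at hk
      rw [Multiset.mem_toFinset, Polynomial.mem_nthRoots (by omega)]
      rw [← aux_norm_pow q hq F K hcF hcK k, hk.2]
    calc _ ≤ _ := Finset.card_le_card hsub
      _ ≤ Multiset.card (Polynomial.nthRoots (q + 1) (algebraMap F K f)) :=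
          Multiset.toFinset_card_le _
      _ ≤ q + 1 := Polynomial.card_nthRoots _ _
  have hts : ∀ k ∈ Finset.univ.filter (fun k : K => k ≠ 0),
      Algebra.norm F k ∈ Finset.univ.filter (fun f : F => f ≠ 0) := by
    intro k hk
    rw [Finset.mem_filter] at hk ⊢
    exact ⟨Finset.mem_univ _, Algebra.norm_ne_zero_iff.mpr hk.2⟩
  have hsum := Finset.card_eq_sum_card_fiberwise hts
  have hfib_eq : ∀ f ∈ Finset.univ.filter (fun f : F => f ≠ 0),
      ((Finset.univ.filter (fun k : K => k ≠ 0)).filter fun k => Algebra.norm F k = f).card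
        = (Finset.univ.filter (fun k : K => Algebra.norm F k = f)).card := by
    intro f hf
    rw [Finset.mem_filter] at hf
    congr 1
    ext k
    simp only [Finset.mem_filter, Finset.mem_univ, true_and]
    constructor
    · rintro ⟨_, h2⟩; exact h2
    · intro h2
      refine ⟨?_, h2⟩
      rintro rfl
      exact hf.2 (by rw [← h2, Algebra.norm_zero])
  rw [Finset.sum_congr rfl hfib_eq] at hsum
  have hscard : (Finset.univ.filter (fun k : K => k ≠ 0)).card = q ^ 2 - 1 := by
    rw [Finset.filter_ne', Finset.card_erase_of_mem (Finset.mem_univ _),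
      Finset.card_univ, hcK]
  have htcard : (Finset.univ.filter (fun f : F => f ≠ 0)).card = q - 1 := by
    rw [Finset.filter_ne', Finset.card_erase_of_mem (Finset.mem_univ _),
      Finset.card_univ, hcF]
  intro f hf
  by_contra hne
  have hlt : (Finset.univ.filter (fun k : K => Algebra.norm F k = f)).card < q + 1 :=
    lt_of_le_of_ne (hub f) hne
  have hmem : f ∈ Finset.univ.filter (fun f : F => f ≠ 0) := by
    rw [Finset.mem_filter]; exact ⟨Finset.mem_univ _, hf⟩
  have hlt2 : ∑ g ∈ Finset.univ.filter (fun f : F => f ≠ 0),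
        (Finset.univ.filter (fun k : K => Algebra.norm F k = g)).card
      < ∑ _g ∈ Finset.univ.filter (fun f : F => f ≠ 0), (q + 1) :=
    Finset.sum_lt_sum (fun i _ => hub i) ⟨f, hmem, hlt⟩
  rw [← hsum, hscard, Finset.sum_const, smul_eq_mul, htcard, aux_key_arith q hq] at hlt2
  omega

lemma aux_count (q : ℕ) (hq : 5 ≤ q)
    (F K : Type) [Field F] [Field K] [Algebra F K] [Fintype F] [Fintype K]
    (hcF : Fintype.card F = q) (hcK : Fintype.card K = q ^ 2)
    (S : Set F) (hS : S ⊆ {f : F | f ≠ 0}) :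
    {k : K | k ≠ 0 ∧ Algebra.norm F k ∈ S}.ncard = S.ncard * (q + 1) := by
  classical
  have hfin : {k : K | k ≠ 0 ∧ Algebra.norm F k ∈ S}.ncard
      = (Finset.univ.filter (fun k : K => k ≠ 0 ∧ Algebra.norm F k ∈ S)).card := by
    rw [Set.ncard_eq_toFinset_card']
    congr 1
    ext k
    simp
  rw [hfin]
  have hAt : ∀ k ∈ Finset.univ.filter (fun k : K => k ≠ 0 ∧ Algebra.norm F k ∈ S),
      Algebra.norm F k ∈ S.toFinset := by
    intro k hk
    rw [Finset.mem_filter] at hk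
    rw [Set.mem_toFinset]
    exact hk.2.2
  have hsum := Finset.card_eq_sum_card_fiberwise hAt
  have hfib_eq : ∀ f ∈ S.toFinset,
      ((Finset.univ.filter (fun k : K => k ≠ 0 ∧ Algebra.norm F k ∈ S)).filter
        fun k => Algebra.norm F k = f).card = q + 1 := by
    intro f hf
    rw [Set.mem_toFinset] at hf
    have hf0 : f ≠ 0 := hS hf
    have heq : ((Finset.univ.filter (fun k : K => k ≠ 0 ∧ Algebra.norm F k ∈ S)).filter
        fun k => Algebra.norm F k = f)
        = Finset.univ.filter (fun k : K => Algebra.norm F k = f) := by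
      ext k
      simp only [Finset.mem_filter, Finset.mem_univ, true_and]
      constructor
      · rintro ⟨_, h2⟩; exact h2
      · intro h2
        refine ⟨⟨?_, h2 ▸ hf⟩, h2⟩
        rintro rfl
        exact hf0 (by rw [← h2, Algebra.norm_zero])
    rw [heq]
    exact aux_fiber q hq F K hcF hcK f hf0
  rw [hsum, Finset.sum_congr rfl hfib_eq, Finset.sum_const, smul_eq_mul,
    Set.ncard_eq_toFinset_card']

theorem stmt_8
    (q : ℕ) (hq : 5 ≤ q) (hqp : IsPrimePow q)
    (F K : Type) [Field F] [Field K] [Algebra F K] [Fintype F] [Fintype K]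
    (hcF : Fintype.card F = q) (hcK : Fintype.card K = q ^ 2)
    (I : Set F) (hIss : I ⊆ {f : F | f ≠ 0})
    (hI2 : 2 ≤ I.ncard) (hIhalf : 2 * I.ncard ≤ q - 1) :
    ((insert (Jinf K) {W | ∃ k : K, W = J K k} ∩ AndreSpread F K q I).ncard
        = 2 + (q - 1 - I.ncard) * (q + 1)) ∧
    ((insert (Jinf K) {W | ∃ k : K, W = Jq K q k} ∩ AndreSpread F K q I).ncard
        = 2 + I.ncard * (q + 1)) ∧
    2 * q + 2 < 2 + (q - 1 - I.ncard) * (q + 1) ∧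
    2 * q + 2 < 2 + I.ncard * (q + 1) := by
  classical
  -- cardinality of {f ≠ 0}
  have hF0 : ({f : F | f ≠ 0}).ncard = q - 1 := by
    rw [Set.ncard_eq_toFinset_card']
    rw [show ({f : F | f ≠ 0}).toFinset = Finset.univ.filter (fun f : F => f ≠ 0) from by
      ext f; simp]
    rw [Finset.filter_ne', Finset.card_erase_of_mem (Finset.mem_univ _),
      Finset.card_univ, hcF]
  have hcomp : ({f : F | f ≠ 0} \ I).ncard = q - 1 - I.ncard := by
    rw [Set.ncard_diff hIss (Set.toFinite _), hF0]
  -- norm nonzero iff nonzero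
  have hnorm0 : ∀ k : K, k ≠ 0 → Algebra.norm F k ≠ 0 := fun k hk =>
    Algebra.norm_ne_zero_iff.mpr hk
  -- first set equality
  have hJset : (insert (Jinf K) {W | ∃ k : K, W = J K k} ∩ AndreSpread F K q I)
      = insert (Jinf K) (insert (J K 0)
          ((J K) '' {k : K | k ≠ 0 ∧ Algebra.norm F k ∉ I})) := by
    ext W
    simp only [Set.mem_inter_iff, Set.mem_insert_iff, Set.mem_setOf_eq, AndreSpread,
      Set.mem_union, Set.mem_singleton_iff, Set.mem_image]
    constructor
    · rintro ⟨h1, h2⟩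
      rcases h2 with ((rfl | rfl) | ⟨k, hk0, hkI, rfl⟩) | ⟨k, hk0, hkI, rfl⟩
      · exact Or.inl rfl
      · exact Or.inr (Or.inl rfl)
      · exfalso
        rcases h1 with h1 | ⟨k', h1⟩
        · exact Jinf_ne_Jq q hq K k h1.symm
        · exact Jq_ne_J q hq K hcK hk0 h1
      · exact Or.inr (Or.inr ⟨k, ⟨hk0, hkI⟩, rfl⟩)
    · rintro (rfl | rfl | ⟨k, ⟨hk0, hkI⟩, rfl⟩)
      · exact ⟨Or.inl rfl, Or.inl (Or.inl (Or.inl rfl))⟩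
      · exact ⟨Or.inr ⟨0, rfl⟩, Or.inl (Or.inl (Or.inr rfl))⟩
      · exact ⟨Or.inr ⟨k, rfl⟩, Or.inr ⟨k, hk0, hkI, rfl⟩⟩
  -- second set equality
  have hJqset : (insert (Jinf K) {W | ∃ k : K, W = Jq K q k} ∩ AndreSpread F K q I)
      = insert (Jinf K) (insert (J K 0)
          ((Jq K q) '' {k : K | k ≠ 0 ∧ Algebra.norm F k ∈ I})) := by
    ext W
    simp only [Set.mem_inter_iff, Set.mem_insert_iff, Set.mem_setOf_eq, AndreSpread,
      Set.mem_union, Set.mem_singleton_iff, Set.mem_image]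
    constructor
    · rintro ⟨h1, h2⟩
      rcases h2 with ((rfl | rfl) | ⟨k, hk0, hkI, rfl⟩) | ⟨k, hk0, hkI, rfl⟩
      · exact Or.inl rfl
      · exact Or.inr (Or.inl rfl)
      · exact Or.inr (Or.inr ⟨k, ⟨hk0, hkI⟩, rfl⟩)
      · exfalso
        rcases h1 with h1 | ⟨k', h1⟩
        · exact Jinf_ne_J K k h1.symm
        · by_cases hk' : k' = 0
          · subst hk'
            rw [← J0_eq_Jq0 K q] at h1
            exact hk0 (J_inj K h1)
          · exact Jq_ne_J q hq K hcK hk' h1.symm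
    · rintro (rfl | rfl | ⟨k, ⟨hk0, hkI⟩, rfl⟩)
      · exact ⟨Or.inl rfl, Or.inl (Or.inl (Or.inl rfl))⟩
      · exact ⟨Or.inr ⟨0, J0_eq_Jq0 K q⟩, Or.inl (Or.inl (Or.inr rfl))⟩
      · exact ⟨Or.inr ⟨k, rfl⟩, Or.inl (Or.inr ⟨k, hk0, hkI, rfl⟩)⟩
  -- counts
  have hcount1 : {k : K | k ≠ 0 ∧ Algebra.norm F k ∉ I}.ncard
      = (q - 1 - I.ncard) * (q + 1) := by
    rw [show {k : K | k ≠ 0 ∧ Algebra.norm F k ∉ I}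
        = {k : K | k ≠ 0 ∧ Algebra.norm F k ∈ ({f : F | f ≠ 0} \ I)} from by
      ext k
      simp only [Set.mem_setOf_eq, Set.mem_diff]
      exact ⟨fun ⟨h1, h2⟩ => ⟨h1, hnorm0 k h1, h2⟩, fun ⟨h1, _, h2⟩ => ⟨h1, h2⟩⟩]
    rw [aux_count q hq F K hcF hcK _ Set.diff_subset, hcomp]
  have hcount2 : {k : K | k ≠ 0 ∧ Algebra.norm F k ∈ I}.ncard = I.ncard * (q + 1) :=
    aux_count q hq F K hcF hcK I hIss
  -- first ncard
  have hn1 : (insert (Jinf K) {W | ∃ k : K, W = J K k} ∩ AndreSpread F K q I).ncard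
      = 2 + (q - 1 - I.ncard) * (q + 1) := by
    rw [hJset]
    rw [Set.ncard_insert_of_notMem (by
      rintro (h | ⟨k, _, h⟩)
      · exact Jinf_ne_J K 0 h
      · exact Jinf_ne_J K k h.symm) (Set.toFinite _)]
    rw [Set.ncard_insert_of_notMem (by
      rintro ⟨k, ⟨hk0, _⟩, h⟩
      exact hk0 (J_inj K h)) (Set.toFinite _)]
    rw [Set.ncard_image_of_injective _ (J_inj K), hcount1]
    omega
  have hn2 : (insert (Jinf K) {W | ∃ k : K, W = Jq K q k} ∩ AndreSpread F K q I).ncard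
      = 2 + I.ncard * (q + 1) := by
    rw [hJqset]
    rw [Set.ncard_insert_of_notMem (by
      rintro (h | ⟨k, _, h⟩)
      · exact Jinf_ne_J K 0 h
      · exact Jinf_ne_Jq q hq K k h.symm) (Set.toFinite _)]
    rw [Set.ncard_insert_of_notMem (by
      rintro ⟨k, ⟨hk0, _⟩, h⟩
      exact Jq_ne_J q hq K hcK hk0 h) (Set.toFinite _)]
    rw [Set.ncard_image_of_injective _ (Jq_inj K q), hcount2]
    omega
  refine ⟨hn1, hn2, ?_, ?_⟩
  · have h1 : 2 ≤ q - 1 - I.ncard := by omega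
    have h2 : 2 * (q + 1) ≤ (q - 1 - I.ncard) * (q + 1) := Nat.mul_le_mul_right _ h1
    omega
  · have h2 : 2 * (q + 1) ≤ I.ncard * (q + 1) := Nat.mul_le_mul_right _ hI2
    omega
end

section
/- Assume n > 1. Let I : F∖{0} → Gal(K/F) be an indicator function and let A_I be the associated André spread. For every σ ∈ Gal(K/F), letting S^σ = {J(∞)} ∪ {J^σ(k) : k ∈ K}, the number of subspaces belonging to both S^σ and A_I equals 2 + m·(q^{n+1} − 1)/(q − 1), where m is the number of f ∈ F∖{0} with I(f) = σ. In particular, S^σ and A_I share either exactly two subspaces (when m = 0) or more than q² subspaces (when m ≥ 1). -/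
/-- The André spread A_I associated to an indicator function I : F∖{0} → Gal(K/F). -/
def AndreSpreadHD (F K : Type) [Field F] [Field K] [Algebra F K]
    (I : {f : F // f ≠ 0} → (K ≃ₐ[F] K)) : Set (Set (K × K)) :=
  {Jinf K, J K 0}
    ∪ {W | ∃ k : K, k ≠ 0 ∧
        ∃ h : Algebra.norm F k ≠ 0, W = JJ (⇑(I ⟨Algebra.norm F k, h⟩)) k}

section Stmt9Aux
open Finset

lemma stmt9_norm_formula (q n : ℕ) (hq : 2 < q) (hqp : IsPrimePow q)
    (F K : Type) [Field F] [Field K] [Algebra F K] [Fintype F] [Fintype K]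
    (hcF : Fintype.card F = q) (hcK : Fintype.card K = q ^ (n + 1)) (x : K) :
    algebraMap F K (Algebra.norm F x) = x ^ (∑ i ∈ range (n + 1), q ^ i) := by
  classical
  obtain ⟨p, v, pp, hv, hpv⟩ := hqp
  have pp' : p.Prime := pp.nat_prime
  haveI : Fact p.Prime := ⟨pp'⟩
  -- char of K is p
  have hcharK : CharP K p := by
    obtain ⟨p', hp'⟩ := CharP.exists K
    haveI := hp'
    obtain ⟨m, hp'prime, hm⟩ := FiniteField.card K p'
    have hpq : p ∣ Fintype.card K := by
      rw [hcK, ← hpv]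
      exact dvd_pow (dvd_pow_self p hv.ne') (by positivity)
    rw [hm] at hpq
    have : p = p' := by
      have := pp'.dvd_of_dvd_pow hpq
      exact ((Nat.prime_dvd_prime_iff_eq pp' hp'prime).mp this)
    rwa [this]
  haveI := hcharK
  haveI : FiniteDimensional F K := Module.Finite.of_finite
  -- Frobenius q-power map as F-algebra equiv
  have hq1 : 1 ≤ q := by omega
  have hcomm : ∀ a : F, iterateFrobenius K p v (algebraMap F K a) = algebraMap F K a := by
    intro a
    rw [iterateFrobenius_def, hpv, ← map_pow]
    congr 1
    rw [← hcF]
    exact FiniteField.pow_card a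
  let φh : K →ₐ[F] K := { toRingHom := iterateFrobenius K p v, commutes' := hcomm }
  have hbij : Function.Bijective φh :=
    (Finite.injective_iff_bijective).mp (RingHom.injective (iterateFrobenius K p v))
  let φ : K ≃ₐ[F] K := AlgEquiv.ofBijective φh hbij
  have hφ : ∀ y : K, φ y = y ^ q := by
    intro y; show iterateFrobenius K p v y = y ^ q
    rw [iterateFrobenius_def, hpv]
  have hφpow : ∀ (i : ℕ) (y : K), (φ ^ i) y = y ^ q ^ i := by
    intro i
    induction i with
    | zero => intro y; simp
    | succ i ih =>
      intro y
      rw [pow_succ, AlgEquiv.mul_apply, hφ, ih, ← pow_mul, pow_succ, mul_comm]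
  -- card of Galois group is n+1
  have hrank : Module.finrank F K = n + 1 := by
    have := Module.card_eq_pow_finrank (K := F) (V := K)
    rw [hcF, hcK] at this
    exact (Nat.pow_right_injective (by omega) this.symm)
  have hcardGal : Fintype.card (K ≃ₐ[F] K) = n + 1 := by
    rw [← Nat.card_eq_fintype_card, IsGalois.card_aut_eq_finrank, hrank]
  -- order of φ is n + 1
  have hφtop : φ ^ (n + 1) = 1 := by
    ext y
    rw [hφpow, ← hcK]
    exact FiniteField.pow_card y
  have horder : orderOf φ = n + 1 := by
    have hdvd : orderOf φ ∣ n + 1 := orderOf_dvd_of_pow_eq_one hφtop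
    rcases Nat.lt_or_ge (orderOf φ) (n + 1) with hlt | hge
    · exfalso
      set t := orderOf φ with ht
      have htpos : 0 < t := orderOf_pos φ
      have hroot : ∀ y : K, y ^ q ^ t = y := by
        intro y
        have : (φ ^ t) y = y := by rw [pow_orderOf_eq_one]; rfl
        rwa [hφpow] at this
      have h1q : 1 < q ^ t := Nat.one_lt_pow htpos.ne' (by omega)
      have hne : (Polynomial.X ^ q ^ t - Polynomial.X : Polynomial K) ≠ 0 :=
        FiniteField.X_pow_card_sub_X_ne_zero K h1q
      have hcardle : Fintype.card K ≤ q ^ t := by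
        calc Fintype.card K = Finset.univ.card := (Finset.card_univ).symm
          _ ≤ (Polynomial.roots (Polynomial.X ^ q ^ t - Polynomial.X : Polynomial K)).toFinset.card := by
              apply Finset.card_le_card
              intro y _
              rw [Multiset.mem_toFinset, Polynomial.mem_roots hne]
              simp [Polynomial.IsRoot, sub_eq_zero, hroot y]
          _ ≤ Multiset.card (Polynomial.roots (Polynomial.X ^ q ^ t - Polynomial.X : Polynomial K)) :=
              Multiset.toFinset_card_le _
          _ ≤ (Polynomial.X ^ q ^ t - Polynomial.X : Polynomial K).natDegree := Polynomial.card_roots' _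
          _ = q ^ t := FiniteField.X_pow_card_sub_X_natDegree_eq K h1q
      rw [hcK] at hcardle
      have := (Nat.pow_le_pow_iff_right (by omega : 2 ≤ q)).mp hcardle
      omega
    · exact le_antisymm (Nat.le_of_dvd (by omega) hdvd) hge
  -- the Galois group is exactly the powers of φ
  have himg : (Finset.range (n + 1)).image (fun i => φ ^ i) = Finset.univ := by
    apply Finset.eq_univ_of_card
    rw [Finset.card_image_of_injOn, Finset.card_range, hcardGal]
    intro a ha b hb hab
    exact pow_injOn_Iio_orderOf (by simpa [horder] using Finset.mem_range.mp (Finset.mem_coe.mp ha))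
      (by simpa [horder] using Finset.mem_range.mp (Finset.mem_coe.mp hb)) hab
  have hinj : Set.InjOn (fun i => φ ^ i) (Finset.range (n + 1)) := by
    intro a ha b hb hab
    exact pow_injOn_Iio_orderOf (by simpa [horder] using Finset.mem_range.mp (Finset.mem_coe.mp ha))
      (by simpa [horder] using Finset.mem_range.mp (Finset.mem_coe.mp hb)) hab
  rw [Algebra.norm_eq_prod_automorphisms, ← himg, Finset.prod_image hinj]
  calc ∏ i ∈ range (n + 1), (φ ^ i) x = ∏ i ∈ range (n + 1), x ^ q ^ i := by
        apply Finset.prod_congr rfl; intro i _; rw [hφpow]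
    _ = x ^ (∑ i ∈ range (n + 1), q ^ i) := (Finset.prod_pow_eq_pow_sum _ _ _)

lemma stmt9_geom_nat (q : ℕ) (hq : 1 ≤ q) : ∀ m : ℕ, (∑ i ∈ Finset.range m, q ^ i) * (q - 1) = q ^ m - 1 := by
  intro m
  induction m with
  | zero => simp
  | succ m ih =>
    have h1 : 1 ≤ q ^ m := Nat.one_le_pow _ _ (by omega)
    have h2 : q ^ (m + 1) = q ^ m * q := pow_succ q m
    have h3 : q ^ m * (q - 1) = q ^ m * q - q ^ m := by
      rw [Nat.mul_sub, mul_one]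
    have h4 : q ^ m ≤ q ^ m * q := Nat.le_mul_of_pos_right _ (by omega)
    rw [Finset.sum_range_succ, add_mul, ih, h3, h2]
    omega

lemma stmt9_fiber_card (q n : ℕ) (hq : 2 < q) (hqp : IsPrimePow q)
    (F K : Type) [Field F] [Field K] [Algebra F K] [Fintype F] [Fintype K]
    (hcF : Fintype.card F = q) (hcK : Fintype.card K = q ^ (n + 1))
    (f : F) (hf : f ≠ 0) :
    {k : K | Algebra.norm F k = f}.ncard = ∑ i ∈ range (n + 1), q ^ i := by
  classical
  haveI : FiniteDimensional F K := Module.Finite.of_finite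
  set d := ∑ i ∈ range (n + 1), q ^ i with hd
  have hdpos : 0 < d := by
    rw [hd]
    exact Finset.sum_pos (fun i _ => Nat.pow_pos (by omega)) ⟨0, Finset.mem_range.mpr (by omega)⟩
  set A : F → Finset K := fun g => Finset.univ.filter (fun k : K => Algebra.norm F k = g) with hA
  have hle : ∀ g : F, g ≠ 0 → (A g).card ≤ d := by
    intro g hg
    have hne : (Polynomial.X ^ d - Polynomial.C (algebraMap F K g) : Polynomial K) ≠ 0 :=
      Polynomial.X_pow_sub_C_ne_zero hdpos _
    calc (A g).card
        ≤ (Polynomial.roots (Polynomial.X ^ d - Polynomial.C (algebraMap F K g) : Polynomial K)).toFinset.card := by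
          apply Finset.card_le_card
          intro k hk
          have hnk : Algebra.norm F k = g := (Finset.mem_filter.mp hk).2
          have : k ^ d = algebraMap F K g := by
            rw [← hnk, ← stmt9_norm_formula q n hq hqp F K hcF hcK k]
          rw [Multiset.mem_toFinset, Polynomial.mem_roots hne]
          simp [Polynomial.IsRoot, sub_eq_zero, this]
      _ ≤ Multiset.card (Polynomial.roots (Polynomial.X ^ d - Polynomial.C (algebraMap F K g) : Polynomial K)) :=
          Multiset.toFinset_card_le _
      _ ≤ (Polynomial.X ^ d - Polynomial.C (algebraMap F K g) : Polynomial K).natDegree := Polynomial.card_roots' _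
      _ = d := by rw [Polynomial.natDegree_X_pow_sub_C]
  have hsum : ∑ g ∈ Finset.univ.filter (fun g : F => g ≠ 0), (A g).card = q ^ (n + 1) - 1 := by
    have hfib := Finset.card_eq_sum_card_fiberwise
      (s := Finset.univ.filter (fun k : K => k ≠ 0))
      (t := Finset.univ.filter (fun g : F => g ≠ 0))
      (f := fun k => Algebra.norm F k)
      (by
        intro k hk
        simp only [Finset.coe_filter, Set.mem_setOf_eq, Finset.mem_univ, true_and] at hk ⊢
        exact (Algebra.norm_ne_zero_iff).mpr hk)
    have hcard : (Finset.univ.filter (fun k : K => k ≠ 0)).card = q ^ (n + 1) - 1 := by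
      rw [Finset.filter_ne', Finset.card_erase_of_mem (Finset.mem_univ 0), Finset.card_univ, hcK]
    rw [hcard] at hfib
    rw [hfib]
    apply Finset.sum_congr rfl
    intro g hg
    simp only [Finset.mem_filter, Finset.mem_univ, true_and] at hg
    congr 1
    rw [Finset.filter_filter]
    apply Finset.filter_congr
    intro k _
    constructor
    · intro h
      refine ⟨?_, h⟩
      intro hk0
      rw [hk0, Algebra.norm_zero] at h
      exact hg h.symm
    · rintro ⟨_, h⟩; exact h
  have hcardF : (Finset.univ.filter (fun g : F => g ≠ 0)).card = q - 1 := by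
    rw [Finset.filter_ne', Finset.card_erase_of_mem (Finset.mem_univ 0), Finset.card_univ, hcF]
  have heach : ∀ g ∈ Finset.univ.filter (fun g : F => g ≠ 0), (A g).card = d := by
    have hsum2 : ∑ g ∈ Finset.univ.filter (fun g : F => g ≠ 0), (A g).card
        = ∑ g ∈ Finset.univ.filter (fun g : F => g ≠ 0), d := by
      rw [hsum, Finset.sum_const, hcardF, smul_eq_mul, mul_comm]
      exact (stmt9_geom_nat q (by omega) (n + 1)).symm
    have := (Finset.sum_eq_sum_iff_of_le (fun g hg => hle g (by simpa using hg))).mp hsum2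
    exact this
  have : {k : K | Algebra.norm F k = f} = ↑(A f) := by
    ext k; simp [hA]
  rw [this, Set.ncard_coe_finset]
  exact heach f (by simp [hf])

end Stmt9Aux

theorem stmt_9
    (q n : ℕ) (hq : 2 < q) (hqp : IsPrimePow q) (hn : 1 < n)
    (F K : Type) [Field F] [Field K] [Algebra F K] [Fintype F] [Fintype K]
    (hcF : Fintype.card F = q) (hcK : Fintype.card K = q ^ (n + 1))
    (I : {f : F // f ≠ 0} → (K ≃ₐ[F] K)) :
    ∀ σ : K ≃ₐ[F] K,
      ((insert (Jinf K) {W | ∃ k : K, W = JJ (⇑σ) k} ∩ AndreSpreadHD F K I).ncard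
          = 2 + {f : {f : F // f ≠ 0} | I f = σ}.ncard * ((q ^ (n + 1) - 1) / (q - 1))) ∧
      ({f : {f : F // f ≠ 0} | I f = σ}.ncard = 0 →
        (insert (Jinf K) {W | ∃ k : K, W = JJ (⇑σ) k} ∩ AndreSpreadHD F K I).ncard = 2) ∧
      (1 ≤ {f : {f : F // f ≠ 0} | I f = σ}.ncard →
        q ^ 2 < (insert (Jinf K) {W | ∃ k : K, W = JJ (⇑σ) k} ∩ AndreSpreadHD F K I).ncard) := by
  classical
  intro σ
  haveI : FiniteDimensional F K := Module.Finite.of_finite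
  set d := ∑ i ∈ Finset.range (n + 1), q ^ i with hd
  set m := {f : {f : F // f ≠ 0} | I f = σ}.ncard with hm
  -- step 0: division identity
  have hdiv : (q ^ (n + 1) - 1) / (q - 1) = d := by
    apply Nat.div_eq_of_eq_mul_left (by omega)
    rw [← stmt9_geom_nat q (by omega) (n + 1), mul_comm]
  -- basic geometric facts
  have hτ1 : ∀ (τ : K ≃ₐ[F] K) (k : K), (k, (1:K)) ∈ JJ (⇑τ) k := by
    intro τ k
    show k = k * τ 1
    rw [map_one, mul_one]
  have hJJinj : ∀ (τ τ' : K ≃ₐ[F] K) (k k' : K), JJ (⇑τ) k = JJ (⇑τ') k' → k = k' := by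
    intro τ τ' k k' h
    have := h ▸ hτ1 τ k
    have h2 : k = k' * τ' 1 := this
    rwa [map_one, mul_one] at h2
  have hJJext : ∀ (τ : K ≃ₐ[F] K) (k : K), k ≠ 0 → JJ (⇑σ) k = JJ (⇑τ) k → σ = τ := by
    intro τ k hk h
    apply AlgEquiv.ext
    intro x
    have h1 : (k * σ x, x) ∈ JJ (⇑σ) k := rfl
    rw [h] at h1
    have h2 : k * σ x = k * τ x := h1
    exact mul_left_cancel₀ hk h2
  have hJinfJJ : ∀ (τ : K ≃ₐ[F] K) (k : K), Jinf K ≠ JJ (⇑τ) k := by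
    intro τ k h
    have h1 : ((1:K), (0:K)) ∈ Jinf K := rfl
    rw [h] at h1
    have h2 : (1:K) = k * τ 0 := h1
    rw [map_zero, mul_zero] at h2
    exact one_ne_zero h2
  have hJ0 : J K 0 = JJ (⇑σ) 0 := by
    ext p
    show p.1 = 0 * p.2 ↔ p.1 = 0 * σ p.2
    rw [zero_mul, zero_mul]
  have hJ0JJ : ∀ (τ : K ≃ₐ[F] K) (k : K), k ≠ 0 → J K 0 ≠ JJ (⇑τ) k := by
    intro τ k hk h
    have h1 := h ▸ hτ1 τ k
    have h2 : k = 0 * (1:K) := h1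
    rw [zero_mul] at h2
    exact hk h2
  have hJinfJ0 : Jinf K ≠ J K 0 := by
    intro h
    have h1 : ((1:K), (0:K)) ∈ Jinf K := rfl
    rw [h] at h1
    have h2 : (1:K) = 0 * (0:K) := h1
    rw [zero_mul] at h2
    exact one_ne_zero h2
  -- the set T of slopes
  set T : Set K := {k | ∃ h : Algebra.norm F k ≠ 0, I ⟨Algebra.norm F k, h⟩ = σ} with hT
  have hTne : ∀ k ∈ T, k ≠ 0 := by
    rintro k ⟨h, -⟩
    exact (Algebra.norm_ne_zero_iff).mp h
  -- step 1 : the intersection is explicitly described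
  have hEq : insert (Jinf K) {W | ∃ k : K, W = JJ (⇑σ) k} ∩ AndreSpreadHD F K I
      = insert (Jinf K) (insert (J K 0) ((fun k => JJ (⇑σ) k) '' T)) := by
    ext W
    constructor
    · rintro ⟨hW1, hW2⟩
      rcases hW1 with rfl | ⟨k, rfl⟩
      · exact Set.mem_insert _ _
      · rcases hW2 with (h | h) | ⟨k', hk', h', hWk⟩
        · exact absurd h.symm (hJinfJJ σ k)
        · simp only [Set.mem_singleton_iff] at h
          rw [h]
          exact Set.mem_insert_of_mem _ (Set.mem_insert _ _)
        · have hkk' : k = k' := hJJinj σ (I ⟨Algebra.norm F k', h'⟩) k k' hWk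
          subst hkk'
          have hσ : σ = I ⟨Algebra.norm F k, h'⟩ := hJJext _ k hk' hWk
          refine Set.mem_insert_of_mem _ (Set.mem_insert_of_mem _ ⟨k, ⟨h', hσ.symm⟩, rfl⟩)
    · intro hW
      rcases hW with rfl | rfl | ⟨k, hk, rfl⟩
      · exact ⟨Set.mem_insert _ _, Or.inl (Or.inl rfl)⟩
      · refine ⟨Set.mem_insert_of_mem _ ⟨0, hJ0⟩, Or.inl (Or.inr rfl)⟩
      · obtain ⟨h, hI⟩ := hk
        refine ⟨Set.mem_insert_of_mem _ ⟨k, rfl⟩, Or.inr ⟨k, hTne k ⟨h, hI⟩, h, ?_⟩⟩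
        rw [hI]
  -- step 2 : cardinality of T
  have hTcard : T.ncard = m * d := by
    set S : Set F := {f | ∃ hf : f ≠ 0, I ⟨f, hf⟩ = σ} with hS
    have hSm : S.ncard = m := by
      have : S = Subtype.val '' {f : {f : F // f ≠ 0} | I f = σ} := by
        ext f
        constructor
        · rintro ⟨hf, hI⟩
          exact ⟨⟨f, hf⟩, hI, rfl⟩
        · rintro ⟨⟨f, hf⟩, hI, rfl⟩
          exact ⟨hf, hI⟩
      rw [this, Set.ncard_image_of_injective _ Subtype.val_injective]
    set Tf : Finset K := Finset.univ.filter (fun k => k ∈ T) with hTf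
    set Sf : Finset F := Finset.univ.filter (fun f => f ∈ S) with hSf
    have hfib := Finset.card_eq_sum_card_fiberwise
      (s := Tf) (t := Sf) (f := fun k => Algebra.norm F k)
      (by
        rintro k hk
        simp only [hTf, Finset.coe_filter, Set.mem_setOf_eq, Finset.mem_univ, true_and] at hk
        obtain ⟨h, hI⟩ := hk
        simp only [hSf, Finset.coe_filter, Set.mem_setOf_eq, Finset.mem_univ, true_and]
        exact ⟨h, hI⟩)
    have hTT : T = ↑Tf := by ext k; simp [hTf]
    have hSS : S = ↑Sf := by ext f; simp [hSf]
    rw [hTT, Set.ncard_coe_finset, hfib, ← hSm, hSS, Set.ncard_coe_finset]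
    rw [show Sf.card * d = ∑ _g ∈ Sf, d by rw [Finset.sum_const, smul_eq_mul]]
    apply Finset.sum_congr rfl
    intro g hg
    simp only [hSf, Finset.mem_filter, Finset.mem_univ, true_and] at hg
    obtain ⟨hg0, hgI⟩ := hg
    have hAg : Finset.filter (fun k => Algebra.norm F k = g) Tf
        = Finset.univ.filter (fun k : K => Algebra.norm F k = g) := by
      ext k
      simp only [hTf, Finset.mem_filter, Finset.mem_univ, true_and]
      constructor
      · rintro ⟨-, h⟩; exact h
      · intro h
        have h1 : Algebra.norm F k ≠ 0 := by rw [h]; exact hg0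
        refine ⟨⟨h1, ?_⟩, h⟩
        have : (⟨Algebra.norm F k, h1⟩ : {f : F // f ≠ 0}) = ⟨g, hg0⟩ := Subtype.ext h
        rw [this]
        exact hgI
    have := stmt9_fiber_card q n hq hqp F K hcF hcK g hg0
    have hset : {k : K | Algebra.norm F k = g}
        = ↑(Finset.univ.filter (fun k : K => Algebra.norm F k = g)) := by
      ext k; simp
    rw [hset, Set.ncard_coe_finset] at this
    rw [hAg, this]
  -- step 3 : count the intersection
  have hTfin : T.Finite := Set.toFinite T
  have hJ0notmem : J K 0 ∉ (fun k => JJ (⇑σ) k) '' T := by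
    rintro ⟨k, hk, h⟩
    exact hJ0JJ σ k (hTne k hk) h.symm
  have hJinfnotmem : Jinf K ∉ insert (J K 0) ((fun k => JJ (⇑σ) k) '' T) := by
    rintro (h | ⟨k, hk, h⟩)
    · exact hJinfJ0 h
    · exact hJinfJJ σ k h.symm
  have hcount : (insert (Jinf K) {W | ∃ k : K, W = JJ (⇑σ) k} ∩ AndreSpreadHD F K I).ncard
      = 2 + m * d := by
    rw [hEq]
    rw [Set.ncard_insert_of_notMem hJinfnotmem ((hTfin.image _).insert _),
      Set.ncard_insert_of_notMem hJ0notmem (hTfin.image _),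
      Set.ncard_image_of_injective _ (fun k k' h => hJJinj σ σ k k' h), hTcard]
    omega
  refine ⟨by rw [hcount, hdiv], fun h0 => by rw [hcount, h0]; omega, fun h1 => ?_⟩
  have hdq : q ^ 2 ≤ d := by
    rw [hd]
    exact Finset.single_le_sum (f := fun i => q ^ i) (fun i _ => Nat.zero_le _)
      (Finset.mem_range.mpr (by omega))
  have : d ≤ m * d := Nat.le_mul_of_pos_left d (by omega)
  rw [hcount]
  omega
end

section
/- Let ψ : V → V be a bijective τ-semilinear map over F, for some field automorphism τ of F, such that ψ(J(∞)) = J(∞) and ψ(J(k)) = J(k) for every k ∈ K. Then there exists c ∈ K∖{0} such that ψ(x, y) = (c·x, c·y) for all x, y ∈ K. -/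
theorem stmt_11
    (q n : ℕ) (hq : 2 < q) (hqp : IsPrimePow q) (hn : 1 ≤ n)
    (F K : Type) [Field F] [Field K] [Algebra F K] [Fintype F] [Fintype K]
    (hcF : Fintype.card F = q) (hcK : Fintype.card K = q ^ (n + 1))
    (τ : F ≃+* F) (ψ : K × K → K × K)
    (hbij : Function.Bijective ψ)
    (hadd : ∀ u v : K × K, ψ (u + v) = ψ u + ψ v)
    (hsem : ∀ (f : F) (v : K × K), ψ (f • v) = τ f • ψ v)
    (hinf : ψ '' Jinf K = Jinf K)
    (hk : ∀ k : K, ψ '' J K k = J K k) :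
    ∃ c : K, c ≠ 0 ∧ ∀ x y : K, ψ (x, y) = (c * x, c * y) := by
  -- ψ 0 = 0
  have h0 : ψ 0 = 0 := by
    have h := hadd 0 0
    simp only [add_zero] at h
    exact (left_eq_add.mp h)
  -- second coordinate of ψ (x,0) is 0
  have hA : ∀ x : K, (ψ (x, 0)).2 = 0 := by
    intro x
    have hmem : ψ (x, 0) ∈ Jinf K := by
      rw [← hinf]; exact ⟨(x, 0), rfl, rfl⟩
    exact hmem
  -- first coordinate of ψ (0,y) is 0
  have hB : ∀ y : K, (ψ (0, y)).1 = 0 := by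
    intro y
    have hmem : ψ (0, y) ∈ J K 0 := by
      rw [← hk 0]
      exact ⟨(0, y), by simp [J], rfl⟩
    simpa [J] using hmem
  -- membership in J k transported
  have hJ : ∀ (k : K) (p : K × K), p ∈ J K k → (ψ p).1 = k * (ψ p).2 := by
    intro k p hp
    have : ψ p ∈ J K k := by rw [← hk k]; exact ⟨p, hp, rfl⟩
    exact this
  set c : K := (ψ (0, 1)).2 with hc
  -- first coord of ψ (x,0)
  have key1 : ∀ x : K, (ψ (x, 0)).1 = c * x := by
    intro x
    have hsplit : ψ (x, 1) = ψ (x, 0) + ψ (0, 1) := by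
      rw [← hadd]; norm_num
    have hmem : ((x : K), (1 : K)) ∈ J K x := by simp [J]
    have := hJ x _ hmem
    rw [hsplit] at this
    simp only [Prod.fst_add, Prod.snd_add, hA x, hB 1, add_zero, zero_add] at this
    rw [this]; ring
  have key2 : ∀ y : K, (ψ (0, y)).2 = c * y := by
    intro y
    rcases eq_or_ne y 0 with rfl | hy
    · have : ψ ((0 : K), (0 : K)) = 0 := by exact h0
      rw [this]; simp
    · have hsplit : ψ (1, y) = ψ (1, 0) + ψ (0, y) := by
        rw [← hadd]; norm_num
      have hmem : ((1 : K), y) ∈ J K y⁻¹ := by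
        simp [J, inv_mul_cancel₀ hy]
      have := hJ y⁻¹ _ hmem
      rw [hsplit] at this
      simp only [Prod.fst_add, Prod.snd_add, hA 1, hB y, add_zero, zero_add] at this
      rw [key1 1, mul_one] at this
      field_simp at this
      exact this.symm
  have hcne : c ≠ 0 := by
    intro hc0
    have h1 : ψ (1, 0) = 0 := by
      have := key1 1
      rw [hc0, zero_mul] at this
      have h2 := hA 1
      exact Prod.ext this h2
    have := hbij.1 (h1.trans h0.symm)
    simpa using congrArg Prod.fst this
  refine ⟨c, hcne, fun x y => ?_⟩
  have hsplit : ψ (x, y) = ψ (x, 0) + ψ (0, y) := by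
    rw [← hadd]; norm_num
  rw [hsplit]
  apply Prod.ext
  · simp [key1 x, hB y]
  · simp [hA x, key2 y]
end

section
/- Let a, d ∈ K∖{0}, let μ be a field automorphism of K, and let σ, ρ ∈ Gal(K/F). Define φ : V → V by φ(x, y) = (a·μ(x), σ(d·μ(y))). Then for every k ∈ K, φ maps J^ρ(k) onto J^{ρ∘σ⁻¹}(a·μ(k)·ρ(d)⁻¹). Consequently, for every f ∈ F∖{0}, φ maps the set of subspaces {J^ρ(k) : k ∈ K, N(k) = f} onto {J^{ρ∘σ⁻¹}(k′) : k′ ∈ K, N(k′) = N(a)·N(d)⁻¹·μ(f)}. -/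
lemma ff_exists_pow {K : Type} [Field K] [Fintype K] (μ : K ≃+* K) :
    ∃ i : ℕ, 0 < i ∧ ∀ x : K, μ x = x ^ i := by
  classical
  obtain ⟨g, hg⟩ := IsCyclic.exists_generator (α := Kˣ)
  have hμg : μ (g : K) ≠ 0 := (map_ne_zero μ).mpr (Units.ne_zero g)
  obtain ⟨i, hi⟩ : Units.mk0 (μ (g : K)) hμg ∈ Submonoid.powers g :=
    ((isOfFinOrder_of_finite g).mem_powers_iff_mem_zpowers).mpr (hg _)
  have hi' : (g : K) ^ i = μ (g : K) := by
    have := congrArg Units.val hi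
    simpa using this
  have hgc : (g : K) ^ Fintype.card Kˣ = 1 := by
    rw [← Units.val_pow_eq_pow_val, pow_card_eq_one, Units.val_one]
  have hcpos : 0 < Fintype.card Kˣ := Fintype.card_pos
  refine ⟨i + Fintype.card Kˣ, by omega, fun x => ?_⟩
  rcases eq_or_ne x 0 with rfl | hx
  · rw [map_zero, zero_pow (by omega)]
  · obtain ⟨y, rfl⟩ := isUnit_iff_ne_zero.mpr hx
    obtain ⟨m, hm⟩ : y ∈ Submonoid.powers g :=
      ((isOfFinOrder_of_finite g).mem_powers_iff_mem_zpowers).mpr (hg _)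
    have hm' : (g : K) ^ m = (y : K) := by
      have := congrArg Units.val hm
      simpa using this
    have hgm : ((g : K) ^ m) ^ Fintype.card Kˣ = 1 := by
      rw [← pow_mul, Nat.mul_comm, pow_mul, hgc, one_pow]
    rw [← hm', map_pow, ← hi', pow_add, hgm, mul_one, ← pow_mul, ← pow_mul,
      Nat.mul_comm i m]

lemma ff_comm {K : Type} [Field K] [Fintype K] (μ ρ : K ≃+* K) (x : K) :
    μ (ρ x) = ρ (μ x) := by
  obtain ⟨i, -, hi⟩ := ff_exists_pow μ
  obtain ⟨j, -, hj⟩ := ff_exists_pow ρ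
  rw [hi, hj, hi, hj, ← pow_mul, ← pow_mul, mul_comm]

theorem stmt_12
    (q n : ℕ) (hq : 2 < q) (hqp : IsPrimePow q) (hn : 1 ≤ n)
    (F K : Type) [Field F] [Field K] [Algebra F K] [Fintype F] [Fintype K]
    (hcF : Fintype.card F = q) (hcK : Fintype.card K = q ^ (n + 1))
    (a d : K) (ha : a ≠ 0) (hd : d ≠ 0)
    (μ : K ≃+* K) (σ ρ : K ≃ₐ[F] K)
    (φ : K × K → K × K)
    (hφ : ∀ x y : K, φ (x, y) = (a * μ x, σ (d * μ y))) :
    (∀ k : K, φ '' JJ (⇑ρ) k = JJ (⇑(σ.symm.trans ρ)) (a * μ k * (ρ d)⁻¹)) ∧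
    ∀ f : F, f ≠ 0 →
      (fun W => φ '' W) '' {W | ∃ k : K, Algebra.norm F k = f ∧ W = JJ (⇑ρ) k}
        = {W | ∃ k' : K,
            algebraMap F K (Algebra.norm F k')
              = algebraMap F K (Algebra.norm F a * (Algebra.norm F d)⁻¹)
                  * μ (algebraMap F K f) ∧
            W = JJ (⇑(σ.symm.trans ρ)) k'} := by
  have hρd : ρ d ≠ 0 := (map_ne_zero _).mpr hd
  have hcomm : ∀ (τ : K ≃ₐ[F] K) (x : K), μ (τ x) = τ (μ x) := fun τ x =>
    ff_comm μ τ.toRingEquiv x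
  have key : ∀ k : K, φ '' JJ (⇑ρ) k = JJ (⇑(σ.symm.trans ρ)) (a * μ k * (ρ d)⁻¹) := by
    intro k
    ext p
    constructor
    · rintro ⟨⟨x, y⟩, hxy, rfl⟩
      simp only [JJ, Set.mem_setOf_eq] at hxy ⊢
      subst hxy
      rw [hφ]
      simp only [AlgEquiv.trans_apply, AlgEquiv.symm_apply_apply]
      rw [map_mul μ, map_mul ρ, hcomm ρ y]
      field_simp
    · rintro hp
      simp only [JJ, Set.mem_setOf_eq] at hp
      refine ⟨(k * ρ (μ.symm (d⁻¹ * σ.symm p.2)), μ.symm (d⁻¹ * σ.symm p.2)), rfl, ?_⟩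
      rw [hφ]
      have h2 : σ (d * μ (μ.symm (d⁻¹ * σ.symm p.2))) = p.2 := by
        rw [μ.apply_symm_apply, ← mul_assoc, mul_inv_cancel₀ hd, one_mul,
          σ.apply_symm_apply]
      have h1 : a * μ (k * ρ (μ.symm (d⁻¹ * σ.symm p.2))) = p.1 := by
        rw [map_mul μ, hcomm ρ, μ.apply_symm_apply, map_mul ρ, map_inv₀ ρ, hp]
        simp only [AlgEquiv.trans_apply]
        field_simp
      rw [h1, h2]
  refine ⟨key, fun f hf => ?_⟩
  have hNa : Algebra.norm F a ≠ 0 := by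
    intro h
    have : Algebra.norm F a * Algebra.norm F a⁻¹ = 1 := by
      rw [← map_mul, mul_inv_cancel₀ ha, map_one]
    rw [h, zero_mul] at this
    exact one_ne_zero this.symm
  have hNd : Algebra.norm F d ≠ 0 := by
    intro h
    have : Algebra.norm F d * Algebra.norm F d⁻¹ = 1 := by
      rw [← map_mul, mul_inv_cancel₀ hd, map_one]
    rw [h, zero_mul] at this
    exact one_ne_zero this.symm
  have hNinv : ∀ x : K, x ≠ 0 → Algebra.norm F x⁻¹ = (Algebra.norm F x)⁻¹ := by
    intro x hx
    exact eq_inv_of_mul_eq_one_left (by rw [← map_mul, inv_mul_cancel₀ hx, map_one])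
  have hNmu : ∀ x : K, algebraMap F K (Algebra.norm F (μ x))
      = μ (algebraMap F K (Algebra.norm F x)) := by
    intro x
    rw [Algebra.norm_eq_prod_automorphisms, Algebra.norm_eq_prod_automorphisms, map_prod μ]
    exact Finset.prod_congr rfl fun τ _ => (hcomm τ x).symm
  have hinj : Function.Injective (algebraMap F K) := (algebraMap F K).injective
  ext W
  simp only [Set.mem_image, Set.mem_setOf_eq]
  constructor
  · rintro ⟨W₀, ⟨k, hk, rfl⟩, rfl⟩
    refine ⟨a * μ k * (ρ d)⁻¹, ?_, key k⟩
    have hNk' : Algebra.norm F (a * μ k * (ρ d)⁻¹)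
        = Algebra.norm F a * (Algebra.norm F d)⁻¹ * Algebra.norm F (μ k) := by
      rw [map_mul, map_mul, hNinv _ hρd, Algebra.norm_eq_of_algEquiv ρ]
      ring
    rw [hNk', map_mul, ← hk, hNmu k, map_mul]
  · rintro ⟨k', hk', rfl⟩
    set k := μ.symm (ρ d * k' * a⁻¹) with hkdef
    have hμk : μ k = ρ d * k' * a⁻¹ := μ.apply_symm_apply _
    have hk'eq : a * μ k * (ρ d)⁻¹ = k' := by
      rw [hμk]; field_simp
    have hNk : Algebra.norm F k = f := by
      apply hinj
      have hμinj : Function.Injective μ := μ.injective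
      apply hμinj
      rw [← hNmu k, hμk]
      have : Algebra.norm F (ρ d * k' * a⁻¹)
          = Algebra.norm F d * Algebra.norm F k' * (Algebra.norm F a)⁻¹ := by
        rw [map_mul, map_mul, hNinv _ ha, Algebra.norm_eq_of_algEquiv ρ]
      rw [this, map_mul, map_mul, hk', map_mul]
      rw [map_inv₀, map_inv₀]
      have hcNa : algebraMap F K (Algebra.norm F a) ≠ 0 := by
        simpa using hNa
      have hcNd : algebraMap F K (Algebra.norm F d) ≠ 0 := by
        simpa using hNd
      field_simp
    exact ⟨JJ (⇑ρ) k, ⟨k, hNk, rfl⟩, by rw [key k, hk'eq]⟩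
end

section
/- Let b, c ∈ K∖{0}, let μ be a field automorphism of K, and let σ, ρ ∈ Gal(K/F). Define φ : V → V by φ(x, y) = (b·μ(y), σ(c·μ(x))). Then for every k ∈ K∖{0}, φ maps J^ρ(k) onto J^{ρ⁻¹∘σ⁻¹}(b·(ρ⁻¹(c)·ρ⁻¹(μ(k)))⁻¹). Consequently, for every f ∈ F∖{0}, φ maps the set of subspaces {J^ρ(k) : k ∈ K, N(k) = f} onto {J^{ρ⁻¹∘σ⁻¹}(k′) : k′ ∈ K, N(k′) = N(b)·N(c)⁻¹·μ(f)⁻¹}. -/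
lemma ringEquiv_comm' {K : Type} [Field K] [Fintype K] (μ ν : K ≃+* K) (x : K) :
    μ (ν x) = ν (μ x) := by
  obtain ⟨p, hp⟩ := CharP.exists K
  haveI : CharP K p := hp
  haveI hpf : Fact p.Prime := ⟨CharP.char_is_prime K p⟩
  letI : Algebra (ZMod p) K := ZMod.algebra _ _
  haveI : Module.Finite (ZMod p) K := Module.Finite.of_finite
  have hfix : ∀ (e : K ≃+* K) (z : ZMod p),
      e (algebraMap (ZMod p) K z) = algebraMap (ZMod p) K z := fun e z =>
    RingHom.congr_fun
      (RingHom.ext_zmod ((e : K →+* K).comp (algebraMap (ZMod p) K)) (algebraMap (ZMod p) K)) z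
  let fr : K ≃ₐ[ZMod p] K := AlgEquiv.ofRingEquiv (f := frobeniusEquiv K p) (hfix _)
  have hfr : ∀ y : K, fr y = y ^ p := fun y => rfl
  have hpow : ∀ (i : ℕ) (y : K), (fr ^ i) y = y ^ p ^ i := by
    intro i
    induction i with
    | zero => intro y; simp
    | succ i ih =>
      intro y
      rw [pow_succ, AlgEquiv.mul_apply, hfr, ih, ← pow_mul, pow_succ, mul_comm]
  have hcard : Fintype.card (K ≃ₐ[ZMod p] K) = Module.finrank (ZMod p) K :=
    by rw [← Nat.card_eq_fintype_card]; exact IsGalois.card_aut_eq_finrank _ _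
  have hK : Fintype.card K = p ^ Module.finrank (ZMod p) K := by
    have := Module.card_eq_pow_finrank (K := ZMod p) (V := K)
    rwa [ZMod.card] at this
  have hd1 : orderOf fr ∣ Fintype.card (K ≃ₐ[ZMod p] K) := orderOf_dvd_card
  have hle : Fintype.card (K ≃ₐ[ZMod p] K) ≤ orderOf fr := by
    obtain ⟨g, hg⟩ := IsCyclic.exists_generator (α := Kˣ)
    set d := orderOf fr with hdd
    have hdpos : 0 < d := orderOf_pos fr
    have h1 : (fr ^ d) (g : K) = (g : K) := by rw [pow_orderOf_eq_one]; rfl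
    rw [hpow] at h1
    have h2 : (g : Kˣ) ^ (p ^ d - 1) = 1 := by
      have : g ^ p ^ d = g := Units.ext (by push_cast [h1]; rfl)
      have hp1 : 1 ≤ p ^ d := Nat.one_le_pow _ _ hpf.out.pos
      calc g ^ (p ^ d - 1) = g ^ p ^ d * g⁻¹ := by
            rw [← pow_sub_one_mul (by omega : p ^ d ≠ 0)]
            group
          _ = 1 := by rw [this, mul_inv_cancel]
    have h3 : orderOf g ∣ p ^ d - 1 := orderOf_dvd_of_pow_eq_one h2
    have h4 : orderOf g = Fintype.card K - 1 := by
      classical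
      rw [orderOf_eq_card_of_forall_mem_zpowers hg, Nat.card_eq_fintype_card,
        Fintype.card_units]
    have hcK2 : 2 ≤ Fintype.card K := Fintype.one_lt_card
    have hpd : 1 < p ^ d := Nat.one_lt_pow hdpos.ne' hpf.out.one_lt
    have h5 : Fintype.card K - 1 ≤ p ^ d - 1 := Nat.le_of_dvd (by omega) (h4 ▸ h3)
    have h6 : Fintype.card K ≤ p ^ d := by omega
    rw [hK] at h6
    rw [hcard]
    exact (pow_le_pow_iff_right₀ hpf.out.one_lt).mp h6
  have horder : orderOf fr = Fintype.card (K ≃ₐ[ZMod p] K) :=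
    le_antisymm (Nat.le_of_dvd Fintype.card_pos hd1) hle
  haveI : IsCyclic (K ≃ₐ[ZMod p] K) :=
    isCyclic_of_orderOf_eq_card fr (by rw [Nat.card_eq_fintype_card]; exact horder)
  let μ' : K ≃ₐ[ZMod p] K := AlgEquiv.ofRingEquiv (f := μ) (hfix _)
  let ν' : K ≃ₐ[ZMod p] K := AlgEquiv.ofRingEquiv (f := ν) (hfix _)
  obtain ⟨g, hg⟩ := IsCyclic.exists_generator (α := K ≃ₐ[ZMod p] K)
  obtain ⟨i, hi⟩ := hg μ'
  obtain ⟨j, hj⟩ := hg ν'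
  have key : μ' (ν' x) = ν' (μ' x) := by
    rw [← hi, ← hj, ← AlgEquiv.mul_apply, ← AlgEquiv.mul_apply, ← zpow_add, ← zpow_add, add_comm]
  exact key

lemma norm_algEquiv' {F K : Type} [Field F] [Field K] [Algebra F K] [Fintype F] [Fintype K]
    (τ : K ≃ₐ[F] K) (x : K) : Algebra.norm F (τ x) = Algebra.norm F x := by
  haveI : Module.Finite F K := Module.Finite.of_finite
  apply (algebraMap F K).injective
  rw [Algebra.norm_eq_prod_automorphisms, Algebra.norm_eq_prod_automorphisms]
  exact Fintype.prod_equiv (Equiv.mulRight τ) _ _ (fun e => rfl)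

lemma norm_ringEquiv' {F K : Type} [Field F] [Field K] [Algebra F K] [Fintype F] [Fintype K]
    (μ : K ≃+* K) (x : K) :
    algebraMap F K (Algebra.norm F (μ x)) = μ (algebraMap F K (Algebra.norm F x)) := by
  haveI : Module.Finite F K := Module.Finite.of_finite
  rw [Algebra.norm_eq_prod_automorphisms, Algebra.norm_eq_prod_automorphisms, map_prod]
  exact Finset.prod_congr rfl fun e _ => ringEquiv_comm' e.toRingEquiv μ x

lemma algNorm_inv {F K : Type} [Field F] [Field K] [Algebra F K] [Fintype F] [Fintype K]
    (x : K) (hx : x ≠ 0) : Algebra.norm F x⁻¹ = (Algebra.norm F x)⁻¹ :=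
  eq_inv_of_mul_eq_one_left (by rw [← map_mul, inv_mul_cancel₀ hx, map_one])

theorem stmt_13
    (q n : ℕ) (hq : 2 < q) (hqp : IsPrimePow q) (hn : 1 ≤ n)
    (F K : Type) [Field F] [Field K] [Algebra F K] [Fintype F] [Fintype K]
    (hcF : Fintype.card F = q) (hcK : Fintype.card K = q ^ (n + 1))
    (b c : K) (hb : b ≠ 0) (hc : c ≠ 0)
    (μ : K ≃+* K) (σ ρ : K ≃ₐ[F] K)
    (φ : K × K → K × K)
    (hφ : ∀ x y : K, φ (x, y) = (b * μ y, σ (c * μ x))) :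
    (∀ k : K, k ≠ 0 →
      φ '' JJ (⇑ρ) k
        = JJ (⇑(σ.symm.trans ρ.symm)) (b * (ρ.symm c * ρ.symm (μ k))⁻¹)) ∧
    ∀ f : F, f ≠ 0 →
      (fun W => φ '' W) '' {W | ∃ k : K, Algebra.norm F k = f ∧ W = JJ (⇑ρ) k}
        = {W | ∃ k' : K,
            algebraMap F K (Algebra.norm F k')
              = algebraMap F K (Algebra.norm F b * (Algebra.norm F c)⁻¹)
                  * (μ (algebraMap F K f))⁻¹ ∧
            W = JJ (⇑(σ.symm.trans ρ.symm)) k'} := by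
  haveI : Module.Finite F K := Module.Finite.of_finite
  have hinj : Function.Injective (algebraMap F K) := (algebraMap F K).injective
  have comm : ∀ (e : K ≃ₐ[F] K) (y : K), μ (e y) = e (μ y) := fun e y =>
    ringEquiv_comm' μ e.toRingEquiv y
  have part1 : ∀ k : K, k ≠ 0 →
      φ '' JJ (⇑ρ) k
        = JJ (⇑(σ.symm.trans ρ.symm)) (b * (ρ.symm c * ρ.symm (μ k))⁻¹) := by
    intro k hk
    have hμk : μ k ≠ 0 := fun h => hk (by simpa using congrArg μ.symm h)
    have hA1 : ρ.symm c ≠ 0 := fun h => hc (by simpa using congrArg ρ h)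
    have hA2 : ρ.symm (μ k) ≠ 0 := fun h => hμk (by simpa using congrArg ρ h)
    ext ⟨p1, p2⟩
    simp only [JJ, Set.mem_image, Set.mem_setOf_eq, AlgEquiv.trans_apply]
    constructor
    · rintro ⟨⟨a1, a2⟩, ha, heq⟩
      simp only [Set.mem_setOf_eq] at ha
      rw [hφ] at heq
      obtain ⟨h1, h2⟩ := Prod.mk.injEq .. ▸ heq
      subst ha
      have hσ2 : σ.symm p2 = c * (μ k * μ (ρ a2)) := by
        rw [← h2, AlgEquiv.symm_apply_apply, map_mul]
      have hρ2 : ρ.symm (μ (ρ a2)) = μ a2 := by rw [comm ρ, AlgEquiv.symm_apply_apply]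
      have hrs : ρ.symm (σ.symm p2) = ρ.symm c * (ρ.symm (μ k) * μ a2) := by
        rw [hσ2, map_mul, map_mul, hρ2]
      rw [← h1, hrs]
      field_simp
    · intro hp
      refine ⟨(k * ρ (μ.symm (b⁻¹ * p1)), μ.symm (b⁻¹ * p1)), rfl, ?_⟩
      rw [hφ]
      have hρb : ρ b ≠ 0 := fun h => hb (by simpa using congrArg ρ.symm h)
      have hfst : b * μ (μ.symm (b⁻¹ * p1)) = p1 := by
        rw [RingEquiv.apply_symm_apply]
        field_simp
      have hsnd : σ (c * μ (k * ρ (μ.symm (b⁻¹ * p1)))) = p2 := by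
        have hma : μ (ρ (μ.symm (b⁻¹ * p1))) = ρ (b⁻¹ * p1) := by
          rw [comm ρ, RingEquiv.apply_symm_apply]
        have key : c * (μ k * ρ (b⁻¹ * p1)) = σ.symm p2 := by
          rw [hp]
          simp only [map_mul, map_inv₀, AlgEquiv.apply_symm_apply]
          field_simp
        rw [map_mul μ, hma, key, AlgEquiv.apply_symm_apply]
      rw [hfst, hsnd]
  refine ⟨part1, ?_⟩
  intro f hf
  have hNb : Algebra.norm F b ≠ 0 := (Algebra.norm_ne_zero_iff).mpr hb
  have hNc : Algebra.norm F c ≠ 0 := (Algebra.norm_ne_zero_iff).mpr hc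
  have hμf : μ (algebraMap F K f) ≠ 0 := by
    simp only [ne_eq, map_eq_zero_iff μ μ.injective, map_eq_zero_iff _ hinj]
    exact hf
  ext W
  simp only [Set.mem_image, Set.mem_setOf_eq]
  constructor
  · rintro ⟨W0, ⟨k, hk, rfl⟩, rfl⟩
    have hk0 : k ≠ 0 := by
      rintro rfl
      rw [Algebra.norm_zero] at hk
      exact hf hk.symm
    have hμk : μ k ≠ 0 := fun h => hk0 (by simpa using congrArg μ.symm h)
    have hA1 : ρ.symm c ≠ 0 := fun h => hc (by simpa using congrArg ρ h)
    have hA2 : ρ.symm (μ k) ≠ 0 := fun h => hμk (by simpa using congrArg ρ h)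
    refine ⟨b * (ρ.symm c * ρ.symm (μ k))⁻¹, ?_, part1 k hk0⟩
    rw [map_mul (Algebra.norm F), algNorm_inv _ (mul_ne_zero hA1 hA2),
      map_mul (Algebra.norm F), norm_algEquiv', norm_algEquiv',
      map_mul, map_inv₀, map_mul, norm_ringEquiv', hk, map_mul, map_inv₀]
    have haNc : algebraMap F K (Algebra.norm F c) ≠ 0 := by
      simpa [map_eq_zero_iff _ hinj] using hNc
    field_simp
  · rintro ⟨k', hk', rfl⟩
    have hk'0 : k' ≠ 0 := by
      rintro rfl
      rw [Algebra.norm_zero, map_zero] at hk'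
      have h2 : algebraMap F K (Algebra.norm F b * (Algebra.norm F c)⁻¹)
          * (μ (algebraMap F K f))⁻¹ ≠ 0 :=
        mul_ne_zero
          (by simpa [map_eq_zero_iff _ hinj] using mul_ne_zero hNb (inv_ne_zero hNc))
          (inv_ne_zero hμf)
      exact h2 hk'.symm
    set k := μ.symm (ρ b * (ρ k' * c)⁻¹) with hkdef
    have hρb : ρ b ≠ 0 := fun h => hb (by simpa using congrArg ρ.symm h)
    have hρk' : ρ k' ≠ 0 := fun h => hk'0 (by simpa using congrArg ρ.symm h)
    have hy : ρ b * (ρ k' * c)⁻¹ ≠ 0 := mul_ne_zero hρb (inv_ne_zero (mul_ne_zero hρk' hc))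
    have hk0 : k ≠ 0 := by
      simp only [hkdef, ne_eq, EmbeddingLike.map_eq_zero_iff]
      exact hy
    have haNb : algebraMap F K (Algebra.norm F b) ≠ 0 := by
      simpa [map_eq_zero_iff _ hinj] using hNb
    have haNc : algebraMap F K (Algebra.norm F c) ≠ 0 := by
      simpa [map_eq_zero_iff _ hinj] using hNc
    have hNk : Algebra.norm F k = f := by
      apply hinj
      have h1 : algebraMap F K (Algebra.norm F k) =
          μ.symm (algebraMap F K (Algebra.norm F (ρ b * (ρ k' * c)⁻¹))) := by
        rw [hkdef, norm_ringEquiv' μ.symm]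
      have h2 : algebraMap F K (Algebra.norm F (ρ b * (ρ k' * c)⁻¹))
          = μ (algebraMap F K f) := by
        rw [map_mul (Algebra.norm F), algNorm_inv _ (mul_ne_zero hρk' hc),
          map_mul (Algebra.norm F), norm_algEquiv', norm_algEquiv',
          map_mul, map_inv₀, map_mul, hk', map_mul, map_inv₀]
        field_simp
      rw [h1, h2, μ.symm_apply_apply]
    have hA1 : ρ.symm c ≠ 0 := fun h => hc (by simpa using congrArg ρ h)
    have hkval : k' = b * (ρ.symm c * ρ.symm (μ k))⁻¹ := by
      have hμkk : μ k = ρ b * (ρ k' * c)⁻¹ := μ.apply_symm_apply _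
      rw [hμkk, map_mul, map_inv₀, map_mul, AlgEquiv.symm_apply_apply,
        AlgEquiv.symm_apply_apply]
      field_simp
    refine ⟨JJ (⇑ρ) k, ⟨k, hNk, rfl⟩, ?_⟩
    rw [part1 k hk0, ← hkval]
end

section
/- Let I ⊆ F∖{0} and define λ_q : V → V by λ_q(x, y) = (x, y^q). Then λ_q maps the set of subspaces A_I onto the set of subspaces A_{(F∖{0})∖I}; that is, {λ_q(W) : W ∈ A_I} = A_{(F∖{0})∖I}. -/
theorem stmt_15
    (q : ℕ) (hq : 2 < q) (hqp : IsPrimePow q)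
    (F K : Type) [Field F] [Field K] [Algebra F K] [Fintype F] [Fintype K]
    (hcF : Fintype.card F = q) (hcK : Fintype.card K = q ^ 2)
    (I : Set F) (hIss : I ⊆ {f : F | f ≠ 0})
    (lam : K × K → K × K) (hlam : ∀ x y : K, lam (x, y) = (x, y ^ q)) :
    (fun W => lam '' W) '' AndreSpread F K q I
      = AndreSpread F K q ({f : F | f ≠ 0} \ I) := by
  have hq0 : q ≠ 0 := by omega
  have frob : ∀ z : K, (z ^ q) ^ q = z := by
    intro z
    rw [← pow_mul, ← sq, ← hcK, FiniteField.pow_card]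
  have hnorm : ∀ k : K, k ≠ 0 → Algebra.norm F k ≠ 0 := by
    intro k hk
    have : FiniteDimensional F K := Module.Finite.of_finite
    exact (Algebra.norm_ne_zero_iff).mpr hk
  have hA : lam '' Jinf K = Jinf K := by
    ext p
    constructor
    · rintro ⟨⟨x, y⟩, hy, rfl⟩
      simp only [Jinf, Set.mem_setOf_eq] at hy
      subst hy
      rw [hlam]
      simp [Jinf, zero_pow hq0]
    · intro hp
      refine ⟨(p.1, 0), rfl, ?_⟩
      rw [hlam, zero_pow hq0]
      simp only [Jinf, Set.mem_setOf_eq] at hp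
      rw [← hp]
  have hB : lam '' J K 0 = J K 0 := by
    ext p
    constructor
    · rintro ⟨⟨x, y⟩, hx, rfl⟩
      simp only [J, Set.mem_setOf_eq, zero_mul] at hx
      subst hx
      rw [hlam]
      simp [J]
    · intro hp
      simp only [J, Set.mem_setOf_eq, zero_mul] at hp
      refine ⟨(p.1, p.2 ^ q), by simp [J, hp], ?_⟩
      rw [hlam, frob]
  have hC : ∀ k : K, lam '' J K k = Jq K q k := by
    intro k
    ext p
    constructor
    · rintro ⟨⟨x, y⟩, hx, rfl⟩
      simp only [J, Set.mem_setOf_eq] at hx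
      subst hx
      rw [hlam]
      simp [Jq, frob]
    · intro hp
      simp only [Jq, Set.mem_setOf_eq] at hp
      refine ⟨(p.1, p.2 ^ q), by simp [J, hp], ?_⟩
      rw [hlam, frob]
  have hD : ∀ k : K, lam '' Jq K q k = J K k := by
    intro k
    ext p
    constructor
    · rintro ⟨⟨x, y⟩, hx, rfl⟩
      simp only [Jq, Set.mem_setOf_eq] at hx
      subst hx
      rw [hlam]
      simp [J]
    · intro hp
      simp only [J, Set.mem_setOf_eq] at hp
      refine ⟨(p.1, p.2 ^ q), by simp [Jq, frob, hp], ?_⟩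
      rw [hlam, frob]
  ext W
  simp only [AndreSpread, Set.mem_union, Set.mem_insert_iff, Set.mem_singleton_iff,
    Set.mem_setOf_eq, Set.mem_image, Set.mem_diff]
  constructor
  · rintro ⟨W0, (⟨(rfl | rfl) | ⟨k, hk, hkI, rfl⟩⟩ | ⟨k, hk, hkI, rfl⟩), rfl⟩
    · exact Or.inl (Or.inl (Or.inl hA))
    · exact Or.inl (Or.inl (Or.inr hB))
    · exact Or.inr ⟨k, hk, fun h => h.2 hkI, hD k⟩
    · exact Or.inl (Or.inr ⟨k, hk, ⟨hnorm k hk, hkI⟩, hC k⟩)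
  · rintro ((⟨rfl | rfl⟩ | ⟨k, hk, hkI, rfl⟩) | ⟨k, hk, hkI, rfl⟩)
    · exact ⟨Jinf K, Or.inl (Or.inl (Or.inl rfl)), hA⟩
    · exact ⟨J K 0, Or.inl (Or.inl (Or.inr rfl)), hB⟩
    · exact ⟨J K k, Or.inr ⟨k, hk, hkI.2, rfl⟩, hC k⟩
    · have hkI' : Algebra.norm F k ∈ I := by
        by_contra h
        exact hkI ⟨hnorm k hk, h⟩
      exact ⟨Jq K q k, Or.inl (Or.inr ⟨k, hk, hkI', rfl⟩), hD k⟩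
end

section
/- For every f ∈ F∖{0} and every σ ∈ Gal(K/F), the union of the subspaces J^σ(k) over all k ∈ K with N(k) = f equals {(0,0)} ∪ {(u, v) ∈ K × K : v ≠ 0 and N(u) = f·N(v)}. In particular, this union of point sets is independent of the choice of σ, so for every σ, ρ ∈ Gal(K/F), ⋃_{N(k)=f} J^σ(k) = ⋃_{N(k)=f} J^ρ(k). -/
open Finset

lemma my_norm_formula (q n : ℕ) (hq : 2 < q) (hqp : IsPrimePow q)
    (F K : Type) [Field F] [Field K] [Algebra F K] [Fintype F] [Fintype K]
    (hcF : Fintype.card F = q) (hcK : Fintype.card K = q ^ (n + 1)) (x : K) :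
    algebraMap F K (Algebra.norm F x) = x ^ (∑ i ∈ Finset.range (n+1), q^i) := by
  have : FiniteDimensional F K := Module.Finite.of_finite
  obtain ⟨p, e, hp, he, hpe⟩ := hqp
  have hp' : p.Prime := hp.nat_prime
  -- char of K is p
  haveI hcharK : CharP K p := by
    obtain ⟨r, hr_inst⟩ := CharP.exists K
    haveI := hr_inst
    have hrp : r.Prime := CharP.char_is_prime K r
    obtain ⟨s, hs⟩ := FiniteField.card K r
    have : r = p := by
      have hdvd : r ∣ Fintype.card K := by
        rw [hs.2]; exact dvd_pow_self r s.ne_zero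
      rw [hcK, ← hpe, ← pow_mul] at hdvd
      exact (Nat.prime_dvd_prime_iff_eq hrp hp').1 (hrp.dvd_of_dvd_pow hdvd)
    rwa [this] at hr_inst
  haveI : ExpChar K p := ExpChar.prime hp'
  -- Frobenius x ↦ x ^ q as an F-algebra equiv
  have hfrob : ∀ y : K, iterateFrobenius K p e y = y ^ q := by
    intro y; rw [iterateFrobenius_def, hpe]
  have hcomm : ∀ a : F, iterateFrobenius K p e (algebraMap F K a) = algebraMap F K a := by
    intro a
    rw [hfrob, ← map_pow]
    congr 1
    conv_rhs => rw [← FiniteField.pow_card a, hcF]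
  let σ₀h : K →ₐ[F] K := { toRingHom := iterateFrobenius K p e, commutes' := hcomm }
  have hbij : Function.Bijective σ₀h :=
    Finite.injective_iff_bijective.1 (RingHom.injective (iterateFrobenius K p e))
  let σ₀ : K ≃ₐ[F] K := AlgEquiv.ofBijective σ₀h hbij
  have hσ₀ : ∀ y : K, σ₀ y = y ^ q := hfrob
  have hσ₀pow : ∀ (i : ℕ) (y : K), (σ₀ ^ i) y = y ^ q ^ i := by
    intro i
    induction i with
    | zero => intro y; simp
    | succ i ih =>
      intro y
      rw [pow_succ, AlgEquiv.mul_apply, hσ₀, ih, ← pow_mul, pow_succ, mul_comm]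
  have h1 : σ₀ ^ (n + 1) = 1 := by
    ext y
    rw [hσ₀pow]
    show y ^ q ^ (n+1) = y
    rw [← hcK]; exact FiniteField.pow_card y
  have hq1 : 1 < q := lt_trans one_lt_two hq
  have horder : orderOf σ₀ = n + 1 := by
    have hdvd : orderOf σ₀ ∣ n + 1 := orderOf_dvd_of_pow_eq_one h1
    have hd0 : orderOf σ₀ ≠ 0 := fun h => by simp [h] at hdvd
    refine Nat.le_antisymm (Nat.le_of_dvd (by omega) hdvd) ?_
    set d := orderOf σ₀ with hd
    have hall : ∀ u : Kˣ, u ^ (q ^ d - 1) = 1 := by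
      intro u
      have hyd : (u : K) ^ q ^ d = u := by
        have := pow_orderOf_eq_one σ₀
        rw [← hd] at this
        have := congrArg (fun τ : K ≃ₐ[F] K => τ (u : K)) this
        simpa [hσ₀pow] using this
      have : u ^ q ^ d = u := Units.ext (by push_cast [Units.val_pow_eq_pow_val]; exact hyd)
      have hpos : 1 ≤ q ^ d := Nat.one_le_pow _ _ (by omega)
      have h2 : u ^ (q ^ d - 1) * u = 1 * u := by
        rw [← pow_succ, Nat.sub_add_cancel hpos, this, one_mul]
      exact mul_right_cancel h2
    have hdvd2 : Fintype.card K - 1 ∣ q ^ d - 1 := (FiniteField.forall_pow_eq_one_iff K _).1 hall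
    rw [hcK] at hdvd2
    have hne : q ^ d - 1 ≠ 0 := by
      have : 1 < q ^ d := Nat.one_lt_pow (by omega) hq1
      omega
    have hle : q ^ (n+1) - 1 ≤ q ^ d - 1 := Nat.le_of_dvd (Nat.pos_of_ne_zero hne) hdvd2
    have : q ^ (n+1) ≤ q ^ d := by
      have h1le : 1 ≤ q ^ (n+1) := Nat.one_le_pow _ _ (by omega)
      omega
    exact (Nat.pow_le_pow_iff_right hq1).1 this
  have hfinrank : Module.finrank F K = n + 1 := by
    have hc := Module.card_eq_pow_finrank (K := F) (V := K)
    rw [hcF, hcK] at hc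
    exact (Nat.pow_right_injective (by omega : 2 ≤ q) hc.symm)
  have hcardG : Fintype.card (K ≃ₐ[F] K) = n + 1 := by
    rw [← Nat.card_eq_fintype_card, IsGalois.card_aut_eq_finrank F K, hfinrank]
  have hinj : Function.Injective (fun i : Fin (n+1) => σ₀ ^ (i : ℕ)) := by
    intro i j h
    exact Fin.ext (pow_injOn_Iio_orderOf (x := σ₀) (by rw [horder]; exact i.2)
      (by rw [horder]; exact j.2) h)
  have hbij2 : Function.Bijective (fun i : Fin (n+1) => σ₀ ^ (i : ℕ)) := by
    rw [Fintype.bijective_iff_injective_and_card]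
    exact ⟨hinj, by rw [Fintype.card_fin, hcardG]⟩
  rw [Algebra.norm_eq_prod_automorphisms,
    ← Fintype.prod_bijective _ hbij2 (fun i => (σ₀ ^ (i : ℕ)) x) (fun τ => τ x) (fun i => rfl)]
  simp only [hσ₀pow]
  rw [prod_pow_eq_pow_sum]
  congr 1
  exact Fin.sum_univ_eq_sum_range (fun i => q ^ i) (n+1)

lemma my_geom (q n : ℕ) (hq : 1 ≤ q) :
    (∑ i ∈ Finset.range (n+1), q^i) * (q - 1) = q ^ (n+1) - 1 := by
  have h1 : ((∑ i ∈ Finset.range (n+1), q^i : ℕ) : ℤ) * ((q : ℤ) - 1)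
      = (q : ℤ) ^ (n+1) - 1 := by
    push_cast
    exact geom_sum_mul (q : ℤ) (n+1)
  have h2 : (1 : ℕ) ≤ q ^ (n+1) := Nat.one_le_pow _ _ (by omega)
  have h3 : (((∑ i ∈ Finset.range (n+1), q^i) * (q - 1) : ℕ) : ℤ)
      = ((q ^ (n+1) - 1 : ℕ) : ℤ) := by
    push_cast [Nat.cast_sub hq, Nat.cast_sub h2]
    exact_mod_cast h1
  exact_mod_cast h3

lemma my_norm_surj (q n : ℕ) (hq : 2 < q) (hqp : IsPrimePow q)
    (F K : Type) [Field F] [Field K] [Algebra F K] [Fintype F] [Fintype K]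
    (hcF : Fintype.card F = q) (hcK : Fintype.card K = q ^ (n + 1))
    (formula : ∀ x : K, algebraMap F K (Algebra.norm F x)
      = x ^ (∑ i ∈ Finset.range (n+1), q^i))
    (f : F) (hf : f ≠ 0) : ∃ k : K, Algebra.norm F k = f := by
  set m := ∑ i ∈ Finset.range (n+1), q^i with hm
  have hmmul : m * (q - 1) = q ^ (n+1) - 1 := my_geom q n (by omega)
  obtain ⟨g, hg⟩ := IsCyclic.exists_generator (α := Kˣ)
  have horderg : orderOf g = q ^ (n+1) - 1 := by
    rw [orderOf_eq_card_of_forall_mem_zpowers hg, Nat.card_units,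
      Nat.card_eq_fintype_card, hcK]
  have hc0 : algebraMap F K f ≠ 0 := by
    intro h
    exact hf ((algebraMap F K).injective (by rw [h, map_zero]))
  set cu : Kˣ := Units.mk0 _ hc0 with hcu_def
  obtain ⟨t, ht⟩ : ∃ t : ℕ, g ^ t = cu := by
    have := (mem_powers_iff_mem_zpowers).2 (hg cu)
    exact this
  have hcu1 : cu ^ (q - 1) = 1 := by
    apply Units.ext
    show (algebraMap F K f) ^ (q - 1) = 1
    rw [← map_pow]
    have : f ^ (q - 1) = 1 := by
      rw [← hcF]; exact FiniteField.pow_card_sub_one_eq_one f hf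
    rw [this, map_one]
  have hdvd : orderOf g ∣ t * (q - 1) :=
    orderOf_dvd_of_pow_eq_one (by rw [pow_mul, ht, hcu1])
  rw [horderg, ← hmmul] at hdvd
  have hmt : m ∣ t := (Nat.mul_dvd_mul_iff_right (by omega : 0 < q - 1)).1 hdvd
  obtain ⟨s, rfl⟩ := hmt
  refine ⟨((g ^ s : Kˣ) : K), ?_⟩
  apply (algebraMap F K).injective
  rw [formula]
  have : (((g ^ s : Kˣ) : K)) ^ m = ((g ^ (m * s) : Kˣ) : K) := by
    rw [← Units.val_pow_eq_pow_val, ← pow_mul, mul_comm]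
  rw [this, ht]
  rfl

theorem stmt_18
    (q n : ℕ) (hq : 2 < q) (hqp : IsPrimePow q) (hn : 1 ≤ n)
    (F K : Type) [Field F] [Field K] [Algebra F K] [Fintype F] [Fintype K]
    (hcF : Fintype.card F = q) (hcK : Fintype.card K = q ^ (n + 1)) :
    (∀ f : F, f ≠ 0 → ∀ σ : K ≃ₐ[F] K,
      (⋃ k ∈ {k : K | Algebra.norm F k = f}, JJ (⇑σ) k)
        = {(0, 0)} ∪ {p : K × K | p.2 ≠ 0 ∧ Algebra.norm F p.1 = f * Algebra.norm F p.2}) ∧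
    ∀ f : F, f ≠ 0 → ∀ σ ρ : K ≃ₐ[F] K,
      (⋃ k ∈ {k : K | Algebra.norm F k = f}, JJ (⇑σ) k)
        = ⋃ k ∈ {k : K | Algebra.norm F k = f}, JJ (⇑ρ) k := by
  have formula := my_norm_formula q n hq hqp F K hcF hcK
  set m := ∑ i ∈ Finset.range (n+1), q^i with hm
  have hnormzero : ∀ x : K, x ≠ 0 → Algebra.norm F x ≠ 0 := by
    intro x hx h0
    have hfx := formula x
    rw [h0, map_zero] at hfx
    exact pow_ne_zero m hx hfx.symm
  have hsurj := my_norm_surj q n hq hqp F K hcF hcK formula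
  have main : ∀ f : F, f ≠ 0 → ∀ σ : K ≃ₐ[F] K,
      (⋃ k ∈ {k : K | Algebra.norm F k = f}, JJ (⇑σ) k)
        = {(0, 0)} ∪ {p : K × K | p.2 ≠ 0 ∧ Algebra.norm F p.1 = f * Algebra.norm F p.2} := by
    intro f hf σ
    ext ⟨u, v⟩
    simp only [Set.mem_iUnion, Set.mem_setOf_eq, JJ, Set.mem_union, Set.mem_singleton_iff,
      Prod.mk.injEq, exists_prop]
    constructor
    · rintro ⟨k, hk, huv⟩
      by_cases hv : v = 0
      · left
        subst hv
        exact ⟨by rw [huv, map_zero, mul_zero], rfl⟩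
      · right
        refine ⟨hv, ?_⟩
        rw [huv, map_mul, hk, Algebra.norm_eq_of_algEquiv σ v]
    · rintro (⟨hu, hv⟩ | ⟨hv, huv⟩)
      · obtain ⟨k, hk⟩ := hsurj f hf
        exact ⟨k, hk, by rw [hu, hv, map_zero, mul_zero]⟩
      · have hσv : σ v ≠ 0 := fun h => hv (by simpa using σ.injective (by rw [h, map_zero]))
        refine ⟨u * (σ v)⁻¹, ?_, ?_⟩
        · have hnv : Algebra.norm F v ≠ 0 := hnormzero v hv
          have hcalc : Algebra.norm F (u * (σ v)⁻¹) * Algebra.norm F v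
              = f * Algebra.norm F v := by
            calc Algebra.norm F (u * (σ v)⁻¹) * Algebra.norm F v
                = Algebra.norm F (u * (σ v)⁻¹) * Algebra.norm F (σ v) := by
                  rw [Algebra.norm_eq_of_algEquiv]
              _ = Algebra.norm F (u * (σ v)⁻¹ * σ v) := (map_mul _ _ _).symm
              _ = Algebra.norm F u := by rw [mul_assoc, inv_mul_cancel₀ hσv, mul_one]
              _ = f * Algebra.norm F v := huv
          exact mul_right_cancel₀ hnv hcalc
        · show u = u * (σ v)⁻¹ * σ v
          rw [mul_assoc, inv_mul_cancel₀ hσv, mul_one]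
  exact ⟨main, fun f hf σ ρ => by rw [main f hf σ, main f hf ρ]⟩
end

section
/- Let I : F∖{0} → Gal(K/F) be any indicator function. Then the collection of subspaces A_I = {J(∞), J(0)} ∪ {J^{I(N(k))}(k) : k ∈ K∖{0}} partitions the nonzero vectors of V: any two distinct members of A_I intersect only in the zero vector, and every vector of V lies in some member of A_I. In particular, every nonzero vector of V lies in exactly one member of A_I. -/
theorem stmt_19
    (q n : ℕ) (hq : 2 < q) (hqp : IsPrimePow q) (hn : 1 ≤ n)
    (F K : Type) [Field F] [Field K] [Algebra F K] [Fintype F] [Fintype K]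
    (hcF : Fintype.card F = q) (hcK : Fintype.card K = q ^ (n + 1))
    (I : {f : F // f ≠ 0} → (K ≃ₐ[F] K)) :
    (∀ W₁ ∈ AndreSpreadHD F K I, ∀ W₂ ∈ AndreSpreadHD F K I,
      W₁ ≠ W₂ → W₁ ∩ W₂ = {(0 : K × K)}) ∧
    (∀ v : K × K, ∃ W ∈ AndreSpreadHD F K I, v ∈ W) ∧
    ∀ v : K × K, v ≠ 0 → ∃! W, W ∈ AndreSpreadHD F K I ∧ v ∈ W := by

  classical
  have hfin : Module.Finite F K := Module.Finite.of_finite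
  have nz : ∀ x : K, x ≠ 0 → Algebra.norm F x ≠ 0 := fun x hx =>
    Algebra.norm_ne_zero_iff.mpr hx
  -- 0 belongs to every member
  have hzero : ∀ W ∈ AndreSpreadHD F K I, (0 : K × K) ∈ W := by
    rintro W ((rfl | rfl) | ⟨k, hk, hnk, rfl⟩)
    · rfl
    · show (0 : K) = 0 * (0 : K); ring
    · show (0 : K) = k * (I ⟨Algebra.norm F k, hnk⟩) 0; simp
  -- disjointness
  have hdisj : ∀ W₁ ∈ AndreSpreadHD F K I, ∀ W₂ ∈ AndreSpreadHD F K I,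
      W₁ ≠ W₂ → W₁ ∩ W₂ = {(0 : K × K)} := by
    intro W₁ h₁ W₂ h₂ hne
    apply Set.eq_singleton_iff_unique_mem.mpr
    refine ⟨⟨hzero W₁ h₁, hzero W₂ h₂⟩, ?_⟩
    rintro p ⟨hp1, hp2⟩
    rcases h₁ with (rfl | rfl) | ⟨k₁, hk₁, hn₁, rfl⟩ <;>
      rcases h₂ with (rfl | rfl) | ⟨k₂, hk₂, hn₂, rfl⟩ <;>
      simp only [Jinf, J, JJ, Set.mem_setOf_eq] at hp1 hp2
    · exact absurd rfl hne
    · -- Jinf ∩ J0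
      have h2 : p.2 = 0 := hp1
      have h1 : p.1 = 0 := by
        have := hp2; rw [h2] at this; simpa using this
      exact Prod.ext h1 h2
    · -- Jinf ∩ JJ
      have h2 : p.2 = 0 := hp1
      have h1 : p.1 = 0 := by
        have h := hp2; rw [show (p.2 : K) = 0 from h2] at h; simpa using h
      exact Prod.ext h1 h2
    · -- J0 ∩ Jinf
      have h2 : p.2 = 0 := hp2
      have h1 : p.1 = 0 := by
        have := hp1; rw [h2] at this; simpa using this
      exact Prod.ext h1 h2
    · exact absurd rfl hne
    · -- J0 ∩ JJ
      have h2 : p.2 = 0 := by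
        have hσ : k₂ * (I ⟨Algebra.norm F k₂, hn₂⟩) p.2 = 0 := by
          have h := hp2
          have h0 : p.1 = 0 := by have := hp1; simpa using this
          rw [h0] at h; exact h.symm
        have hs : (I ⟨Algebra.norm F k₂, hn₂⟩) p.2 = 0 := by
          rcases mul_eq_zero.mp hσ with h | h
          · exact absurd h hk₂
          · exact h
        exact (map_eq_zero_iff _ (I ⟨Algebra.norm F k₂, hn₂⟩).injective).mp hs
      have h1 : p.1 = 0 := by have := hp1; rw [h2] at this; simpa using this
      exact Prod.ext h1 h2
    · -- JJ ∩ Jinf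
      have h2 : p.2 = 0 := hp2
      have h1 : p.1 = 0 := by
        have h := hp1; rw [show (p.2 : K) = 0 from h2] at h; simpa using h
      exact Prod.ext h1 h2
    · -- JJ ∩ J0
      have h2 : p.2 = 0 := by
        have hσ : k₁ * (I ⟨Algebra.norm F k₁, hn₁⟩) p.2 = 0 := by
          have h := hp1
          have h0 : p.1 = 0 := by have := hp2; simpa using this
          rw [h0] at h; exact h.symm
        have hs : (I ⟨Algebra.norm F k₁, hn₁⟩) p.2 = 0 := by
          rcases mul_eq_zero.mp hσ with h | h
          · exact absurd h hk₁
          · exact h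
        exact (map_eq_zero_iff _ (I ⟨Algebra.norm F k₁, hn₁⟩).injective).mp hs
      have h1 : p.1 = 0 := by have := hp2; rw [h2] at this; simpa using this
      exact Prod.ext h1 h2
    · -- JJ ∩ JJ
      by_cases hb : p.2 = 0
      · have h1 : p.1 = 0 := by
          have h := hp1; rw [hb] at h; simpa using h
        exact Prod.ext h1 hb
      · exfalso
        have heq : k₁ * (I ⟨Algebra.norm F k₁, hn₁⟩) p.2
            = k₂ * (I ⟨Algebra.norm F k₂, hn₂⟩) p.2 := by
          have ha := hp1; have hb2 := hp2
          rw [← ha, ← hb2]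
        have hnormeq : Algebra.norm F k₁ = Algebra.norm F k₂ := by
          have hcongr := congrArg (Algebra.norm F) heq
          rw [map_mul, map_mul, Algebra.norm_eq_of_algEquiv,
            Algebra.norm_eq_of_algEquiv] at hcongr
          exact mul_right_cancel₀ (nz _ hb) hcongr
        have hsub : (⟨Algebra.norm F k₁, hn₁⟩ : {f : F // f ≠ 0})
            = ⟨Algebra.norm F k₂, hn₂⟩ := Subtype.ext hnormeq
        have hσeq : I ⟨Algebra.norm F k₁, hn₁⟩ = I ⟨Algebra.norm F k₂, hn₂⟩ :=
          congrArg I hsub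
        have hσb : (I ⟨Algebra.norm F k₂, hn₂⟩) p.2 ≠ 0 := fun h =>
          hb ((map_eq_zero_iff _ (I ⟨Algebra.norm F k₂, hn₂⟩).injective).mp h)
        have hkeq : k₁ = k₂ := by
          rw [hσeq] at heq
          exact mul_right_cancel₀ hσb heq
        apply hne
        subst hkeq
        rfl
  -- coverage
  have hcov : ∀ v : K × K, ∃ W ∈ AndreSpreadHD F K I, v ∈ W := by
    intro v
    by_cases hb : v.2 = 0
    · exact ⟨Jinf K, Or.inl (Or.inl rfl), hb⟩
    by_cases ha : v.1 = 0
    · refine ⟨J K 0, Or.inl (Or.inr rfl), ?_⟩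
      show v.1 = 0 * v.2; rw [ha, zero_mul]
    · have hna : Algebra.norm F v.1 ≠ 0 := nz _ ha
      have hnb : Algebra.norm F v.2 ≠ 0 := nz _ hb
      set c : F := Algebra.norm F v.1 / Algebra.norm F v.2 with hc
      have hcne : c ≠ 0 := div_ne_zero hna hnb
      set σ := I ⟨c, hcne⟩ with hσ
      have hσb : σ v.2 ≠ 0 := fun h =>
        hb ((map_eq_zero_iff _ σ.injective).mp h)
      set k : K := v.1 / σ v.2 with hk
      have hkne : k ≠ 0 := div_ne_zero ha hσb
      have hmul : k * σ v.2 = v.1 := div_mul_cancel₀ _ hσb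
      have hnormk : Algebra.norm F k = c := by
        have h2 := congrArg (Algebra.norm F) hmul
        rw [map_mul] at h2
        rw [show Algebra.norm F (σ v.2) = Algebra.norm F v.2 from
          Algebra.norm_eq_of_algEquiv σ v.2] at h2
        rw [hc, eq_div_iff hnb]
        exact h2
      have hnk : Algebra.norm F k ≠ 0 := hnormk ▸ hcne
      refine ⟨JJ (⇑(I ⟨Algebra.norm F k, hnk⟩)) k, Or.inr ⟨k, hkne, hnk, rfl⟩, ?_⟩
      have hsub : (⟨Algebra.norm F k, hnk⟩ : {f : F // f ≠ 0}) = ⟨c, hcne⟩ :=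
        Subtype.ext hnormk
      show v.1 = k * (I ⟨Algebra.norm F k, hnk⟩) v.2
      rw [hsub, ← hσ]
      exact hmul.symm
  refine ⟨hdisj, hcov, ?_⟩
  intro v hv
  obtain ⟨W, hW, hvW⟩ := hcov v
  refine ⟨W, ⟨hW, hvW⟩, ?_⟩
  rintro W' ⟨hW', hvW'⟩
  by_contra hne'
  have hint := hdisj W' hW' W hW hne'
  have hvmem : v ∈ ({(0 : K × K)} : Set (K × K)) := hint ▸ ⟨hvW', hvW⟩
  exact hv hvmem
end
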